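/- arXiv:1605.07416 — 4 statements merged into one kernel-verified Lean document; each statement's English description precedes it below -/
import Mathlib

section
/- Let p ∈ (0,1) and C > 0. Then there does not exist a family of randomised bandit strategies (one strategy for each horizon T ≥ 1 and number of arms K ≥ 2) such that for all T, all K, all loss sequences ℓ_{1:T} ∈ [0,1]^{KT}, and all δ ∈ (0,1), one has P( R_T(ℓ_{1:T}) ≥ C·√((K−1)·T)·(log(1/δ))^p ) ≤ δ, where the probability is over the strategy's internal randomisation. -/
open MeasureTheory ProbabilityTheory Real
open scoped ENNReal NNReal Classical

namespace BanditLB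

structure Strategy (K : ℕ) (Ω : Type*) [MeasurableSpace Ω] where
  μ : Measure Ω
  prob : IsProbabilityMeasure μ
  act : (ℕ → Fin K → ℝ) → ℕ → Ω → Fin K
  meas_act : ∀ t : ℕ, Measurable fun p : (ℕ → Fin K → ℝ) × Ω => act p.1 t p.2
  adapted : ∀ ℓ ℓ' : ℕ → Fin K → ℝ, ∀ t : ℕ, ∀ ω : Ω,
    (∀ s < t, act ℓ s ω = act ℓ' s ω ∧ ℓ s (act ℓ s ω) = ℓ' s (act ℓ s ω)) →
    act ℓ t ω = act ℓ' t ω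

variable {K : ℕ} {Ω : Type*} [MeasurableSpace Ω]

noncomputable def regret (S : Strategy K Ω) (T : ℕ) (ℓ : ℕ → Fin K → ℝ) (ω : Ω) : ℝ :=
  ∑ t ∈ Finset.range T, ℓ t (S.act ℓ t ω) - ⨅ i : Fin K, ∑ t ∈ Finset.range T, ℓ t i

def numPlays (S : Strategy K Ω) (ℓ : ℕ → Fin K → ℝ) (i : Fin K) (t : ℕ) (ω : Ω) : ℕ :=
  ((Finset.range t).filter fun s => S.act ℓ s ω = i).card

/-- The joint law of (loss sequence, internal randomisation) when the loss sequence is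
drawn from `ν` independently of the internal randomisation. -/
noncomputable def joint (S : Strategy K Ω) (ν : Measure (ℕ → Fin K → ℝ)) :
    Measure ((ℕ → Fin K → ℝ) × Ω) := ν.prod S.μ

/-- `ν` is the law of an i.i.d. sequence with common distribution `Q`:
`ν` is a probability measure all of whose finite-dimensional marginals are product measures. -/
def IsIIDSeq {β : Type*} [MeasurableSpace β] (ν : Measure (ℕ → β)) (Q : Measure β) : Prop :=
  IsProbabilityMeasure ν ∧
    ∀ n : ℕ, ν.map (fun f (s : Fin n) => f (s : ℕ)) = Measure.pi fun _ : Fin n => Q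

/-- The Kullback–Leibler divergence (with value `∞` unless `P ≪ Q` and the
log-likelihood ratio is `P`-integrable). -/
noncomputable def klDiv {α : Type*} [MeasurableSpace α] (P Q : Measure α) : ℝ≥0∞ :=
  if P ≪ Q ∧ Integrable (llr P Q) P then ENNReal.ofReal (∫ x, llr P Q x ∂P) else ⊤

/-- The Bernoulli distribution with parameter `p`, as a measure on `ℝ` (mass `p` at `1`,
mass `1 - p` at `0`). -/
noncomputable def bern (p : ℝ) : Measure ℝ :=
  ENNReal.ofReal p • Measure.dirac 1 + ENNReal.ofReal (1 - p) • Measure.dirac 0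

noncomputable def clip01 (x : ℝ) : ℝ := min 1 (max 0 x)

/-- The correlated clipped-Gaussian loss sequence of environment `j` built from the
Gaussian sequence `z` (arm `0` plays the role of arm `1` in the paper). -/
noncomputable def clipEnvLoss {K : ℕ} [NeZero K] (Δ : ℝ) (j : Fin K) (z : ℕ → ℝ) :
    ℕ → Fin K → ℝ :=
  fun t i => if i = 0 then clip01 (z t - Δ)
    else if i = j then clip01 (z t - 2 * Δ) else clip01 (z t)

/-- The variance used in the clipped-Gaussian environments, `σ² = 1/(32 log 2)`. -/
noncomputable def sigSq : ℝ := 1 / (32 * Real.log 2)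

/-- The law of the clipped-Gaussian environment `j`: the image of the law `γ` of the
i.i.d. Gaussian sequence under the loss map. -/
noncomputable def clipEnv {K : ℕ} [NeZero K] (Δ : ℝ) (j : Fin K)
    (γ : Measure (ℕ → ℝ)) : Measure (ℕ → Fin K → ℝ) :=
  γ.map (clipEnvLoss Δ j)



lemma fin2_cases (i : Fin 2) : i = 0 ∨ i = 1 := by fin_cases i <;> simp

lemma card_good (T n : ℕ) (pf : Fin T → Fin 2)
    (hn : (Finset.univ.filter fun t => pf t = 1).card ≤ n) (hT : n + 1 ≤ T) :
    2 ^ (T - 1 - n) ≤ (Finset.univ.filter fun d : Fin T → Bool =>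
      (∀ t, pf t = 1 → d t = false) ∧
      T ≤ 2 * (Finset.univ.filter fun t => pf t = 0 ∧ d t = true).card
            + (Finset.univ.filter fun t => pf t = 1).card).card := by
  set F : Finset (Fin T) := Finset.univ.filter fun t => pf t = 1 with hF
  set Nf : ℕ := F.card with hNf
  set G : Finset (Fin T) := Finset.univ.filter fun t => pf t = 0 with hG
  have hne : ∀ i : Fin 2, (¬ i = 1) ↔ i = 0 := by decide
  have hGF : Nf + G.card = T := by
    have h := Finset.card_filter_add_card_filter_not
      (s := (Finset.univ : Finset (Fin T))) (p := fun t => pf t = 1)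
    have : (Finset.univ.filter fun t => ¬ pf t = 1) = G := by
      apply Finset.filter_congr; intro t _; simp [hne]
    rw [this] at h
    simp only [Finset.card_univ, Fintype.card_fin] at h
    rw [hNf, hF, hG]
    exact h
  set cnt0 : (Fin T → Bool) → ℕ :=
    fun d => (Finset.univ.filter fun t => pf t = 0 ∧ d t = true).card with hcnt0
  have hcnt_eq : ∀ d : Fin T → Bool, cnt0 d = (G.filter fun t => d t = true).card := by
    intro d; rw [hcnt0]; rw [hG, Finset.filter_filter]
  have hflip : ∀ d : Fin T → Bool, cnt0 d + cnt0 (fun t => !(d t)) = G.card := by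
    intro d
    rw [hcnt_eq, hcnt_eq]
    have h := Finset.card_filter_add_card_filter_not
      (s := G) (p := fun t => d t = true)
    have : (G.filter fun t => ¬ d t = true) = (G.filter fun t => (!(d t)) = true) := by
      apply Finset.filter_congr; intro t _; simp
    rw [this] at h; exact h
  set A1 : Finset (Fin T → Bool) :=
    Finset.univ.filter fun d => T ≤ 2 * cnt0 d + Nf with hA1def
  have hA1 : 2 ^ T ≤ 2 * A1.card := by
    have cover : (Finset.univ : Finset (Fin T → Bool)) ⊆ A1 ∪ A1.image (fun d t => !(d t)) := by
      intro d _
      by_cases hd : T ≤ 2 * cnt0 d + Nf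
      · exact Finset.mem_union_left _ (by simp [hA1def, hd])
      · apply Finset.mem_union_right
        apply Finset.mem_image.mpr
        refine ⟨fun t => !(d t), ?_, by funext t; simp⟩
        have h1 := hflip d
        simp only [hA1def, Finset.mem_filter, Finset.mem_univ, true_and]
        omega
    have hc : (Finset.univ : Finset (Fin T → Bool)).card = 2 ^ T := by
      simp [Finset.card_univ, Fintype.card_fun]
    calc 2 ^ T = (Finset.univ : Finset (Fin T → Bool)).card := hc.symm
      _ ≤ (A1 ∪ A1.image (fun d t => !(d t))).card := Finset.card_le_card cover
      _ ≤ A1.card + (A1.image (fun d t => !(d t))).card := Finset.card_union_le _ _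
      _ ≤ A1.card + A1.card := by
          exact Nat.add_le_add_left (Finset.card_image_le) _
      _ = 2 * A1.card := by ring
  set Φ : (Fin T → Bool) → (Fin T → Bool) := fun d t => if pf t = 1 then false else d t with hΦ
  set Good : Finset (Fin T → Bool) := Finset.univ.filter fun d : Fin T → Bool =>
      (∀ t, pf t = 1 → d t = false) ∧
      T ≤ 2 * (Finset.univ.filter fun t => pf t = 0 ∧ d t = true).card + Nf with hGood
  have hcntΦ : ∀ d, cnt0 (Φ d) = cnt0 d := by
    intro d
    rw [hcnt0]
    apply congrArg
    apply Finset.filter_congr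
    intro t _
    constructor
    · rintro ⟨h0, h1⟩
      refine ⟨h0, ?_⟩
      have : ¬ pf t = 1 := by rw [hne]; exact h0
      simpa [hΦ, this] using h1
    · rintro ⟨h0, h1⟩
      refine ⟨h0, ?_⟩
      have : ¬ pf t = 1 := by rw [hne]; exact h0
      simpa [hΦ, this] using h1
  have hΦmem : ∀ d ∈ A1, Φ d ∈ Good := by
    intro d hd
    simp only [hGood, Finset.mem_filter, Finset.mem_univ, true_and]
    constructor
    · intro t ht; simp [hΦ, ht]
    · have h2 := hcntΦ d
      simp only [hA1def, Finset.mem_filter, Finset.mem_univ, true_and] at hd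
      show T ≤ 2 * cnt0 (Φ d) + Nf
      omega
  have fiber_bound : ∀ e ∈ Good, (A1.filter fun d => Φ d = e).card ≤ 2 ^ n := by
    intro e _
    have hinj : (A1.filter fun d => Φ d = e).card ≤
        (Finset.univ : Finset ({t : Fin T // pf t = 1} → Bool)).card := by
      apply Finset.card_le_card_of_injOn (fun d (t : {t : Fin T // pf t = 1}) => d t.1)
        (fun _ _ => Finset.mem_univ _)
      intro d hd d' hd' hψ
      simp only [Finset.mem_coe, Finset.mem_filter] at hd hd'
      funext t
      by_cases hpf : pf t = 1
      · exact congrFun hψ ⟨t, hpf⟩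
      · have h1 : Φ d t = Φ d' t := by rw [hd.2, hd'.2]
        simpa [hΦ, hpf] using h1
    have hcard : (Finset.univ : Finset ({t : Fin T // pf t = 1} → Bool)).card = 2 ^ Nf := by
      rw [Finset.card_univ, Fintype.card_fun]
      simp [Fintype.card_subtype, hNf, hF]
    rw [hcard] at hinj
    exact hinj.trans (Nat.pow_le_pow_right (by norm_num) hn)
  have hA1card : A1.card ≤ 2 ^ n * Good.card := by
    rw [Finset.card_eq_sum_card_fiberwise hΦmem]
    calc ∑ e ∈ Good, (A1.filter fun d => Φ d = e).card
        ≤ ∑ _e ∈ Good, 2 ^ n := Finset.sum_le_sum fiber_bound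
      _ = Good.card * 2 ^ n := by rw [Finset.sum_const, smul_eq_mul]
      _ = 2 ^ n * Good.card := by ring
  have key : 2 ^ (n + 1) * 2 ^ (T - 1 - n) ≤ 2 ^ (n + 1) * Good.card := by
    have h1 : 2 ^ (n + 1) * 2 ^ (T - 1 - n) = 2 ^ T := by
      rw [← pow_add]; congr 1; omega
    have h2 : 2 * (2 ^ n * Good.card) = 2 ^ (n + 1) * Good.card := by ring
    calc 2 ^ (n + 1) * 2 ^ (T - 1 - n) = 2 ^ T := h1
      _ ≤ 2 * A1.card := hA1
      _ ≤ 2 * (2 ^ n * Good.card) := by omega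
      _ = 2 ^ (n + 1) * Good.card := h2
  exact Nat.le_of_mul_le_mul_left key (Nat.pow_pos (by norm_num))


lemma iInf_fin_two (g : Fin 2 → ℝ) : (⨅ i, g i) = min (g 0) (g 1) := by
  refine le_antisymm (le_min ?_ ?_) (le_ciInf fun i => ?_)
  · exact ciInf_le (Set.finite_range g).bddBelow 0
  · exact ciInf_le (Set.finite_range g).bddBelow 1
  · rcases fin2_cases i with h | h <;> subst h
    · exact min_le_left _ _
    · exact min_le_right _ _

noncomputable def l0 : ℕ → Fin 2 → ℝ := fun _ i => if i = 0 then 1/2 else 5/8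

noncomputable def l1 (T : ℕ) (d : Fin T → Bool) : ℕ → Fin 2 → ℝ := fun t i =>
  if i = 0 then 1/2 else if h : t < T then (if d ⟨t, h⟩ then 1/8 else 5/8) else 5/8

section Strat
variable {Ω : Type*} [MeasurableSpace Ω]

noncomputable def Ncnt (S : Strategy 2 Ω) (T : ℕ) (ω : Ω) : ℕ :=
  ((Finset.range T).filter fun t => S.act l0 t ω = 1).card

noncomputable def Dcnt (S : Strategy 2 Ω) (T : ℕ) (d : Fin T → Bool) (ω : Ω) : ℕ :=
  ((Finset.range T).filter fun t =>
    S.act l0 t ω = 0 ∧ (if h : t < T then d ⟨t, h⟩ else false) = true).card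

lemma Ncnt_le (S : Strategy 2 Ω) (T : ℕ) (ω : Ω) : Ncnt S T ω ≤ T := by
  calc Ncnt S T ω ≤ (Finset.range T).card := Finset.card_filter_le _ _
    _ = T := Finset.card_range T

lemma Ncnt_eq_fin (S : Strategy 2 Ω) (T : ℕ) (ω : Ω) :
    Ncnt S T ω = (Finset.univ.filter fun t : Fin T => S.act l0 (↑t) ω = 1).card := by
  rw [Ncnt, Finset.card_filter, Finset.card_filter,
    ← Fin.sum_univ_eq_sum_range (fun t => if S.act l0 t ω = 1 then 1 else 0) T]

lemma Dcnt_eq_fin (S : Strategy 2 Ω) (T : ℕ) (d : Fin T → Bool) (ω : Ω) :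
    Dcnt S T d ω = (Finset.univ.filter fun t : Fin T =>
      S.act l0 (↑t) ω = 0 ∧ d t = true).card := by
  rw [Dcnt, Finset.card_filter, Finset.card_filter,
    ← Fin.sum_univ_eq_sum_range (fun t => if S.act l0 t ω = 0 ∧
        (if h : t < T then d ⟨t, h⟩ else false) = true then 1 else 0) T]
  apply Finset.sum_congr rfl
  intro t _
  congr 1
  simp only [t.isLt, dif_pos, Fin.eta]

lemma mimic (S : Strategy 2 Ω) (T : ℕ) (d : Fin T → Bool) (ω : Ω)
    (hd : ∀ t : Fin T, S.act l0 (↑t) ω = 1 → d t = false) :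
    ∀ t, t < T → S.act (l1 T d) t ω = S.act l0 t ω := by
  intro t
  induction t using Nat.strong_induction_on with
  | _ t ih =>
    intro ht
    apply S.adapted
    intro s hs
    have hsT : s < T := hs.trans ht
    have heq : S.act (l1 T d) s ω = S.act l0 s ω := ih s hs hsT
    refine ⟨heq, ?_⟩
    rw [heq]
    rcases fin2_cases (S.act l0 s ω) with h0 | h1
    · rw [h0]; simp [l0, l1]
    · rw [h1]
      have hfd : d ⟨s, hsT⟩ = false := hd ⟨s, hsT⟩ h1
      simp [l0, l1, hsT, hfd]

lemma sum_l0 (S : Strategy 2 Ω) (T : ℕ) (ω : Ω) :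
    ∑ t ∈ Finset.range T, l0 t (S.act l0 t ω) = (T : ℝ)/2 + (Ncnt S T ω : ℝ)/8 := by
  have h1 : ∀ t ∈ Finset.range T, l0 t (S.act l0 t ω)
      = 1/2 + (if S.act l0 t ω = 1 then (1:ℝ) else 0)/8 := by
    intro t _
    rcases fin2_cases (S.act l0 t ω) with h | h <;> rw [h] <;> simp [l0] <;> norm_num
  rw [Finset.sum_congr rfl h1, Finset.sum_add_distrib, Finset.sum_const,
    Finset.card_range, nsmul_eq_mul, ← Finset.sum_div, Finset.sum_boole, Ncnt]
  ring

lemma inf_l0 (T : ℕ) : (⨅ i : Fin 2, ∑ t ∈ Finset.range T, l0 t i) = (T : ℝ)/2 := by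
  rw [iInf_fin_two]
  have h0 : ∑ t ∈ Finset.range T, l0 t 0 = (T : ℝ)/2 := by
    simp [l0, Finset.sum_const, Finset.card_range, nsmul_eq_mul]; ring
  have h1 : ∑ t ∈ Finset.range T, l0 t 1 = (T : ℝ) * (5/8) := by
    simp [l0, Finset.sum_const, Finset.card_range, nsmul_eq_mul]
  rw [h0, h1, min_eq_left]
  have : (0:ℝ) ≤ T := Nat.cast_nonneg T
  linarith

lemma reg0 (S : Strategy 2 Ω) (T : ℕ) (ω : Ω) :
    regret S T l0 ω = (Ncnt S T ω : ℝ)/8 := by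
  rw [regret, sum_l0, inf_l0]
  ring

lemma reg1 (S : Strategy 2 Ω) (T : ℕ) (d : Fin T → Bool) (ω : Ω)
    (hd : ∀ t : Fin T, S.act l0 (↑t) ω = 1 → d t = false)
    (hc : T ≤ 2 * Dcnt S T d ω + Ncnt S T ω) :
    regret S T (l1 T d) ω ≥ ((T : ℝ) - Ncnt S T ω)/8 := by
  have hacts := mimic S T d ω hd
  have hsum : ∑ t ∈ Finset.range T, l1 T d t (S.act (l1 T d) t ω)
      = (T : ℝ)/2 + (Ncnt S T ω : ℝ)/8 := by
    have h1 : ∀ t ∈ Finset.range T, l1 T d t (S.act (l1 T d) t ω)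
        = 1/2 + (if S.act l0 t ω = 1 then (1:ℝ) else 0)/8 := by
      intro t htm
      have htT : t < T := Finset.mem_range.mp htm
      rw [hacts t htT]
      rcases fin2_cases (S.act l0 t ω) with h | h <;> rw [h]
      · simp [l1]
      · have hfd : d ⟨t, htT⟩ = false := hd ⟨t, htT⟩ h
        simp [l1, htT, hfd, h]
        norm_num
    rw [Finset.sum_congr rfl h1, Finset.sum_add_distrib, Finset.sum_const,
      Finset.card_range, nsmul_eq_mul, ← Finset.sum_div, Finset.sum_boole, Ncnt]
    ring
  have hinfle : (⨅ i : Fin 2, ∑ t ∈ Finset.range T, l1 T d t i)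
      ≤ ∑ t ∈ Finset.range T, l1 T d t 1 :=
    ciInf_le (Set.finite_range _).bddBelow 1
  have harm1 : ∑ t ∈ Finset.range T, l1 T d t 1
      = (T : ℝ) * (5/8) - (Dcnt S T d ω : ℝ)/2 := by
    have h1 : ∀ t ∈ Finset.range T, l1 T d t 1
        = 5/8 - (if (S.act l0 t ω = 0 ∧ (if h : t < T then d ⟨t, h⟩ else false) = true)
            then (1:ℝ) else 0)/2 := by
      intro t htm
      have htT : t < T := Finset.mem_range.mp htm
      by_cases hdt : d ⟨t, htT⟩ = true
      · rcases fin2_cases (S.act l0 t ω) with h | h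
        · simp [l1, htT, hdt, h]; norm_num
        · exact absurd (hd ⟨t, htT⟩ h) (by simp [hdt])
      · simp only [Bool.not_eq_true] at hdt
        simp [l1, htT, hdt]
    rw [Finset.sum_congr rfl h1, Finset.sum_sub_distrib, Finset.sum_const,
      Finset.card_range, nsmul_eq_mul, ← Finset.sum_div, Finset.sum_boole, Dcnt]
    try ring
  have hcc : (T : ℝ) ≤ 2 * (Dcnt S T d ω : ℝ) + (Ncnt S T ω : ℝ) := by
    exact_mod_cast hc
  rw [regret, hsum]
  rw [harm1] at hinfle
  linarith

end Strat


/-- Corollary 1 of the paper: for `p ∈ (0,1)` and `C > 0` there is no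
family of bandit strategies (one for each horizon `T` and arm count `K`) whose regret is
at most `C·√((K−1)·T)·log^p(1/δ)` with probability at least `1 − δ`, simultaneously for
all `T`, `K`, all loss sequences in `[0,1]^{KT}` and all `δ ∈ (0,1)`. -/
theorem no_polylog_high_prob_strategy {p C : ℝ} (hp : p ∈ Set.Ioo (0:ℝ) 1) (hC : 0 < C) :
    ¬ ∃ (Ω : ℕ → ℕ → Type) (m : ∀ T K : ℕ, MeasurableSpace (Ω T K))
        (S : ∀ T K : ℕ, @Strategy K (Ω T K) (m T K)),
      ∀ (T K : ℕ), 1 ≤ T → 2 ≤ K →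
        ∀ ℓ : ℕ → Fin K → ℝ, (∀ t < T, ∀ i, ℓ t i ∈ Set.Icc (0:ℝ) 1) →
        ∀ δ ∈ Set.Ioo (0:ℝ) 1,
          (S T K).μ {ω | @regret K (Ω T K) (m T K) (S T K) T ℓ ω ≥
              C * Real.sqrt (((K : ℝ) - 1) * T) * Real.log (1 / δ) ^ p}
            ≤ ENNReal.ofReal δ := by
  obtain ⟨hp0, hp1⟩ := hp
  rintro ⟨Ωf, mf, Sf, H⟩
  -- constants
  set C1 : ℝ := max C 1 with hC1def
  have hC1_1 : (1:ℝ) ≤ C1 := le_max_right _ _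
  have hCC1 : C ≤ C1 := le_max_left _ _
  have hC1pos : (0:ℝ) < C1 := lt_of_lt_of_le one_pos hC1_1
  set E : ℝ := 105 * C1 ^ 2 with hEdef
  have hE1 : (1:ℝ) ≤ E := by nlinarith
  have hEpos : (0:ℝ) < E := by linarith
  set M : ℕ := ⌈E ^ ((1:ℝ)/(1-p))⌉₊ + 1 with hMdef
  have hMR : (1:ℝ) ≤ (M:ℝ) := by
    have : (1:ℕ) ≤ M := by omega
    exact_mod_cast this
  have hMpos : (0:ℝ) < (M:ℝ) := lt_of_lt_of_le one_pos hMR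
  have hME : E ^ ((1:ℝ)/(1-p)) ≤ (M:ℝ) := by
    calc E ^ ((1:ℝ)/(1-p)) ≤ (⌈E ^ ((1:ℝ)/(1-p))⌉₊ : ℝ) := Nat.le_ceil _
      _ ≤ (M:ℝ) := by rw [hMdef]; push_cast; linarith
  have h1p : (0:ℝ) < 1 - p := by linarith
  have hMpow : E * (M:ℝ) ^ p ≤ (M:ℝ) := by
    have hkey : E ≤ (M:ℝ) ^ (1-p) := by
      have h1 : (E ^ ((1:ℝ)/(1-p))) ^ (1-p) ≤ (M:ℝ) ^ (1-p) :=
        Real.rpow_le_rpow (Real.rpow_nonneg hEpos.le _) hME h1p.le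
      have h2 : (E ^ ((1:ℝ)/(1-p))) ^ (1-p) = E := by
        rw [← Real.rpow_mul hEpos.le, one_div, inv_mul_cancel₀ (ne_of_gt h1p), Real.rpow_one]
      rw [← h2]; exact h1
    have h3 : (M:ℝ) ^ (1-p) * (M:ℝ) ^ p = (M:ℝ) := by
      rw [← Real.rpow_add hMpos]; norm_num
    calc E * (M:ℝ) ^ p ≤ (M:ℝ) ^ (1-p) * (M:ℝ) ^ p :=
          mul_le_mul_of_nonneg_right hkey (Real.rpow_nonneg hMpos.le _)
      _ = (M:ℝ) := h3
  have hMp1 : (1:ℝ) ≤ (M:ℝ) ^ p := Real.one_le_rpow hMR hp0.le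
  have hMp0 : (0:ℝ) < (M:ℝ) ^ p := Real.rpow_pos_of_pos hMpos p
  have hMgeE : E ≤ (M:ℝ) := by
    calc E = E * 1 := (mul_one E).symm
      _ ≤ E * (M:ℝ)^p := mul_le_mul_of_nonneg_left hMp1 hEpos.le
      _ ≤ (M:ℝ) := hMpow
  set T : ℕ := M * M with hTdef
  have hM1 : 1 ≤ M := by omega
  have hT1 : 1 ≤ T := by
    rw [hTdef]
    calc 1 = 1 * 1 := rfl
      _ ≤ M * M := Nat.mul_le_mul hM1 hM1
  have hTR : (T:ℝ) = (M:ℝ) * (M:ℝ) := by rw [hTdef]; push_cast; ring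
  letI : MeasurableSpace (Ωf T 2) := mf T 2
  haveI hPr : IsProbabilityMeasure (Sf T 2).μ := (Sf T 2).prob
  set n : ℕ := ⌈8*C*(M:ℝ)⌉₊ with hndef
  have hn_low : 8*C*(M:ℝ) ≤ (n:ℝ) := Nat.le_ceil _
  have hn_up : (n:ℝ) ≤ 8*C*(M:ℝ) + 1 := (Nat.ceil_lt_add_one (by positivity)).le
  have hn9 : (n:ℝ) ≤ 9*C1*(M:ℝ) := by
    have q1 : 8*C*(M:ℝ) ≤ 8*C1*(M:ℝ) := by
      have := mul_le_mul_of_nonneg_right hCC1 (show (0:ℝ) ≤ 8*(M:ℝ) by positivity)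
      nlinarith [this]
    have q2 : (1:ℝ) ≤ C1*(M:ℝ) :=
      le_trans (by norm_num) (mul_le_mul hC1_1 hMR (by norm_num) hC1pos.le)
    nlinarith [q1, q2]
  have hlog2a : (0:ℝ) ≤ Real.log 2 := Real.log_nonneg one_le_two
  have hlog2b : Real.log 2 ≤ 1 := by
    have := Real.log_le_sub_one_of_pos (show (0:ℝ) < 2 by norm_num)
    linarith
  have hkeyT : 105 * C1^2 * ((M:ℝ)^p * (M:ℝ)) ≤ (T:ℝ) := by
    rw [hTR]
    have := mul_le_mul_of_nonneg_right hMpow hMpos.le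
    calc 105 * C1^2 * ((M:ℝ)^p * (M:ℝ)) = (E * (M:ℝ)^p) * (M:ℝ) := by rw [hEdef]; ring
      _ ≤ (M:ℝ) * (M:ℝ) := this
  have hCge : (1:ℝ) ≤ C1*(M:ℝ) :=
    le_trans (by norm_num) (mul_le_mul hC1_1 hMR (by norm_num) hC1pos.le)
  have ha1 : C1*(M:ℝ) ≤ (C1*C1)*((M:ℝ)^p*(M:ℝ)) := by
    have s1 : C1*(M:ℝ) ≤ C1*((M:ℝ)^p*(M:ℝ)) :=
      mul_le_mul_of_nonneg_left (le_mul_of_one_le_left hMpos.le hMp1) hC1pos.le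
    have s2 : C1*((M:ℝ)^p*(M:ℝ)) ≤ (C1*C1)*((M:ℝ)^p*(M:ℝ)) :=
      mul_le_mul_of_nonneg_right (le_mul_of_one_le_left hC1pos.le hC1_1) (by positivity)
    exact s1.trans s2
  have hTbig : 105*(C1*(M:ℝ)) ≤ (T:ℝ) := by
    calc 105*(C1*(M:ℝ)) ≤ 105*((C1*C1)*((M:ℝ)^p*(M:ℝ))) := by linarith [ha1]
      _ = 105*C1^2*((M:ℝ)^p*(M:ℝ)) := by ring
      _ ≤ (T:ℝ) := hkeyT
  have hTn3 : (n:ℝ) + 3 ≤ (T:ℝ) := by linarith [hn9, hCge, hTbig]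
  have hnT : n + 1 ≤ T := by
    have : (n:ℝ) + 1 ≤ (T:ℝ) := by linarith
    exact_mod_cast this
  have hbudget : C * (M:ℝ) * (((n:ℝ)+3) * Real.log 2) ^ p ≤ ((T:ℝ) - n)/8 := by
    have h12 : ((n:ℝ)+3) * Real.log 2 ≤ 12*C1*(M:ℝ) := by
      have w1 : ((n:ℝ)+3) * Real.log 2 ≤ ((n:ℝ)+3) * 1 :=
        mul_le_mul_of_nonneg_left hlog2b (by positivity)
      linarith [hn9, hCge]
    have hnn : (0:ℝ) ≤ ((n:ℝ)+3) * Real.log 2 := by positivity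
    have hr1 : (((n:ℝ)+3) * Real.log 2) ^ p ≤ (12*C1*(M:ℝ)) ^ p :=
      Real.rpow_le_rpow hnn h12 hp0.le
    have hr2 : (12*C1*(M:ℝ)) ^ p = (12*C1) ^ p * (M:ℝ) ^ p :=
      Real.mul_rpow (by positivity) hMpos.le
    have hr3 : (12*C1 : ℝ) ^ p ≤ 12*C1 := by
      have h := Real.rpow_le_rpow_of_exponent_le (show (1:ℝ) ≤ 12*C1 by linarith) hp1.le
      rwa [Real.rpow_one] at h
    have hr4 : (((n:ℝ)+3) * Real.log 2) ^ p ≤ 12*C1*(M:ℝ)^p := by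
      calc (((n:ℝ)+3) * Real.log 2) ^ p ≤ (12*C1) ^ p * (M:ℝ) ^ p := by rw [← hr2]; exact hr1
        _ ≤ 12*C1*(M:ℝ)^p := mul_le_mul_of_nonneg_right hr3 hMp0.le
    have hCM : (0:ℝ) ≤ C * (M:ℝ) := by positivity
    have hLHS : C * (M:ℝ) * (((n:ℝ)+3) * Real.log 2) ^ p ≤ 12*(C1*C1)*((M:ℝ)^p*(M:ℝ)) := by
      have s1 : C * (M:ℝ) * (((n:ℝ)+3) * Real.log 2) ^ p ≤ C * (M:ℝ) * (12*C1*(M:ℝ)^p) :=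
        mul_le_mul_of_nonneg_left hr4 hCM
      have s2 : C * (M:ℝ) * (12*C1*(M:ℝ)^p) = 12*(C*C1)*((M:ℝ)^p*(M:ℝ)) := by ring
      have s3 : 12*(C*C1)*((M:ℝ)^p*(M:ℝ)) ≤ 12*(C1*C1)*((M:ℝ)^p*(M:ℝ)) := by
        apply mul_le_mul_of_nonneg_right _ (by positivity)
        have := mul_le_mul_of_nonneg_right hCC1 hC1pos.le
        linarith
      linarith [s1, s2.le, s2.ge, s3]
    have key2 : 96*(C1*C1)*((M:ℝ)^p*(M:ℝ)) + (n:ℝ) ≤ (T:ℝ) := by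
      have u3 : 105*(C1*C1)*((M:ℝ)^p*(M:ℝ)) ≤ (T:ℝ) := by
        calc 105*(C1*C1)*((M:ℝ)^p*(M:ℝ)) = 105*C1^2*((M:ℝ)^p*(M:ℝ)) := by ring
          _ ≤ (T:ℝ) := hkeyT
      linarith [hn9, ha1, u3]
    linarith [hLHS, key2]
  -- the two environments
  set S' := Sf T 2 with hS'def
  have hl0b : ∀ t < T, ∀ i, l0 t i ∈ Set.Icc (0:ℝ) 1 := by
    intro t _ i
    simp only [l0, Set.mem_Icc]
    split <;> norm_num
  have hl1b : ∀ d : Fin T → Bool, ∀ t < T, ∀ i, l1 T d t i ∈ Set.Icc (0:ℝ) 1 := by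
    intro d t _ i
    simp only [l1, Set.mem_Icc]
    split_ifs <;> norm_num
  have hhalf : (1/2 : ℝ) ∈ Set.Ioo (0:ℝ) 1 := by norm_num
  set δ' : ℝ := (1/2:ℝ)^(n+3) with hδ'def
  have hδ'pos : (0:ℝ) < δ' := by positivity
  have hδ'mem : δ' ∈ Set.Ioo (0:ℝ) 1 :=
    ⟨hδ'pos, pow_lt_one₀ (by norm_num) (by norm_num) (by omega)⟩
  have H0 := H T 2 hT1 le_rfl l0 hl0b (1/2) hhalf
  have H1 := fun d : Fin T → Bool => H T 2 hT1 le_rfl (l1 T d) (hl1b d) δ' hδ'mem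
  -- simplify the thresholds
  have hsqrtT : Real.sqrt ((((2:ℕ):ℝ) - 1) * (T:ℝ)) = (M:ℝ) := by
    have : (((2:ℕ):ℝ) - 1) * (T:ℝ) = (M:ℝ) * (M:ℝ) := by rw [hTR]; push_cast; ring
    rw [this, Real.sqrt_mul_self hMpos.le]
  have hlog_half : Real.log (1/(1/2:ℝ)) = Real.log 2 := by norm_num
  have hlogδ' : Real.log (1/δ') = ((n:ℝ)+3) * Real.log 2 := by
    have h1 : (1/δ' : ℝ) = 2^(n+3) := by
      rw [hδ'def, one_div, ← inv_pow]; norm_num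
    rw [h1, Real.log_pow]; push_cast; ring
  have hlp : (Real.log 2) ^ p ≤ 1 := Real.rpow_le_one hlog2a hlog2b hp0.le
  -- event inclusion for environment 0
  have hsub0 : {ω | n < Ncnt S' T ω} ⊆
      {ω | regret S' T l0 ω ≥ C * Real.sqrt ((((2:ℕ):ℝ) - 1) * T) * Real.log (1/(1/2:ℝ)) ^ p} := by
    intro ω hω
    simp only [Set.mem_setOf_eq] at hω ⊢
    rw [reg0, hsqrtT, hlog_half]
    have hN : (n:ℝ) + 1 ≤ (Ncnt S' T ω : ℝ) := by exact_mod_cast hω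
    have h1 : C * (M:ℝ) * (Real.log 2) ^ p ≤ C * (M:ℝ) := by
      have w := mul_le_mul_of_nonneg_left hlp (show (0:ℝ) ≤ C*(M:ℝ) by positivity)
      linarith [w]
    linarith
  have hmuN : S'.μ {ω | n < Ncnt S' T ω} ≤ ENNReal.ofReal (1/2) :=
    le_trans (measure_mono hsub0) H0
  -- good events for environment-1 coin patterns
  set Sev : (Fin T → Bool) → Set (Ωf T 2) := fun d =>
    {ω | Ncnt S' T ω ≤ n ∧ (∀ t : Fin T, S'.act l0 (↑t) ω = 1 → d t = false) ∧
      T ≤ 2 * Dcnt S' T d ω + Ncnt S' T ω} with hSevdef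
  have hsub1 : ∀ d : Fin T → Bool, Sev d ⊆
      {ω | regret S' T (l1 T d) ω ≥ C * Real.sqrt ((((2:ℕ):ℝ) - 1) * T) * Real.log (1/δ') ^ p} := by
    intro d ω hω
    simp only [hSevdef, Set.mem_setOf_eq] at hω
    obtain ⟨h1, h2, h3⟩ := hω
    simp only [Set.mem_setOf_eq]
    rw [hsqrtT, hlogδ']
    have hreg := reg1 S' T d ω h2 h3
    have hNn : (Ncnt S' T ω : ℝ) ≤ (n:ℝ) := by exact_mod_cast h1
    have : ((T:ℝ) - n)/8 ≤ ((T:ℝ) - Ncnt S' T ω)/8 := by linarith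
    linarith
  -- measurability
  have hact_meas : ∀ t, Measurable fun ω => S'.act l0 t ω :=
    fun t => (S'.meas_act t).comp measurable_prodMk_left
  have hsetA : ∀ t (i : Fin 2), MeasurableSet {ω | S'.act l0 t ω = i} :=
    fun t i => hact_meas t (measurableSet_singleton i)
  have hNmeas : Measurable fun ω => Ncnt S' T ω := by
    have h1 : (fun ω => Ncnt S' T ω)
        = fun ω => ∑ t ∈ Finset.range T, if S'.act l0 t ω = 1 then 1 else 0 := by
      funext ω; rw [Ncnt, Finset.card_filter]
    rw [h1]
    exact Finset.measurable_sum _ (fun t _ =>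
      Measurable.ite (hsetA t 1) measurable_const measurable_const)
  have hDmeas : ∀ d : Fin T → Bool, Measurable fun ω => Dcnt S' T d ω := by
    intro d
    have h1 : (fun ω => Dcnt S' T d ω)
        = fun ω => ∑ t ∈ Finset.range T,
            if S'.act l0 t ω = 0 ∧ (if h : t < T then d ⟨t, h⟩ else false) = true
            then 1 else 0 := by
      funext ω; rw [Dcnt, Finset.card_filter]
    rw [h1]
    apply Finset.measurable_sum
    intro t _
    by_cases hdt : (if h : t < T then d ⟨t, h⟩ else false) = true
    · have : (fun ω => if S'.act l0 t ω = 0 ∧ (if h : t < T then d ⟨t, h⟩ else false) = true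
          then (1:ℕ) else 0) = fun ω => if S'.act l0 t ω = 0 then 1 else 0 := by
        funext ω; simp [hdt]
      rw [this]
      exact Measurable.ite (hsetA t 0) measurable_const measurable_const
    · have : (fun ω => if S'.act l0 t ω = 0 ∧ (if h : t < T then d ⟨t, h⟩ else false) = true
          then (1:ℕ) else 0) = fun _ => 0 := by
        funext ω; simp [hdt]
      rw [this]
      exact measurable_const
  have hmeasNn : MeasurableSet {ω | Ncnt S' T ω ≤ n} :=
    hNmeas ((Set.to_countable {k : ℕ | k ≤ n}).measurableSet)
  have hSev_meas : ∀ d : Fin T → Bool, MeasurableSet (Sev d) := by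
    intro d
    have e1 : MeasurableSet {ω | Ncnt S' T ω ≤ n} := hmeasNn
    have e2 : MeasurableSet {ω | ∀ t : Fin T, S'.act l0 (↑t) ω = 1 → d t = false} := by
      have : {ω | ∀ t : Fin T, S'.act l0 (↑t) ω = 1 → d t = false}
          = ⋂ t : Fin T, {ω | S'.act l0 (↑t) ω = 1 → d t = false} := by
        ext ω; simp
      rw [this]
      apply MeasurableSet.iInter
      intro t
      by_cases hdt : d t = false
      · have : {ω | S'.act l0 (↑t) ω = 1 → d t = false} = Set.univ := by
          ext ω; simp [hdt]
        rw [this]; exact MeasurableSet.univ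
      · have : {ω | S'.act l0 (↑t) ω = 1 → d t = false}
            = {ω | S'.act l0 (↑t) ω = 1}ᶜ := by
          ext ω; simp [hdt]
        rw [this]
        exact (hsetA (↑t) 1).compl
    have e3 : MeasurableSet {ω | T ≤ 2 * Dcnt S' T d ω + Ncnt S' T ω} := by
      have hg : Measurable fun ω => 2 * Dcnt S' T d ω + Ncnt S' T ω :=
        (((hDmeas d).const_mul 2).add hNmeas)
      exact hg ((Set.to_countable {k : ℕ | T ≤ k}).measurableSet)
    have : Sev d = {ω | Ncnt S' T ω ≤ n} ∩
        ({ω | ∀ t : Fin T, S'.act l0 (↑t) ω = 1 → d t = false} ∩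
         {ω | T ≤ 2 * Dcnt S' T d ω + Ncnt S' T ω}) := by
      ext ω; simp [hSevdef, Set.mem_setOf_eq, and_assoc]
    rw [this]
    exact e1.inter (e2.inter e3)
  -- lower bound on the sum of the good-event measures
  have hLpoint : ∀ ω, (2:ℝ≥0∞)^(T-1-n) * Set.indicator {ω' | Ncnt S' T ω' ≤ n} (1 : (Ωf T 2) → ℝ≥0∞) ω
      ≤ ∑ d : Fin T → Bool, Set.indicator (Sev d) (1 : (Ωf T 2) → ℝ≥0∞) ω := by
    intro ω
    by_cases hω : Ncnt S' T ω ≤ n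
    · have hind : Set.indicator {ω' | Ncnt S' T ω' ≤ n} (1 : (Ωf T 2) → ℝ≥0∞) ω = 1 := by
        rw [Set.indicator_of_mem (show ω ∈ {ω' | Ncnt S' T ω' ≤ n} from hω)]; rfl
      rw [hind, mul_one]
      have hsum : ∑ d : Fin T → Bool, Set.indicator (Sev d) (1 : (Ωf T 2) → ℝ≥0∞) ω
          = ((Finset.univ.filter fun d : Fin T → Bool => ω ∈ Sev d).card : ℝ≥0∞) := by
        rw [← Finset.sum_boole]
        apply Finset.sum_congr rfl
        intro d _
        rw [Set.indicator_apply]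
        split <;> rfl
      rw [hsum]
      have hcard := card_good T n (fun t : Fin T => S'.act l0 (↑t) ω)
        (by rw [← Ncnt_eq_fin]; exact hω) hnT
      have hfe : (Finset.univ.filter fun d : Fin T → Bool => ω ∈ Sev d)
          = (Finset.univ.filter fun d : Fin T → Bool =>
            (∀ t : Fin T, S'.act l0 (↑t) ω = 1 → d t = false) ∧
            T ≤ 2 * (Finset.univ.filter fun t : Fin T =>
                  S'.act l0 (↑t) ω = 0 ∧ d t = true).card
                + (Finset.univ.filter fun t : Fin T => S'.act l0 (↑t) ω = 1).card) := by
        apply Finset.filter_congr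
        intro d _
        simp only [hSevdef, Set.mem_setOf_eq]
        constructor
        · rintro ⟨_, h2, h3⟩
          refine ⟨h2, ?_⟩
          rw [← Ncnt_eq_fin, ← Dcnt_eq_fin]
          exact h3
        · rintro ⟨h2, h3⟩
          refine ⟨hω, h2, ?_⟩
          rw [Ncnt_eq_fin, Dcnt_eq_fin]
          exact h3
      rw [hfe]
      exact_mod_cast hcard
    · rw [Set.indicator_of_notMem (show ω ∉ {ω' | Ncnt S' T ω' ≤ n} from hω), mul_zero]
      exact zero_le
  have hL : (2:ℝ≥0∞)^(T-1-n) * S'.μ {ω | Ncnt S' T ω ≤ n}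
      ≤ ∑ d : Fin T → Bool, S'.μ (Sev d) := by
    calc (2:ℝ≥0∞)^(T-1-n) * S'.μ {ω | Ncnt S' T ω ≤ n}
        = ∫⁻ ω, (2:ℝ≥0∞)^(T-1-n)
            * Set.indicator {ω' | Ncnt S' T ω' ≤ n} (1 : (Ωf T 2) → ℝ≥0∞) ω ∂S'.μ := by
          rw [lintegral_const_mul _ (measurable_one.indicator hmeasNn),
            lintegral_indicator_one hmeasNn]
      _ ≤ ∫⁻ ω, ∑ d : Fin T → Bool, Set.indicator (Sev d) (1 : (Ωf T 2) → ℝ≥0∞) ω ∂S'.μ :=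
          lintegral_mono hLpoint
      _ = ∑ d : Fin T → Bool, S'.μ (Sev d) := by
          rw [lintegral_finset_sum _ (fun d _ => measurable_one.indicator (hSev_meas d))]
          exact Finset.sum_congr rfl fun d _ => lintegral_indicator_one (hSev_meas d)
  -- upper bound on the sum
  have hR : ∑ d : Fin T → Bool, S'.μ (Sev d) ≤ (2:ℝ≥0∞)^T * ENNReal.ofReal δ' := by
    calc ∑ d : Fin T → Bool, S'.μ (Sev d)
        ≤ ∑ _d : Fin T → Bool, ENNReal.ofReal δ' :=
          Finset.sum_le_sum (fun d _ => le_trans (measure_mono (hsub1 d)) (H1 d))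
      _ = ((Finset.univ : Finset (Fin T → Bool)).card : ℝ≥0∞) * ENNReal.ofReal δ' := by
          rw [Finset.sum_const, nsmul_eq_mul]
      _ = (2:ℝ≥0∞)^T * ENNReal.ofReal δ' := by
          have : (Finset.univ : Finset (Fin T → Bool)).card = 2^T := by
            simp [Finset.card_univ, Fintype.card_fun]
          rw [this]; push_cast; ring
  -- lower bound on the measure of {N ≤ n}
  have h4 : ENNReal.ofReal (1/2:ℝ) = (2:ℝ≥0∞)⁻¹ := by
    rw [show (1/2:ℝ) = (2:ℝ)⁻¹ by norm_num, ENNReal.ofReal_inv_of_pos (by norm_num),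
      ENNReal.ofReal_ofNat]
  have hP : (2:ℝ≥0∞)⁻¹ ≤ S'.μ {ω | Ncnt S' T ω ≤ n} := by
    have hcov : (Set.univ : Set (Ωf T 2)) ⊆
        {ω | Ncnt S' T ω ≤ n} ∪ {ω | n < Ncnt S' T ω} := by
      intro ω _
      by_cases h : Ncnt S' T ω ≤ n
      · exact Or.inl h
      · exact Or.inr (lt_of_not_ge h)
    have h2 : (1:ℝ≥0∞) ≤ S'.μ {ω | Ncnt S' T ω ≤ n} + S'.μ {ω | n < Ncnt S' T ω} := by
      calc (1:ℝ≥0∞) = S'.μ Set.univ := measure_univ.symm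
        _ ≤ S'.μ ({ω | Ncnt S' T ω ≤ n} ∪ {ω | n < Ncnt S' T ω}) := measure_mono hcov
        _ ≤ _ := measure_union_le _ _
    have h5 : (2:ℝ≥0∞)⁻¹ + 2⁻¹ ≤ S'.μ {ω | Ncnt S' T ω ≤ n} + 2⁻¹ := by
      rw [ENNReal.inv_two_add_inv_two]
      calc (1:ℝ≥0∞) ≤ S'.μ {ω | Ncnt S' T ω ≤ n} + S'.μ {ω | n < Ncnt S' T ω} := h2
        _ ≤ S'.μ {ω | Ncnt S' T ω ≤ n} + 2⁻¹ := by
            exact add_le_add_right (le_trans hmuN h4.le) _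
    exact (ENNReal.add_le_add_iff_right (by simp)).mp h5
  -- combine
  have hfin : (2:ℝ≥0∞)^(T-1-n) * 2⁻¹ ≤ (2:ℝ≥0∞)^T * ENNReal.ofReal δ' := by
    calc (2:ℝ≥0∞)^(T-1-n) * 2⁻¹ ≤ (2:ℝ≥0∞)^(T-1-n) * S'.μ {ω | Ncnt S' T ω ≤ n} :=
          mul_le_mul_right hP _
      _ ≤ ∑ d : Fin T → Bool, S'.μ (Sev d) := hL
      _ ≤ (2:ℝ≥0∞)^T * ENNReal.ofReal δ' := hR
  have hne1 : ((2:ℝ≥0∞)^T * ENNReal.ofReal δ') ≠ ⊤ :=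
    ENNReal.mul_ne_top (ENNReal.pow_ne_top (by simp)) ENNReal.ofReal_ne_top
  have hne0 : ((2:ℝ≥0∞)^(T-1-n) * 2⁻¹) ≠ ⊤ :=
    ENNReal.mul_ne_top (ENNReal.pow_ne_top (by simp)) (by simp)
  have hreal : (2:ℝ)^(T-1-n) * (2:ℝ)⁻¹ ≤ (2:ℝ)^T * δ' := by
    have := (ENNReal.toReal_le_toReal hne0 hne1).mpr hfin
    rw [ENNReal.toReal_mul, ENNReal.toReal_mul, ENNReal.toReal_pow, ENNReal.toReal_pow,
      ENNReal.toReal_inv, ENNReal.toReal_ofNat, ENNReal.toReal_ofReal hδ'pos.le] at this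
    exact this
  have hTsplit : (2:ℝ)^T = 2^(T-1-n) * 2^(n+1) := by
    rw [← pow_add]; congr 1; omega
  rw [hTsplit, mul_assoc] at hreal
  have hpow_pos : (0:ℝ) < 2^(T-1-n) := by positivity
  have h2 : (2:ℝ)⁻¹ ≤ 2^(n+1) * δ' := (mul_le_mul_iff_right₀ hpow_pos).mp hreal
  have h3 : (2:ℝ)^(n+1) * δ' = (1/4 : ℝ) := by
    rw [hδ'def, show n+3 = (n+1)+2 by omega, pow_add ((1:ℝ)/2) (n+1) 2,
      ← mul_assoc, ← mul_pow]
    norm_num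
  rw [h3] at h2
  norm_num at h2


end BanditLB
end

section
/- Let P and Q be two probability measures on the same measurable space. Then for every measurable subset A (whose complement is denoted A^c), P(A) + Q(A^c) ≥ (1/2)·exp(−KL(P, Q)), where KL denotes the Kullback–Leibler divergence. -/
open MeasureTheory ProbabilityTheory Real
open scoped ENNReal NNReal Classical

namespace BanditLB

variable {K : ℕ} {Ω : Type*} [MeasurableSpace Ω]

/-- `exp(−x)` for `x : ℝ≥0∞`, with the convention `exp(−∞) = 0`. -/
noncomputable def expNeg (x : ℝ≥0∞) : ℝ := if x = ⊤ then 0 else Real.exp (-x.toReal)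

/-- Lemma 2, Tsybakov: for probability measures `P, Q` and any
measurable set `A`, `P(A) + Q(Aᶜ) ≥ (1/2)·exp(−KL(P,Q))`. -/
theorem tsybakov_lower_bound {α : Type*} [MeasurableSpace α]
    (P Q : Measure α) [IsProbabilityMeasure P] [IsProbabilityMeasure Q]
    {A : Set α} (hA : MeasurableSet A) :
    (P A).toReal + (Q Aᶜ).toReal ≥ (1/2) * expNeg (klDiv P Q) := by
  by_cases h : P ≪ Q ∧ Integrable (llr P Q) P
  case neg =>
    rw [klDiv, if_neg h]
    simp [expNeg]
    positivity
  obtain ⟨hPQ, hint⟩ := h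
  rw [klDiv, if_pos ⟨hPQ, hint⟩]
  set r := ∫ x, llr P Q x ∂P with hr
  set t : α → ℝ := fun x => (Q.rnDeriv P x).toReal with ht
  set g : α → ℝ := fun x => Real.sqrt (t x) with hgdef
  have ht_meas : Measurable t := (Measure.measurable_rnDeriv Q P).ennreal_toReal
  have ht_nonneg : ∀ x, 0 ≤ t x := fun x => ENNReal.toReal_nonneg
  have ht_int : Integrable t P := Measure.integrable_toReal_rnDeriv
  have hg_meas : Measurable g := ht_meas.sqrt
  have hg_nonneg : ∀ x, 0 ≤ g x := fun x => Real.sqrt_nonneg _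
  have hg_int : Integrable g P := by
    refine ht_int.add (integrable_const 1) |>.mono' hg_meas.aestronglyMeasurable ?_
    · refine Filter.Eventually.of_forall fun x => ?_
      rw [Real.norm_of_nonneg (hg_nonneg x)]
      have h1 : g x ≤ 1 + t x := by
        have := Real.sq_sqrt (ht_nonneg x)
        nlinarith [Real.sqrt_nonneg (t x), ht_nonneg x]
      simpa [add_comm] using h1
  -- g agrees a.e. with exp(-llr/2)
  have hgeq : (fun x => Real.exp (-llr P Q x / 2)) =ᵐ[P] g := by
    filter_upwards [exp_neg_llr hPQ] with x hx
    rw [hgdef, ht]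
    simp only
    rw [← hx, Real.exp_half]
  -- Jensen
  have hJ : Real.exp (-r / 2) ≤ ∫ x, g x ∂P := by
    have hfi : Integrable (fun x => -llr P Q x / 2) P := (hint.neg).div_const 2
    have hgi : Integrable (Real.exp ∘ fun x => -llr P Q x / 2) P :=
      hg_int.congr hgeq.symm
    have := ConvexOn.map_integral_le (s := Set.univ) (μ := P)
      (f := fun x => -llr P Q x / 2) convexOn_exp Real.continuous_exp.continuousOn
      isClosed_univ (Filter.Eventually.of_forall fun x => trivial) hfi hgi
    calc Real.exp (-r / 2) = Real.exp (∫ x, -llr P Q x / 2 ∂P) := by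
          rw [integral_div, integral_neg, hr]
      _ ≤ ∫ x, Real.exp (-llr P Q x / 2) ∂P := this
      _ = ∫ x, g x ∂P := integral_congr_ae hgeq
  -- Cauchy–Schwarz on a measurable set
  have hCS : ∀ s : Set α, MeasurableSet s →
      ∫ x in s, g x ∂P ≤ Real.sqrt (P s).toReal * Real.sqrt (Q s).toReal := by
    intro s hs
    have h2 : (2:ℝ).HolderConjugate 2 := Real.HolderConjugate.two_two
    have hg_sq : ∀ x, g x ^ (2:ℝ) = t x := fun x => by
      rw [show ((2:ℝ)) = ((2:ℕ):ℝ) by norm_num, Real.rpow_natCast,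
        Real.sq_sqrt (ht_nonneg x)]
    have hg_sq' : ∀ x, g x ^ (2:ℕ) = t x := fun x => Real.sq_sqrt (ht_nonneg x)
    have hg2 : Integrable (fun x => g x ^ (2:ℝ)) (P.restrict s) := by
      refine (ht_int.restrict).congr ?_
      exact Filter.Eventually.of_forall fun x => (hg_sq x).symm
    have hgmem : MemLp g (ENNReal.ofReal 2) (P.restrict s) := by
      rw [show ENNReal.ofReal 2 = 2 by norm_num]
      refine (memLp_two_iff_integrable_sq hg_meas.aestronglyMeasurable).2 ?_
      exact ht_int.restrict.congr (Filter.Eventually.of_forall fun x => (hg_sq' x).symm)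
    have honemem : MemLp (fun _ : α => (1:ℝ)) (ENNReal.ofReal 2) (P.restrict s) := by
      rw [show ENNReal.ofReal 2 = 2 by norm_num]
      exact memLp_const 1
    have := integral_mul_le_Lp_mul_Lq_of_nonneg (μ := P.restrict s) h2
      (Filter.Eventually.of_forall hg_nonneg)
      (Filter.Eventually.of_forall fun _ => zero_le_one) hgmem honemem
    simp only [mul_one, Real.one_rpow] at this
    have hsq : ∫ x in s, g x ^ (2:ℝ) ∂P ≤ (Q s).toReal := by
      refine le_trans (le_of_eq (integral_congr_ae (Filter.Eventually.of_forall fun x => hg_sq x)))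
        (Measure.setIntegral_toReal_rnDeriv_le (measure_ne_top Q s))
    have hone : ∫ _ in s, (1:ℝ) ∂P = (P s).toReal := by
      simp [Measure.restrict_apply_univ, Measure.real]
    calc ∫ x in s, g x ∂P ≤ (∫ x in s, g x ^ (2:ℝ) ∂P) ^ (1/2:ℝ) *
          (∫ _ in s, (1:ℝ) ∂P) ^ (1/2:ℝ) := this
      _ ≤ (Q s).toReal ^ (1/2:ℝ) * (P s).toReal ^ (1/2:ℝ) := by
          rw [hone]
          gcongr
      _ = Real.sqrt (P s).toReal * Real.sqrt (Q s).toReal := by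
          rw [Real.sqrt_eq_rpow, Real.sqrt_eq_rpow, mul_comm]
  set a := (P A).toReal
  set b := (Q Aᶜ).toReal
  have ha1 : a ≤ 1 := by
    simpa [a] using ENNReal.toReal_mono ENNReal.one_ne_top (prob_le_one (μ := P) (s := A))
  have hQA1 : (Q A).toReal ≤ 1 := by
    simpa using ENNReal.toReal_mono ENNReal.one_ne_top (prob_le_one (μ := Q) (s := A))
  have hPAc1 : (P Aᶜ).toReal ≤ 1 := by
    simpa using ENNReal.toReal_mono ENNReal.one_ne_top (prob_le_one (μ := P) (s := Aᶜ))
  have hsplit : ∫ x, g x ∂P = (∫ x in A, g x ∂P) + ∫ x in Aᶜ, g x ∂P :=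
    (integral_add_compl hA hg_int).symm
  have hB : ∫ x, g x ∂P ≤ Real.sqrt a + Real.sqrt b := by
    rw [hsplit]
    have h1 : ∫ x in A, g x ∂P ≤ Real.sqrt a := by
      refine le_trans (hCS A hA) ?_
      calc Real.sqrt a * Real.sqrt (Q A).toReal ≤ Real.sqrt a * 1 := by
            gcongr
            exact Real.sqrt_le_one.2 hQA1
        _ = Real.sqrt a := mul_one _
    have h2 : ∫ x in Aᶜ, g x ∂P ≤ Real.sqrt b := by
      refine le_trans (hCS Aᶜ hA.compl) ?_
      calc Real.sqrt (P Aᶜ).toReal * Real.sqrt b ≤ 1 * Real.sqrt b := by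
            gcongr
            exact Real.sqrt_le_one.2 hPAc1
        _ = Real.sqrt b := one_mul _
    linarith
  have hmain : Real.exp (-r) ≤ 2 * (a + b) := by
    have h1 : Real.exp (-r) = Real.exp (-r/2) ^ 2 := by
      rw [← Real.exp_nat_mul]; ring_nf
    have hBnn : 0 ≤ Real.sqrt a + Real.sqrt b := by positivity
    have h2 : Real.exp (-r/2) ^ 2 ≤ (Real.sqrt a + Real.sqrt b) ^ 2 := by
      have := hJ.trans hB
      nlinarith [Real.exp_pos (-r/2)]
    have h3 : (Real.sqrt a + Real.sqrt b) ^ 2 ≤ 2 * (a + b) := by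
      have hsa := Real.sq_sqrt (ENNReal.toReal_nonneg : (0:ℝ) ≤ a)
      have hsb := Real.sq_sqrt (ENNReal.toReal_nonneg : (0:ℝ) ≤ b)
      nlinarith [Real.sqrt_nonneg a, Real.sqrt_nonneg b, sq_nonneg (Real.sqrt a - Real.sqrt b)]
    linarith
  -- conclude
  have hne : (ENNReal.ofReal r : ℝ≥0∞) ≠ ⊤ := ENNReal.ofReal_ne_top
  rw [expNeg, if_neg hne]
  have hle : r ≤ (ENNReal.ofReal r).toReal := by
    rcases le_or_gt 0 r with hr0 | hr0
    · rw [ENNReal.toReal_ofReal hr0]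
    · exact le_trans hr0.le ENNReal.toReal_nonneg
  have : Real.exp (-(ENNReal.ofReal r).toReal) ≤ Real.exp (-r) :=
    Real.exp_le_exp.2 (by linarith)
  have := this.trans hmain
  linarith


end BanditLB
end

section
/- Consider the correlated clipped-Gaussian bandit environments with parameter Δ, and fix an arm i ∈ {1,…,K}. Let δ ∈ (0,1) and suppose Δ ≤ 1/30 and T ≥ 32·log(2/δ). Then for any randomised K-armed bandit strategy: (a) ℚ_i( R_T(ℓ^i_{1:T}) ≥ Δ·T/4 ) ≥ ℚ_i( N_i(T) ≤ T/2 ) − δ/2, and (b) E_{ℚ_i}[ R_T(ℓ^i_{1:T}) ] ≥ (7Δ/8)·E_{ℚ_i}[ T − N_i(T) ]. -/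
open MeasureTheory ProbabilityTheory Real
open scoped ENNReal NNReal Classical

namespace BanditLB

variable {K : ℕ} {Ω : Type*} [MeasurableSpace Ω]

section Aux

open Finset

variable {K : ℕ} {Ω : Type*} [MeasurableSpace Ω]

/-! ### clip01 basics -/

lemma clip01_nonneg (x : ℝ) : 0 ≤ clip01 x :=
  le_min one_pos.le (le_max_left _ _)

lemma clip01_le_one (x : ℝ) : clip01 x ≤ 1 := min_le_left _ _

lemma clip01_mono {x y : ℝ} (h : x ≤ y) : clip01 x ≤ clip01 y :=
  min_le_min le_rfl (max_le_max le_rfl h)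

lemma clip01_of_mem {x : ℝ} (h0 : 0 ≤ x) (h1 : x ≤ 1) : clip01 x = x := by
  unfold clip01; rw [max_eq_right h0, min_eq_right h1]

lemma measurable_clip01 : Measurable clip01 :=
  measurable_const.min (measurable_const.max measurable_id)

lemma measurable_clipEnvLoss [NeZero K] (Δ : ℝ) (j : Fin K) :
    Measurable (clipEnvLoss (K := K) Δ j) := by
  refine measurable_pi_lambda _ fun t => measurable_pi_lambda _ fun a => ?_
  simp only [clipEnvLoss]
  split_ifs
  · exact measurable_clip01.comp ((measurable_pi_apply t).sub measurable_const)
  · exact measurable_clip01.comp ((measurable_pi_apply t).sub measurable_const)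
  · exact measurable_clip01.comp (measurable_pi_apply t)

lemma clipEnvLoss_mem [NeZero K] (Δ : ℝ) (i : Fin K) (z : ℕ → ℝ) (t : ℕ) (a : Fin K) :
    clipEnvLoss Δ i z t a ∈ Set.Icc (0:ℝ) 1 := by
  simp only [clipEnvLoss]
  split_ifs <;> exact ⟨clip01_nonneg _, clip01_le_one _⟩

/-- Arm `i` has the pointwise smallest loss in environment `i`. -/
lemma clipEnvLoss_le [NeZero K] {Δ : ℝ} (hΔ : 0 ≤ Δ) (i j : Fin K) (z : ℕ → ℝ) (t : ℕ) :
    clipEnvLoss Δ i z t i ≤ clipEnvLoss Δ i z t j := by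
  simp only [clipEnvLoss]
  by_cases hi : i = 0
  · rw [if_pos hi]
    by_cases hj : j = 0
    · rw [if_pos hj]
    · rw [if_neg hj, if_neg (fun h => hj (h.trans hi)), ]
      exact clip01_mono (by linarith)
  · rw [if_neg hi, if_pos trivial]
    by_cases hj : j = 0
    · rw [if_pos hj]
      exact clip01_mono (by linarith)
    · rw [if_neg hj]
      by_cases hji : j = i
      · rw [if_pos hji]
      · rw [if_neg hji]
        exact clip01_mono (by linarith)

/-- On the good event, every other arm is at least `Δ` worse than arm `i`. -/
lemma clipEnvLoss_gap [NeZero K] {Δ : ℝ} (hΔ0 : 0 ≤ Δ) (hΔ1 : Δ ≤ 1/30) (i j : Fin K)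
    (hj : j ≠ i) (z : ℕ → ℝ) (t : ℕ) (hx : z t ∈ Set.Icc (1/15 : ℝ) (14/15)) :
    Δ ≤ clipEnvLoss Δ i z t j - clipEnvLoss Δ i z t i := by
  obtain ⟨hx0, hx1⟩ := hx
  have e0 : clip01 (z t) = z t := clip01_of_mem (by linarith) (by linarith)
  have e1 : clip01 (z t - Δ) = z t - Δ := clip01_of_mem (by linarith) (by linarith)
  have e2 : clip01 (z t - 2 * Δ) = z t - 2 * Δ := clip01_of_mem (by linarith) (by linarith)
  simp only [clipEnvLoss]
  by_cases hi : i = 0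
  · rw [if_pos hi, if_neg (fun h : j = 0 => hj (h.trans hi.symm)),
      if_neg hj, e0, e1]
    linarith
  · rw [if_neg hi, if_pos trivial]
    by_cases hj0 : j = 0
    · rw [if_pos hj0, e1, e2]; linarith
    · rw [if_neg hj0, if_neg hj, e0, e2]; linarith

/-- The strategy's action in environment `i` at time `t` depends on the noise only
through its first `t` coordinates. -/
lemma act_congr [NeZero K] (S : Strategy K Ω) (Δ : ℝ) (i : Fin K) :
    ∀ (t : ℕ) (z z' : ℕ → ℝ) (ω : Ω), (∀ s < t, z s = z' s) →
      S.act (clipEnvLoss Δ i z) t ω = S.act (clipEnvLoss Δ i z') t ω := by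
  intro t
  induction t using Nat.strong_induction_on with
  | _ t ih =>
    intro z z' ω h
    refine S.adapted _ _ t ω fun s hs => ?_
    have hls : ∀ a, clipEnvLoss Δ i z s a = clipEnvLoss Δ i z' s a := by
      intro a; simp only [clipEnvLoss, h s hs]
    exact ⟨ih s hs z z' ω fun u hu => h u (hu.trans hs), hls _⟩

lemma iInf_clipEnvLoss [NeZero K] {Δ : ℝ} (hΔ : 0 ≤ Δ) (i : Fin K) (z : ℕ → ℝ) (T : ℕ) :
    ⨅ j : Fin K, ∑ t ∈ Finset.range T, clipEnvLoss Δ i z t j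
      = ∑ t ∈ Finset.range T, clipEnvLoss Δ i z t i :=
  le_antisymm (ciInf_le (Set.Finite.bddBelow (Set.finite_range _)) i)
    (le_ciInf fun j => Finset.sum_le_sum fun t _ => clipEnvLoss_le hΔ i j z t)

lemma regret_clipEnv [NeZero K] (S : Strategy K Ω) {Δ : ℝ} (hΔ : 0 ≤ Δ) (i : Fin K)
    (z : ℕ → ℝ) (ω : Ω) (T : ℕ) :
    regret S T (clipEnvLoss Δ i z) ω =
      ∑ t ∈ Finset.range T,
        (clipEnvLoss Δ i z t (S.act (clipEnvLoss Δ i z) t ω) - clipEnvLoss Δ i z t i) := by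
  rw [regret, iInf_clipEnvLoss hΔ, ← Finset.sum_sub_distrib]

lemma regret_clipEnv_nonneg [NeZero K] (S : Strategy K Ω) {Δ : ℝ} (hΔ : 0 ≤ Δ) (i : Fin K)
    (z : ℕ → ℝ) (ω : Ω) (T : ℕ) : 0 ≤ regret S T (clipEnvLoss Δ i z) ω := by
  rw [regret_clipEnv S hΔ i z ω T]
  exact Finset.sum_nonneg fun t _ => sub_nonneg.2 (clipEnvLoss_le hΔ i _ z t)

lemma regret_clipEnv_le [NeZero K] (S : Strategy K Ω) {Δ : ℝ} (hΔ : 0 ≤ Δ) (i : Fin K)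
    (z : ℕ → ℝ) (ω : Ω) (T : ℕ) : regret S T (clipEnvLoss Δ i z) ω ≤ T := by
  rw [regret_clipEnv S hΔ i z ω T]
  calc ∑ t ∈ Finset.range T,
        (clipEnvLoss Δ i z t (S.act (clipEnvLoss Δ i z) t ω) - clipEnvLoss Δ i z t i)
      ≤ ∑ t ∈ Finset.range T, (1:ℝ) := by
        refine Finset.sum_le_sum fun t _ => ?_
        have h1 := clipEnvLoss_mem Δ i z t (S.act (clipEnvLoss Δ i z) t ω)
        have h2 := clipEnvLoss_mem Δ i z t i
        simp only [Set.mem_Icc] at h1 h2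
        linarith [h1.2, h2.1]
    _ = T := by simp

lemma regret_ge_sum [NeZero K] (S : Strategy K Ω) {Δ : ℝ} (hΔ0 : 0 ≤ Δ) (hΔ1 : Δ ≤ 1/30)
    (i : Fin K) (z : ℕ → ℝ) (ω : Ω) (T : ℕ) :
    ∑ t ∈ Finset.range T,
        (if S.act (clipEnvLoss Δ i z) t ω ≠ i ∧ z t ∈ Set.Icc (1/15:ℝ) (14/15)
          then Δ else 0)
      ≤ regret S T (clipEnvLoss Δ i z) ω := by
  rw [regret_clipEnv S hΔ0 i z ω T]
  refine Finset.sum_le_sum fun t _ => ?_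
  split_ifs with h
  · exact clipEnvLoss_gap hΔ0 hΔ1 i _ h.1 z t h.2
  · exact sub_nonneg.2 (clipEnvLoss_le hΔ0 i _ z t)

end Aux
section Aux2

open Finset Real Filter

variable {K : ℕ} {Ω : Type*} [MeasurableSpace Ω]

/-! ### Measurability -/

lemma measurable_eval_act (S : Strategy K Ω) (t : ℕ) :
    Measurable fun p : (ℕ → Fin K → ℝ) × Ω => p.1 t (S.act p.1 t p.2) := by
  have h : (fun p : (ℕ → Fin K → ℝ) × Ω => p.1 t (S.act p.1 t p.2))
      = fun p => ∑ j : Fin K, if S.act p.1 t p.2 = j then p.1 t j else 0 := by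
    funext p
    rw [Finset.sum_ite_eq]
    simp
  rw [h]
  refine Finset.measurable_sum _ fun j _ => Measurable.ite ?_ ?_ measurable_const
  · exact (S.meas_act t) (measurableSet_singleton j)
  · exact (measurable_pi_apply j).comp ((measurable_pi_apply t).comp measurable_fst)

lemma measurable_regret (S : Strategy K Ω) (T : ℕ) :
    Measurable fun p : (ℕ → Fin K → ℝ) × Ω => regret S T p.1 p.2 := by
  unfold regret
  refine Measurable.sub ?_ ?_
  · exact Finset.measurable_sum _ fun t _ => measurable_eval_act S t
  · exact Measurable.iInf fun j => Finset.measurable_sum _ fun t _ =>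
      (measurable_pi_apply j).comp ((measurable_pi_apply t).comp measurable_fst)

lemma measurable_numPlays (S : Strategy K Ω) (i : Fin K) (T : ℕ) :
    Measurable fun p : (ℕ → Fin K → ℝ) × Ω => (numPlays S p.1 i T p.2 : ℝ) := by
  unfold numPlays
  simp_rw [Finset.card_filter]
  push_cast
  refine Finset.measurable_sum _ fun t _ =>
    Measurable.ite ?_ measurable_const measurable_const
  exact (S.meas_act t) (measurableSet_singleton i)

/-! ### Gaussian tail bounds -/

lemma gaussian_tail_Ici (m a : ℝ) (ha : 0 < a) (v : ℝ≥0) (hv : v ≠ 0) :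
    ((gaussianReal m v) (Set.Ici (m + a))).toReal
      ≤ (Real.sqrt (2 * π * v))⁻¹ * ((v : ℝ) / a) * Real.exp (-a ^ 2 / (2 * (v:ℝ))) := by
  have hv' : (0:ℝ) < (v:ℝ) := by
    exact_mod_cast pos_iff_ne_zero.mpr hv
  set c : ℝ := (Real.sqrt (2 * π * v))⁻¹ with hc_def
  have hc : 0 ≤ c := inv_nonneg.2 (Real.sqrt_nonneg _)
  set g : ℝ → ℝ := fun x => -(c * ((v:ℝ) / a)) * Real.exp (-(x - m)^2 / (2*(v:ℝ))) with hg_def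
  set g' : ℝ → ℝ := fun x => c * ((x - m) / a) * Real.exp (-(x - m)^2 / (2*(v:ℝ))) with hg'_def
  have hderiv : ∀ x : ℝ, HasDerivAt g (g' x) x := by
    intro x
    have h0 : HasDerivAt (fun y : ℝ => y - m) 1 x := (hasDerivAt_id x).sub_const m
    have h2 : HasDerivAt (fun y : ℝ => (y - m)^2) (2*(x-m)) x := by
      simpa using h0.fun_pow 2
    have h3 : HasDerivAt (fun y : ℝ => -(y - m)^2 / (2*(v:ℝ)))
        (-(2*(x-m)) / (2*(v:ℝ))) x := h2.neg.div_const _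
    have h4 := (h3.exp).const_mul (-(c * ((v:ℝ) / a)))
    convert h4 using 1
    · rfl
    · rfl
    simp only [hg'_def]
    field_simp
  have hnonneg : ∀ x ∈ Set.Ioi (m + a), 0 ≤ g' x := by
    intro x hx
    have hxm : 0 < x - m := by
      simp only [Set.mem_Ioi] at hx; linarith
    exact mul_nonneg (mul_nonneg hc (div_nonneg hxm.le ha.le)) (Real.exp_nonneg _)
  have htend : Tendsto g atTop (nhds 0) := by
    have ha1 : Tendsto (fun y : ℝ => y - m) atTop atTop := by
      simpa [sub_eq_add_neg] using tendsto_atTop_add_const_right atTop (-m) tendsto_id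
    have ha2 : Tendsto (fun y : ℝ => (y - m)^2) atTop atTop := by
      simpa [pow_two] using ha1.atTop_mul_atTop₀ ha1
    have ha3 : Tendsto (fun y : ℝ => -(y - m)^2 / (2*(v:ℝ))) atTop atBot := by
      apply Tendsto.atBot_div_const (by positivity)
      exact tendsto_neg_atBot_iff.mpr ha2
    have ha4 := (Real.tendsto_exp_atBot.comp ha3).const_mul (-(c * ((v:ℝ) / a)))
    simpa [hg_def, neg_mul, mul_zero] using ha4
  have hcont : ContinuousWithinAt g (Set.Ici (m + a)) (m + a) :=
    (hderiv (m + a)).continuousAt.continuousWithinAt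
  have hderiv' : ∀ x ∈ Set.Ioi (m + a), HasDerivAt g (g' x) x := fun x _ => hderiv x
  have hint : IntegrableOn g' (Set.Ioi (m + a)) :=
    integrableOn_Ioi_deriv_of_nonneg hcont hderiv' hnonneg htend
  have hval : ∫ x in Set.Ioi (m + a), g' x = 0 - g (m + a) :=
    integral_Ioi_of_hasDerivAt_of_nonneg hcont hderiv' hnonneg htend
  rw [gaussianReal_apply_eq_integral m hv (Set.Ici (m + a)),
    ENNReal.toReal_ofReal
      (setIntegral_nonneg measurableSet_Ici fun x _ => gaussianPDFReal_nonneg m v x)]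
  calc ∫ x in Set.Ici (m + a), gaussianPDFReal m v x
      = ∫ x in Set.Ioi (m + a), gaussianPDFReal m v x := integral_Ici_eq_integral_Ioi
    _ ≤ ∫ x in Set.Ioi (m + a), g' x := by
        refine setIntegral_mono_on ((integrable_gaussianPDFReal m v).integrableOn)
          hint measurableSet_Ioi ?_
        intro x hx
        have hxm : a ≤ x - m := by
          simp only [Set.mem_Ioi] at hx; linarith
        have h1 : (1:ℝ) ≤ (x - m)/a := (le_div_iff₀ ha).2 (by linarith)
        have h2 : 0 ≤ c * Real.exp (-(x - m)^2 / (2*(v:ℝ))) :=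
          mul_nonneg hc (Real.exp_nonneg _)
        calc gaussianPDFReal m v x
            = c * Real.exp (-(x - m)^2 / (2*(v:ℝ))) := by rw [gaussianPDFReal]
          _ = (c * Real.exp (-(x - m)^2 / (2*(v:ℝ)))) * 1 := (mul_one _).symm
          _ ≤ (c * Real.exp (-(x - m)^2 / (2*(v:ℝ)))) * ((x - m)/a) :=
              mul_le_mul_of_nonneg_left h1 h2
          _ = g' x := by simp only [hg'_def]; ring
    _ = 0 - g (m + a) := hval
    _ = c * ((v:ℝ)/a) * Real.exp (-a^2/(2*(v:ℝ))) := by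
        simp only [hg_def, add_sub_cancel_left]
        ring

lemma gaussian_tail_Iic (m a : ℝ) (ha : 0 < a) (v : ℝ≥0) (hv : v ≠ 0) :
    ((gaussianReal m v) (Set.Iic (m - a))).toReal
      ≤ (Real.sqrt (2 * π * v))⁻¹ * ((v : ℝ) / a) * Real.exp (-a ^ 2 / (2 * (v:ℝ))) := by
  have hmapneg : (gaussianReal m v).map ((-1 : ℝ) * ·) = gaussianReal (-m) v := by
    rw [gaussianReal_map_const_mul (-1 : ℝ)]
    congr 1
    · ring
    · have h1 : (⟨(-1:ℝ)^2, sq_nonneg _⟩ : ℝ≥0) = 1 := by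
        ext; norm_num
      ext; norm_num
  have hmap : (gaussianReal m v).map (fun x => 2*m - x) = gaussianReal m v := by
    have hcomp : (fun x : ℝ => 2*m - x) = (fun y : ℝ => y + 2*m) ∘ ((-1 : ℝ) * ·) := by
      funext x; simp only [Function.comp_apply]; ring
    rw [hcomp, ← Measure.map_map (measurable_add_const (2*m))
      (measurable_const_mul (-1 : ℝ)), hmapneg, gaussianReal_map_add_const]
    have : -m + 2*m = m := by ring
    rw [this]
  have hset : (fun x : ℝ => 2*m - x) ⁻¹' (Set.Ici (m + a)) = Set.Iic (m - a) := by
    ext x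
    simp only [Set.mem_preimage, Set.mem_Ici, Set.mem_Iic]
    constructor <;> intro h <;> linarith
  have hmeas : Measurable (fun x : ℝ => 2*m - x) := measurable_const.sub measurable_id
  have heq : (gaussianReal m v) (Set.Iic (m - a)) = (gaussianReal m v) (Set.Ici (m + a)) := by
    conv_rhs => rw [← hmap]
    rw [Measure.map_apply hmeas measurableSet_Ici, hset]
  rw [heq]
  exact gaussian_tail_Ici m a ha v hv

/-! ### Numerics for the clipped-Gaussian environment -/

lemma sigSq_pos : 0 < sigSq := by
  have := Real.log_pos one_lt_two
  rw [sigSq]; positivity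

lemma sigSq_le : sigSq ≤ 1/22 := by
  have h := Real.log_two_gt_d9
  rw [sigSq]
  rw [div_le_div_iff₀ (by nlinarith) (by norm_num)]
  nlinarith

lemma coe_sigSq : ((Real.toNNReal sigSq : ℝ≥0) : ℝ) = sigSq :=
  Real.coe_toNNReal _ sigSq_pos.le

lemma sigSq_nnreal_ne : Real.toNNReal sigSq ≠ 0 := by
  simp only [ne_eq, Real.toNNReal_eq_zero, not_le]
  exact sigSq_pos

lemma tail_num :
    (Real.sqrt (2 * π * (Real.toNNReal sigSq : ℝ)))⁻¹
        * ((Real.toNNReal sigSq : ℝ) / (13/30))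
        * Real.exp (-(13/30:ℝ)^2 / (2 * (Real.toNNReal sigSq : ℝ))) ≤ 1/16 := by
  set v : ℝ := (Real.toNNReal sigSq : ℝ) with hvdef
  have hv : v = sigSq := coe_sigSq
  have hvpos : 0 < v := hv ▸ sigSq_pos
  have hv22 : v ≤ 1/22 := hv ▸ sigSq_le
  have hπ : (3:ℝ) < π := Real.pi_gt_three
  have hs : 2 * (v / (13/30)) ≤ Real.sqrt (2 * π * v) := by
    rw [show (2:ℝ) * π * v = (2*π)*v from by ring]
    rw [show Real.sqrt ((2*π)*v) = Real.sqrt ((2*π)*v) from rfl]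
    have h2 : (2 * (v / (13/30)))^2 ≤ (2*π)*v := by nlinarith
    nlinarith [Real.sq_sqrt (by positivity : (0:ℝ) ≤ (2*π)*v),
      Real.sqrt_nonneg ((2*π)*v), sq_nonneg (Real.sqrt ((2*π)*v) - 2 * (v / (13/30)))]
  have h1 : (Real.sqrt (2 * π * v))⁻¹ * (v / (13/30)) ≤ 1/2 := by
    have h2 : (0:ℝ) < v / (13/30) := by positivity
    have h3 : (Real.sqrt (2 * π * v))⁻¹ ≤ (2 * (v/(13/30)))⁻¹ := by
      apply inv_anti₀ (by positivity)
      rw [show (2:ℝ) * π * v = (2*π)*v from by ring] at hs ⊢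
      exact hs
    calc (Real.sqrt (2 * π * v))⁻¹ * (v / (13/30))
        ≤ (2 * (v/(13/30)))⁻¹ * (v/(13/30)) := mul_le_mul_of_nonneg_right h3 h2.le
      _ = 1/2 := by field_simp
  have h4 : Real.exp (-(13/30:ℝ)^2 / (2*v)) ≤ 1/8 := by
    have hL : 0 < Real.log 2 := Real.log_pos one_lt_two
    have harg : -(13/30:ℝ)^2 / (2*v) ≤ -(3 * Real.log 2) := by
      rw [hv, sigSq]
      rw [div_le_iff₀ (by positivity)]
      have hre : -(3*Real.log 2) * (2 * (1 / (32 * Real.log 2))) = -(3/16) := by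
        field_simp
        ring
      rw [hre]
      norm_num
    refine le_trans (Real.exp_le_exp.mpr harg) ?_
    rw [Real.exp_neg]
    have h8 : Real.exp (3 * Real.log 2) = 8 := by
      rw [show (3:ℝ) * Real.log 2 = ((3:ℕ):ℝ) * Real.log 2 by norm_num,
        Real.exp_nat_mul, Real.exp_log two_pos]
      norm_num
    rw [h8]
    norm_num
  calc (Real.sqrt (2 * π * v))⁻¹ * (v / (13/30)) * Real.exp (-(13/30:ℝ)^2 / (2*v))
      ≤ (1/2) * (1/8) := by
        apply mul_le_mul h1 h4 (Real.exp_nonneg _) (by norm_num)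
    _ = 1/16 := by norm_num

lemma prob_bad :
    ((gaussianReal (1/2) (Real.toNNReal sigSq)) ((Set.Icc (1/15:ℝ) (14/15))ᶜ)).toReal
      ≤ 1/8 := by
  set Q := gaussianReal (1/2) (Real.toNNReal sigSq) with hQdef
  have hsub : (Set.Icc (1/15:ℝ) (14/15))ᶜ
      ⊆ Set.Iic ((1:ℝ)/2 - 13/30) ∪ Set.Ici ((1:ℝ)/2 + 13/30) := by
    intro x hx
    simp only [Set.mem_compl_iff, Set.mem_Icc, not_and_or, not_le] at hx
    rcases hx with h | h
    · exact Or.inl (by simp only [Set.mem_Iic]; linarith)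
    · exact Or.inr (by simp only [Set.mem_Ici]; linarith)
  have h1 : Q ((Set.Icc (1/15:ℝ) (14/15))ᶜ)
      ≤ Q (Set.Iic ((1:ℝ)/2 - 13/30)) + Q (Set.Ici ((1:ℝ)/2 + 13/30)) :=
    (measure_mono hsub).trans (measure_union_le _ _)
  have h2 := gaussian_tail_Ici (1/2) (13/30) (by norm_num) (Real.toNNReal sigSq) sigSq_nnreal_ne
  have h3 := gaussian_tail_Iic (1/2) (13/30) (by norm_num) (Real.toNNReal sigSq) sigSq_nnreal_ne
  have h4 := tail_num
  have hne1 : Q (Set.Iic ((1:ℝ)/2 - 13/30)) ≠ ⊤ := measure_ne_top Q _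
  have hne2 : Q (Set.Ici ((1:ℝ)/2 + 13/30)) ≠ ⊤ := measure_ne_top Q _
  calc (Q ((Set.Icc (1/15:ℝ) (14/15))ᶜ)).toReal
      ≤ (Q (Set.Iic ((1:ℝ)/2 - 13/30)) + Q (Set.Ici ((1:ℝ)/2 + 13/30))).toReal :=
        ENNReal.toReal_mono (ENNReal.add_ne_top.2 ⟨hne1, hne2⟩) h1
    _ = (Q (Set.Iic ((1:ℝ)/2 - 13/30))).toReal + (Q (Set.Ici ((1:ℝ)/2 + 13/30))).toReal :=
        ENNReal.toReal_add hne1 hne2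
    _ ≤ 1/16 + 1/16 := add_le_add (h3.trans h4) (h2.trans h4)
    _ = 1/8 := by norm_num

lemma prob_good :
    (7:ℝ)/8 ≤ ((gaussianReal (1/2) (Real.toNNReal sigSq)) (Set.Icc (1/15:ℝ) (14/15))).toReal := by
  set Q := gaussianReal (1/2) (Real.toNNReal sigSq) with hQdef
  haveI : IsProbabilityMeasure Q := by rw [hQdef]; infer_instance
  have hc := measure_add_measure_compl (μ := Q)
    (measurableSet_Icc (a := (1/15:ℝ)) (b := (14/15:ℝ)))
  have hc' := congrArg ENNReal.toReal hc
  rw [ENNReal.toReal_add (measure_ne_top _ _) (measure_ne_top _ _)] at hc'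
  rw [measure_univ, ENNReal.toReal_one] at hc'
  have hb := prob_bad
  rw [← hQdef] at hb
  linarith

end Aux2
section Aux3

open Finset Real Filter

variable {K : ℕ} {Ω : Type*} [MeasurableSpace Ω]

/-! ### Product integrals over `Measure.pi` -/

lemma integral_pi_prod (Q : Measure ℝ) [IsProbabilityMeasure Q] (g : ℝ → ℝ) :
    ∀ n : ℕ, ∫ v : Fin n → ℝ, ∏ s, g (v s) ∂(Measure.pi fun _ : Fin n => Q)
      = (∫ x, g x ∂Q) ^ n := by
  intro n
  induction n with
  | zero =>
    haveI : IsProbabilityMeasure (Measure.pi fun _ : Fin 0 => Q) := by infer_instance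
    simp
  | succ n ih =>
    have hmp := measurePreserving_piFinSuccAbove (fun _ : Fin (n+1) => Q) 0
    set e := MeasurableEquiv.piFinSuccAbove (fun _ : Fin (n+1) => ℝ) 0 with he
    have hfun : ∀ v : Fin (n+1) → ℝ,
        (∏ s, g (v s)) = g ((e v).1) * ∏ j : Fin n, g ((e v).2 j) := by
      intro v
      rw [Fin.prod_univ_succAbove (fun s => g (v s)) 0]
      simp only [he, MeasurableEquiv.piFinSuccAbove, Fin.insertNthEquiv, Fin.removeNth,
        MeasurableEquiv.coe_mk, Equiv.coe_fn_symm_mk]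
    calc ∫ v : Fin (n+1) → ℝ, ∏ s, g (v s) ∂(Measure.pi fun _ => Q)
        = ∫ v : Fin (n+1) → ℝ,
            (fun q : ℝ × (Fin n → ℝ) => g q.1 * ∏ j, g (q.2 j)) (e v)
              ∂(Measure.pi fun _ => Q) := by
          refine integral_congr_ae (Filter.Eventually.of_forall fun v => ?_)
          exact hfun v
      _ = ∫ q : ℝ × (Fin n → ℝ), g q.1 * ∏ j, g (q.2 j)
            ∂(Q.prod (Measure.pi fun _ : Fin n => Q)) :=
          hmp.integral_comp' (fun q : ℝ × (Fin n → ℝ) => g q.1 * ∏ j, g (q.2 j))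
      _ = (∫ x, g x ∂Q) * ∫ w : Fin n → ℝ, ∏ j, g (w j) ∂(Measure.pi fun _ : Fin n => Q) :=
          integral_prod_mul g (fun w : Fin n → ℝ => ∏ j, g (w j))
      _ = (∫ x, g x ∂Q) ^ (n+1) := by rw [ih, pow_succ]; ring

/-! ### Chernoff bound for the number of bad rounds -/

lemma chernoff_bad (Q : Measure ℝ) [IsProbabilityMeasure Q] {γ : Measure (ℕ → ℝ)}
    (hγ : IsIIDSeq γ Q) {G : Set ℝ} (hG : MeasurableSet G)
    (hp : (Q Gᶜ).toReal ≤ 1/8) (T : ℕ) :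
    (γ {z | (T:ℝ)/4 ≤ ∑ s ∈ Finset.range T, Set.indicator Gᶜ (fun _ => (1:ℝ)) (z s)}).toReal
      ≤ Real.exp (-(T:ℝ)/32) := by
  haveI := hγ.1
  set X : (Fin T → ℝ) → ℝ := fun v => ∑ s, Set.indicator Gᶜ (fun _ => (1:ℝ)) (v s) with hX
  have hXmeas : Measurable X :=
    Finset.measurable_sum _ fun s _ =>
      (measurable_const.indicator hG.compl).comp (measurable_pi_apply s)
  have hcard : ∀ z : ℕ → ℝ,
      ∑ s ∈ Finset.range T, Set.indicator Gᶜ (fun _ => (1:ℝ)) (z s)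
        = X (fun s : Fin T => z s) := by
    intro z
    rw [hX]
    exact (Fin.sum_univ_eq_sum_range (fun s => Set.indicator Gᶜ (fun _ => (1:ℝ)) (z s)) T).symm
  have hXset : MeasurableSet {v : Fin T → ℝ | (T:ℝ)/4 ≤ X v} :=
    measurableSet_le measurable_const hXmeas
  have htrunc : Measurable (fun z : ℕ → ℝ => fun s : Fin T => z s) :=
    measurable_pi_lambda _ fun s => measurable_pi_apply _
  have hev : {z : ℕ → ℝ | (T:ℝ)/4 ≤ ∑ s ∈ Finset.range T, Set.indicator Gᶜ (fun _ => (1:ℝ)) (z s)}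
      = (fun z : ℕ → ℝ => fun s : Fin T => z s) ⁻¹' {v | (T:ℝ)/4 ≤ X v} := by
    ext z
    simp only [Set.mem_setOf_eq, Set.mem_preimage, hcard z]
  rw [hev, ← Measure.map_apply htrunc hXset, hγ.2 T]
  set piT : Measure (Fin T → ℝ) := Measure.pi fun _ : Fin T => Q with hpiT
  haveI : IsProbabilityMeasure piT := by rw [hpiT]; infer_instance
  set h : ℝ → ℝ := fun x => Real.exp (Real.log 3 * Set.indicator Gᶜ (fun _ => (1:ℝ)) x) with hh
  have hprod : ∀ v : Fin T → ℝ, Real.exp (Real.log 3 * X v) = ∏ s, h (v s) := by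
    intro v
    rw [hX]
    dsimp only
    rw [Finset.mul_sum, Real.exp_sum]
  have hhval : h = fun x => Set.indicator Gᶜ (fun _ => (2:ℝ)) x + 1 := by
    funext x
    rw [hh]
    dsimp only
    by_cases hx : x ∈ Gᶜ
    · rw [Set.indicator_of_mem hx, Set.indicator_of_mem hx, mul_one,
        Real.exp_log (by norm_num : (0:ℝ) < 3)]
      norm_num
    · rw [Set.indicator_of_notMem hx, Set.indicator_of_notMem hx, mul_zero, Real.exp_zero]
      norm_num
  have hhle : ∀ x, h x ≤ 3 := by
    intro x
    rw [hhval]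
    dsimp only
    by_cases hx : x ∈ Gᶜ
    · rw [Set.indicator_of_mem hx]; norm_num
    · rw [Set.indicator_of_notMem hx]; norm_num
  have hhnn : ∀ x, 0 ≤ h x := fun x => Real.exp_nonneg _
  have hint : Integrable (fun v => Real.exp (Real.log 3 * X v)) piT := by
    refine Integrable.mono' (integrable_const ((3:ℝ)^T))
      ((Real.measurable_exp.comp (hXmeas.const_mul _)).aestronglyMeasurable)
      (Filter.Eventually.of_forall fun v => ?_)
    rw [Real.norm_eq_abs, abs_of_nonneg (Real.exp_nonneg _), hprod v]
    calc ∏ s, h (v s) ≤ ∏ _s : Fin T, (3:ℝ) :=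
          Finset.prod_le_prod (fun s _ => hhnn _) (fun s _ => hhle _)
      _ = (3:ℝ)^T := by simp
  have hchern := ProbabilityTheory.measure_ge_le_exp_mul_mgf (μ := piT) (X := X)
    ((T:ℝ)/4) (Real.log_nonneg (by norm_num : (1:ℝ) ≤ 3)) hint
  have hmgf : ProbabilityTheory.mgf X piT (Real.log 3) = (∫ x, h x ∂Q) ^ T := by
    rw [ProbabilityTheory.mgf]
    calc ∫ v, Real.exp (Real.log 3 * X v) ∂piT
        = ∫ v, ∏ s, h (v s) ∂piT := integral_congr_ae (Filter.Eventually.of_forall hprod)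
      _ = (∫ x, h x ∂Q) ^ T := integral_pi_prod Q h T
  have hQint : ∫ x, h x ∂Q = 2 * (Q Gᶜ).toReal + 1 := by
    rw [hhval]
    rw [integral_add ((integrable_const (2:ℝ)).indicator hG.compl) (integrable_const 1)]
    rw [integral_indicator_const (2:ℝ) hG.compl, integral_const]
    simp [smul_eq_mul, mul_comm]; rfl
  have hQle : ∫ x, h x ∂Q ≤ 5/4 := by rw [hQint]; linarith
  have hQnonneg : 0 ≤ ∫ x, h x ∂Q := by
    rw [hQint]; positivity
  calc (piT {v | (T:ℝ)/4 ≤ X v}).toReal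
      ≤ Real.exp (-Real.log 3 * ((T:ℝ)/4)) * ProbabilityTheory.mgf X piT (Real.log 3) := hchern
    _ ≤ Real.exp (-Real.log 3 * ((T:ℝ)/4)) * (5/4:ℝ)^T := by
        refine mul_le_mul_of_nonneg_left ?_ (Real.exp_nonneg _)
        rw [hmgf]
        exact pow_le_pow_left₀ hQnonneg hQle T
    _ = Real.exp (-Real.log 3 * ((T:ℝ)/4) + (T:ℝ) * Real.log (5/4)) := by
        rw [Real.exp_add]
        congr 1
        rw [show (T:ℝ) * Real.log (5/4) = ((T:ℕ):ℝ) * Real.log (5/4) by norm_num,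
          Real.exp_nat_mul, Real.exp_log (by norm_num : (0:ℝ) < 5/4)]
    _ ≤ Real.exp (-(T:ℝ)/32) := by
        apply Real.exp_le_exp.mpr
        have hkey : Real.log 3 - 4 * Real.log (5/4) = Real.log (768/625) := by
          rw [show (4:ℝ) * Real.log ((5:ℝ)/4) = Real.log (((5:ℝ)/4)^(4:ℕ)) by
            rw [Real.log_pow]; push_cast; ring]
          rw [← Real.log_div (by norm_num) (by positivity)]
          norm_num
        have h625 : Real.log ((625:ℝ)/768) ≤ 625/768 - 1 :=
          Real.log_le_sub_one_of_pos (by norm_num)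
        have hinv : Real.log ((625:ℝ)/768) = -Real.log ((768:ℝ)/625) := by
          rw [show (625:ℝ)/768 = ((768:ℝ)/625)⁻¹ by norm_num, Real.log_inv]
        have hge : (1:ℝ)/8 ≤ Real.log ((768:ℝ)/625) := by
          rw [hinv] at h625
          linarith
        have hcoef : Real.log (5/4) - Real.log 3 / 4 ≤ -(1:ℝ)/32 := by linarith
        have hTnn : (0:ℝ) ≤ (T:ℝ) := Nat.cast_nonneg T
        nlinarith

end Aux3
section Aux4

open Finset Real Filter

variable {K : ℕ} {Ω : Type*} [MeasurableSpace Ω]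

/-- The action at round `t` is independent of the `t`-th noise coordinate. -/
lemma indep_act_coord [NeZero K] (S : Strategy K Ω) (Δ : ℝ) (i : Fin K)
    (Q : Measure ℝ) [IsProbabilityMeasure Q] {γ : Measure (ℕ → ℝ)}
    (hγ : IsIIDSeq γ Q) (t : ℕ) {G : Set ℝ} (hG : MeasurableSet G) :
    γ.prod S.μ {p : (ℕ → ℝ) × Ω | S.act (clipEnvLoss Δ i p.1) t p.2 ≠ i ∧ p.1 t ∈ G}
      = Q G * γ.prod S.μ {p : (ℕ → ℝ) × Ω | S.act (clipEnvLoss Δ i p.1) t p.2 ≠ i} := by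
  haveI := hγ.1
  haveI := S.prob
  -- extension of a finite tuple to an infinite sequence
  set ext : (Fin t → ℝ) → ℕ → ℝ := fun v s => if h : s < t then v ⟨s, h⟩ else 0 with hext
  have hextmeas : Measurable ext := by
    refine measurable_pi_lambda _ fun s => ?_
    by_cases h : s < t
    · simp only [hext, dif_pos h]
      exact measurable_pi_apply _
    · simp only [hext, dif_neg h]
      exact measurable_const
  set E : Set ((Fin t → ℝ) × Ω) :=
    {q | S.act (clipEnvLoss Δ i (ext q.1)) t q.2 ≠ i} with hE
  have hEmeas : MeasurableSet E := by
    have hm : Measurable fun q : (Fin t → ℝ) × Ω =>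
        S.act (clipEnvLoss Δ i (ext q.1)) t q.2 :=
      (S.meas_act t).comp
        ((((measurable_clipEnvLoss Δ i).comp (hextmeas.comp measurable_fst))).prodMk
          measurable_snd)
    exact hm (measurableSet_singleton i).compl
  have hkey : ∀ (z : ℕ → ℝ) (ω : Ω), S.act (clipEnvLoss Δ i z) t ω
      = S.act (clipEnvLoss Δ i (ext fun s : Fin t => z s)) t ω := by
    intro z ω
    refine act_congr S Δ i t _ _ ω fun s hs => ?_
    simp only [hext, dif_pos hs]
  set Φ : (ℕ → ℝ) × Ω → ℝ × ((Fin t → ℝ) × Ω) :=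
    fun p => (p.1 t, ((fun s : Fin t => p.1 s), p.2)) with hΦ
  have htruncmeas : Measurable fun z : ℕ → ℝ => fun s : Fin t => z s :=
    measurable_pi_lambda _ fun s => measurable_pi_apply _
  have hΦmeas : Measurable Φ :=
    ((measurable_pi_apply t).comp measurable_fst).prodMk
      ((htruncmeas.comp measurable_fst).prodMk measurable_snd)
  -- the law of Φ
  have hψ : γ.map (fun z => (z t, fun s : Fin t => z (s:ℕ)))
      = Q.prod (Measure.pi fun _ : Fin t => Q) := by
    have h1 : γ.map (fun z (s : Fin (t+1)) => z (s:ℕ)) = Measure.pi fun _ : Fin (t+1) => Q :=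
      hγ.2 (t+1)
    have h2 := (measurePreserving_piFinSuccAbove (fun _ : Fin (t+1) => Q) (Fin.last t)).map_eq
    have hcomp : (fun z : ℕ → ℝ => (z t, fun s : Fin t => z (s:ℕ)))
        = (MeasurableEquiv.piFinSuccAbove (fun _ : Fin (t+1) => ℝ) (Fin.last t))
            ∘ (fun z (s : Fin (t+1)) => z (s:ℕ)) := by
      funext z
      simp only [Function.comp_apply, MeasurableEquiv.piFinSuccAbove,
        Fin.insertNthEquiv, Fin.removeNth, MeasurableEquiv.coe_mk, Equiv.coe_fn_symm_mk]
      refine Prod.ext ?_ ?_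
      · simp [Fin.val_last]
      · funext j
        simp [Fin.init, Fin.succAbove_last, Fin.coe_castSucc]
    have htrunc1 : Measurable fun z : ℕ → ℝ => fun s : Fin (t+1) => z (s:ℕ) :=
      measurable_pi_lambda _ fun s => measurable_pi_apply _
    rw [hcomp, ← Measure.map_map (MeasurableEquiv.measurable _) htrunc1, h1, h2]
  have hmap : (γ.prod S.μ).map Φ
      = Q.prod ((Measure.pi fun _ : Fin t => Q).prod S.μ) := by
    have hΦcomp : Φ = (MeasurableEquiv.prodAssoc :
          ((ℝ × (Fin t → ℝ)) × Ω) ≃ᵐ (ℝ × ((Fin t → ℝ) × Ω)))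
        ∘ (Prod.map (fun z : ℕ → ℝ => (z t, fun s : Fin t => z (s:ℕ))) (id : Ω → Ω)) := by
      funext p
      rfl
    have hψmeas : Measurable (fun z : ℕ → ℝ => (z t, fun s : Fin t => z (s:ℕ))) :=
      (measurable_pi_apply t).prodMk htruncmeas
    rw [hΦcomp, ← Measure.map_map (MeasurableEquiv.measurable _) (hψmeas.prodMap measurable_id),
      ← Measure.map_prod_map _ _ hψmeas measurable_id, Measure.map_id, hψ,
      Measure.prodAssoc_prod]
  -- the two events as preimages
  have hset1 : {p : (ℕ → ℝ) × Ω | S.act (clipEnvLoss Δ i p.1) t p.2 ≠ i ∧ p.1 t ∈ G}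
      = Φ ⁻¹' (G ×ˢ E) := by
    ext p
    simp only [Set.mem_setOf_eq, Set.mem_preimage, hΦ, Set.mem_prod, hE, hkey p.1 p.2]
    tauto
  have hset2 : {p : (ℕ → ℝ) × Ω | S.act (clipEnvLoss Δ i p.1) t p.2 ≠ i}
      = Φ ⁻¹' (Set.univ ×ˢ E) := by
    ext p
    simp only [Set.mem_setOf_eq, Set.mem_preimage, hΦ, Set.mem_prod, hE, hkey p.1 p.2,
      Set.mem_univ, true_and]
  rw [hset1, hset2, ← Measure.map_apply hΦmeas (hG.prod hEmeas),
    ← Measure.map_apply hΦmeas (MeasurableSet.univ.prod hEmeas), hmap,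
    Measure.prod_prod, Measure.prod_prod, measure_univ, one_mul]

end Aux4

/-- Lemma 3 of the paper: in the correlated clipped-Gaussian
environment `ℚ_i` with gap parameter `Δ ≤ 1/30`, if `T ≥ 32·log(2/δ)` then
(a) `ℚ_i(R_T ≥ ΔT/4) ≥ ℚ_i(N_i(T) ≤ T/2) − δ/2`, and
(b) `E_{ℚ_i}[R_T] ≥ (7Δ/8)·E_{ℚ_i}[T − N_i(T)]`.
(Arm `0` plays the role of the paper's arm `1`.) -/
theorem clipped_gaussian_environment_regret
    {K T : ℕ} (hK : 2 ≤ K) [NeZero K]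
    {Ω : Type*} [MeasurableSpace Ω] (S : Strategy K Ω)
    {Δ δ : ℝ} (hΔ : Δ ∈ Set.Icc (0:ℝ) (1/30)) (hδ : δ ∈ Set.Ioo (0:ℝ) 1)
    (hT : (T : ℝ) ≥ 32 * Real.log (2 / δ))
    (i : Fin K)
    (γ : Measure (ℕ → ℝ)) (hγ : IsIIDSeq γ (gaussianReal (1/2) (Real.toNNReal sigSq))) :
    ((joint S (clipEnv Δ i γ)) {pr | regret S T pr.1 pr.2 ≥ Δ * T / 4}).toReal ≥
        ((joint S (clipEnv Δ i γ))
            {pr | (numPlays S pr.1 i T pr.2 : ℝ) ≤ (T : ℝ) / 2}).toReal - δ / 2 ∧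
      ∫ pr, regret S T pr.1 pr.2 ∂(joint S (clipEnv Δ i γ)) ≥
        (7 * Δ / 8) *
          ∫ pr, ((T : ℝ) - numPlays S pr.1 i T pr.2) ∂(joint S (clipEnv Δ i γ)) := by
  classical
  obtain ⟨hΔ0, hΔ1⟩ := hΔ
  obtain ⟨hδ0, hδ1⟩ := hδ
  haveI hγP := hγ.1
  haveI hSP := S.prob
  set Q : Measure ℝ := gaussianReal (1/2) (Real.toNNReal sigSq) with hQ
  haveI : IsProbabilityMeasure Q := by rw [hQ]; infer_instance
  set L : (ℕ → ℝ) → ℕ → Fin K → ℝ := clipEnvLoss Δ i with hLdef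
  set ν : Measure ((ℕ → ℝ) × Ω) := γ.prod S.μ with hν
  haveI : IsProbabilityMeasure ν := by rw [hν]; infer_instance
  have hLmeas : Measurable L := measurable_clipEnvLoss Δ i
  have hPmeas : Measurable (Prod.map L (id : Ω → Ω)) := hLmeas.prodMap measurable_id
  have hjoint : joint S (clipEnv Δ i γ) = ν.map (Prod.map L id) := by
    rw [joint, clipEnv, hν, ← Measure.map_prod_map _ _ hLmeas measurable_id, Measure.map_id]
  have hregM := measurable_regret S T
  have hnumM := measurable_numPlays S i T
  have hA1 : MeasurableSet {pr : (ℕ → Fin K → ℝ) × Ω | regret S T pr.1 pr.2 ≥ Δ * T / 4} :=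
    measurableSet_le measurable_const hregM
  have hA2 : MeasurableSet
      {pr : (ℕ → Fin K → ℝ) × Ω | (numPlays S pr.1 i T pr.2 : ℝ) ≤ (T:ℝ)/2} :=
    measurableSet_le hnumM measurable_const
  set Gd : Set ℝ := Set.Icc (1/15:ℝ) (14/15) with hGd
  have hGdM : MeasurableSet Gd := measurableSet_Icc
  have hjmA1 : (joint S (clipEnv Δ i γ)) {pr | regret S T pr.1 pr.2 ≥ Δ * T / 4}
      = ν {p : (ℕ → ℝ) × Ω | regret S T (L p.1) p.2 ≥ Δ * T / 4} := by
    rw [hjoint, Measure.map_apply hPmeas hA1]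
    rfl
  have hjmA2 : (joint S (clipEnv Δ i γ)) {pr | (numPlays S pr.1 i T pr.2 : ℝ) ≤ (T:ℝ)/2}
      = ν {p : (ℕ → ℝ) × Ω | (numPlays S (L p.1) i T p.2 : ℝ) ≤ (T:ℝ)/2} := by
    rw [hjoint, Measure.map_apply hPmeas hA2]
    rfl
  have hactM : ∀ t, Measurable fun p : (ℕ → ℝ) × Ω => S.act (L p.1) t p.2 := fun t =>
    (S.meas_act t).comp ((hLmeas.comp measurable_fst).prodMk measurable_snd)
  constructor
  · -- part (a)
    set Bad : Set (ℕ → ℝ) :=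
      {z | (T:ℝ)/4 ≤ ∑ s ∈ Finset.range T, Set.indicator Gdᶜ (fun _ => (1:ℝ)) (z s)} with hBad
    have hpb : (Q Gdᶜ).toReal ≤ 1/8 := by rw [hQ, hGd]; exact prob_bad
    have hBadBound : (γ Bad).toReal ≤ δ / 2 := by
      have h1 := chernoff_bad Q hγ hGdM hpb T
      have h2 : Real.exp (-(T:ℝ)/32) ≤ δ/2 := by
        have hlog : Real.log (2/δ) = -Real.log (δ/2) := by
          rw [show (2:ℝ)/δ = (δ/2)⁻¹ by rw [inv_div], Real.log_inv]
        have h3 : -(T:ℝ)/32 ≤ Real.log (δ/2) := by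
          have h4 : 32 * Real.log (2/δ) ≤ (T:ℝ) := hT
          rw [hlog] at h4
          linarith
        calc Real.exp (-(T:ℝ)/32) ≤ Real.exp (Real.log (δ/2)) := Real.exp_le_exp.mpr h3
          _ = δ/2 := Real.exp_log (by positivity)
      rw [hBad]
      exact h1.trans h2
    have hincl : {p : (ℕ → ℝ) × Ω | (numPlays S (L p.1) i T p.2 : ℝ) ≤ (T:ℝ)/2}
        ⊆ {p : (ℕ → ℝ) × Ω | regret S T (L p.1) p.2 ≥ Δ * T / 4} ∪ (Bad ×ˢ Set.univ) := by
      rintro ⟨z, ω⟩ hp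
      simp only [Set.mem_setOf_eq] at hp
      by_cases hb : z ∈ Bad
      · exact Or.inr ⟨hb, Set.mem_univ _⟩
      · left
        simp only [Set.mem_setOf_eq]
        set A := (Finset.range T).filter fun t' => S.act (L z) t' ω ≠ i ∧ z t' ∈ Gd with hA
        set B := (Finset.range T).filter fun t' => z t' ∉ Gd with hB
        set N := (Finset.range T).filter fun t' => S.act (L z) t' ω = i with hN
        set Nc := (Finset.range T).filter fun t' => ¬ (S.act (L z) t' ω = i) with hNc
        have hNN : N.card + Nc.card = T := by
          rw [hN, hNc, Finset.card_filter_add_card_filter_not, Finset.card_range]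
        have hsub : Nc ⊆ A ∪ B := by
          intro t' ht'
          simp only [hNc, Finset.mem_filter, Finset.mem_range] at ht'
          by_cases hg : z t' ∈ Gd
          · refine Finset.mem_union_left _ ?_
            simp only [hA, Finset.mem_filter, Finset.mem_range]
            exact ⟨ht'.1, ht'.2, hg⟩
          · refine Finset.mem_union_right _ ?_
            simp only [hB, Finset.mem_filter, Finset.mem_range]
            exact ⟨ht'.1, hg⟩
        have hcard1 : Nc.card ≤ A.card + B.card :=
          (Finset.card_le_card hsub).trans (Finset.card_union_le _ _)
        have hBind : (B.card : ℝ)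
            = ∑ s ∈ Finset.range T, Set.indicator Gdᶜ (fun _ => (1:ℝ)) (z s) := by
          rw [hB, Finset.card_filter]
          push_cast
          refine Finset.sum_congr rfl fun t' _ => ?_
          by_cases hgt : z t' ∈ Gd
          · rw [if_neg (not_not_intro hgt),
              Set.indicator_of_notMem (show z t' ∉ Gdᶜ from not_not_intro hgt)]
          · rw [if_pos hgt, Set.indicator_of_mem (show z t' ∈ Gdᶜ from hgt)]
        have hBsmall : (B.card : ℝ) < (T:ℝ)/4 := by
          by_contra hcon
          push_neg at hcon
          refine hb ?_
          rw [hBad]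
          simp only [Set.mem_setOf_eq]
          rw [← hBind]
          exact hcon
        have hNval : (numPlays S (L z) i T ω : ℝ) = (N.card : ℝ) := rfl
        have hNN' : (N.card : ℝ) + (Nc.card : ℝ) = (T:ℝ) := by exact_mod_cast hNN
        have hcard1' : (Nc.card : ℝ) ≤ (A.card : ℝ) + (B.card : ℝ) := by exact_mod_cast hcard1
        have hAcard : (T:ℝ)/4 ≤ (A.card : ℝ) := by
          rw [hNval] at hp
          linarith
        have hsum := regret_ge_sum S hΔ0 hΔ1 i z ω T
        have hsumval : ∑ t' ∈ Finset.range T,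
            (if S.act (clipEnvLoss Δ i z) t' ω ≠ i ∧ z t' ∈ Set.Icc (1/15:ℝ) (14/15)
              then Δ else 0) = Δ * (A.card:ℝ) := by
          rw [Finset.sum_ite, Finset.sum_const, Finset.sum_const_zero, add_zero,
            nsmul_eq_mul, mul_comm]
        rw [hsumval] at hsum
        calc Δ * ↑T / 4 = Δ * ((T:ℝ)/4) := by ring
          _ ≤ Δ * (A.card : ℝ) := mul_le_mul_of_nonneg_left hAcard hΔ0
          _ ≤ regret S T (L z) ω := hsum
    have hνBad : ν (Bad ×ˢ Set.univ) = γ Bad := by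
      rw [hν, Measure.prod_prod, measure_univ, mul_one]
    have hm1 : ν {p : (ℕ → ℝ) × Ω | (numPlays S (L p.1) i T p.2 : ℝ) ≤ (T:ℝ)/2}
        ≤ ν {p : (ℕ → ℝ) × Ω | regret S T (L p.1) p.2 ≥ Δ * T / 4} + γ Bad := by
      refine (measure_mono hincl).trans ?_
      refine (measure_union_le _ _).trans ?_
      rw [hνBad]
    have hfin1 : ν {p : (ℕ → ℝ) × Ω | regret S T (L p.1) p.2 ≥ Δ * T / 4} ≠ ⊤ :=
      measure_ne_top _ _
    have hfin2 : γ Bad ≠ ⊤ := measure_ne_top _ _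
    have h3 : (ν {p : (ℕ → ℝ) × Ω | (numPlays S (L p.1) i T p.2 : ℝ) ≤ (T:ℝ)/2}).toReal
        ≤ (ν {p : (ℕ → ℝ) × Ω | regret S T (L p.1) p.2 ≥ Δ * T / 4}).toReal
          + (γ Bad).toReal := by
      have h4 := ENNReal.toReal_mono (ENNReal.add_ne_top.2 ⟨hfin1, hfin2⟩) hm1
      rwa [ENNReal.toReal_add hfin1 hfin2] at h4
    rw [hjmA1, hjmA2]
    linarith
  · -- part (b)
    set D : ℕ → Set ((ℕ → ℝ) × Ω) := fun t => {p | S.act (L p.1) t p.2 ≠ i} with hD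
    have hDM : ∀ t, MeasurableSet (D t) := fun t =>
      (hactM t) (measurableSet_singleton i).compl
    set C : ℕ → Set ((ℕ → ℝ) × Ω) :=
      fun t => {p | S.act (L p.1) t p.2 ≠ i ∧ p.1 t ∈ Gd} with hC
    have hGdpre : ∀ t : ℕ, MeasurableSet {p : (ℕ → ℝ) × Ω | p.1 t ∈ Gd} := by
      intro t
      have hrfl : {p : (ℕ → ℝ) × Ω | p.1 t ∈ Gd}
          = (fun p : (ℕ → ℝ) × Ω => p.1 t) ⁻¹' Gd := rfl
      rw [hrfl]
      exact ((measurable_pi_apply t).comp measurable_fst) hGdM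
    have hCM : ∀ t, MeasurableSet (C t) := fun t =>
      ((hactM t) (measurableSet_singleton i).compl).inter (hGdpre t)
    have hCeq : ∀ t, ν (C t) = Q Gd * ν (D t) := fun t =>
      indep_act_coord S Δ i Q hγ t hGdM
    have hint1 : ∫ pr, regret S T pr.1 pr.2 ∂(joint S (clipEnv Δ i γ))
        = ∫ p, regret S T (L p.1) p.2 ∂ν := by
      rw [hjoint, integral_map hPmeas.aemeasurable hregM.aestronglyMeasurable]
      rfl
    have hint2 : ∫ pr, ((T:ℝ) - numPlays S pr.1 i T pr.2) ∂(joint S (clipEnv Δ i γ))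
        = ∫ p, ((T:ℝ) - numPlays S (L p.1) i T p.2) ∂ν := by
      rw [hjoint, integral_map hPmeas.aemeasurable
        (f := fun pr : (ℕ → Fin K → ℝ) × Ω => (T:ℝ) - numPlays S pr.1 i T pr.2)
        (measurable_const.sub hnumM).aestronglyMeasurable]
      rfl
    have hTnum : ∀ p : (ℕ → ℝ) × Ω, ((T:ℝ) - numPlays S (L p.1) i T p.2)
        = ∑ t ∈ Finset.range T, Set.indicator (D t) (fun _ => (1:ℝ)) p := by
      intro p
      have h1 : numPlays S (L p.1) i T p.2
          + (((Finset.range T).filter fun t => ¬ (S.act (L p.1) t p.2 = i)).card) = T := by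
        rw [numPlays, Finset.card_filter_add_card_filter_not, Finset.card_range]
      have h2 : ((((Finset.range T).filter fun t => ¬ (S.act (L p.1) t p.2 = i)).card) : ℝ)
          = ∑ t ∈ Finset.range T, Set.indicator (D t) (fun _ => (1:ℝ)) p := by
        rw [Finset.card_filter]
        push_cast
        refine Finset.sum_congr rfl fun t _ => ?_
        by_cases hh : S.act (L p.1) t p.2 = i
        · simp [Set.indicator_apply, hD, hh]
        · simp [Set.indicator_apply, hD, hh]
      have h1' : ((numPlays S (L p.1) i T p.2 : ℕ) : ℝ)
          + ((((Finset.range T).filter fun t => ¬ (S.act (L p.1) t p.2 = i)).card) : ℝ)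
          = (T:ℝ) := by exact_mod_cast congrArg (Nat.cast (R := ℝ)) h1
      linarith [h2, h1']
    have hDint : ∀ t, Integrable (Set.indicator (D t) (fun _ => (1:ℝ))) ν :=
      fun t => (integrable_const (1:ℝ)).indicator (hDM t)
    have hRHS : ∫ p, ((T:ℝ) - numPlays S (L p.1) i T p.2) ∂ν
        = ∑ t ∈ Finset.range T, (ν (D t)).toReal := by
      rw [integral_congr_ae (Filter.Eventually.of_forall hTnum),
        integral_finset_sum _ (fun t _ => (hDint t))]
      refine Finset.sum_congr rfl fun t _ => ?_
      exact integral_indicator_one (hDM t)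
    have hg : ∀ p : (ℕ → ℝ) × Ω,
        ∑ t ∈ Finset.range T, Set.indicator (C t) (fun _ => Δ) p
          ≤ regret S T (L p.1) p.2 := by
      intro p
      have hsum := regret_ge_sum S hΔ0 hΔ1 i p.1 p.2 T
      refine le_trans (le_of_eq ?_) hsum
      refine Finset.sum_congr rfl fun t _ => ?_
      by_cases hh : S.act (clipEnvLoss Δ i p.1) t p.2 ≠ i ∧ p.1 t ∈ Set.Icc (1/15:ℝ) (14/15)
      · rw [Set.indicator_of_mem (by exact hh), if_pos hh]
      · rw [Set.indicator_of_notMem (by exact hh), if_neg hh]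
    have hCint : ∀ t, Integrable (Set.indicator (C t) (fun _ => Δ)) ν :=
      fun t => (integrable_const Δ).indicator (hCM t)
    have hRegInt : Integrable (fun p : (ℕ → ℝ) × Ω => regret S T (L p.1) p.2) ν := by
      refine Integrable.mono' (integrable_const (T:ℝ))
        ((hregM.comp hPmeas).aestronglyMeasurable)
        (Filter.Eventually.of_forall fun p => ?_)
      rw [Real.norm_eq_abs, abs_of_nonneg (regret_clipEnv_nonneg S hΔ0 i p.1 p.2 T)]
      exact regret_clipEnv_le S hΔ0 i p.1 p.2 T
    have hLHS : ∑ t ∈ Finset.range T, Δ * (ν (C t)).toReal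
        ≤ ∫ p, regret S T (L p.1) p.2 ∂ν := by
      have h1 : ∫ p, (∑ t ∈ Finset.range T, Set.indicator (C t) (fun _ => Δ) p) ∂ν
          ≤ ∫ p, regret S T (L p.1) p.2 ∂ν :=
        integral_mono (integrable_finset_sum _ (fun t _ => hCint t)) hRegInt hg
      rw [integral_finset_sum _ (fun t _ => hCint t)] at h1
      refine le_trans (le_of_eq ?_) h1
      refine Finset.sum_congr rfl fun t _ => ?_
      rw [integral_indicator_const Δ (hCM t), smul_eq_mul, mul_comm]; rfl
    have hq : (7:ℝ)/8 ≤ (Q Gd).toReal := by rw [hQ, hGd]; exact prob_good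
    have hqle : (Q Gd).toReal ≤ 1 := by
      have := prob_le_one (μ := Q) (s := Gd)
      exact ENNReal.toReal_le_of_le_ofReal one_pos.le (by simpa using this)
    have hCval : ∀ t, (ν (C t)).toReal = (Q Gd).toReal * (ν (D t)).toReal := by
      intro t; rw [hCeq t, ENNReal.toReal_mul]
    rw [hint1, hint2, hRHS]
    have hSdnn : 0 ≤ ∑ t ∈ Finset.range T, (ν (D t)).toReal :=
      Finset.sum_nonneg fun t _ => ENNReal.toReal_nonneg
    have hsumeq : ∑ t ∈ Finset.range T, Δ * (ν (C t)).toReal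
        = Δ * (Q Gd).toReal * ∑ t ∈ Finset.range T, (ν (D t)).toReal := by
      rw [Finset.mul_sum]
      refine Finset.sum_congr rfl fun t _ => ?_
      rw [hCval t]
      ring
    rw [hsumeq] at hLHS
    have hstep : (7 * Δ / 8) * ∑ t ∈ Finset.range T, (ν (D t)).toReal
        ≤ Δ * (Q Gd).toReal * ∑ t ∈ Finset.range T, (ν (D t)).toReal := by
      have h5 : 7 * Δ / 8 ≤ Δ * (Q Gd).toReal := by nlinarith
      exact mul_le_mul_of_nonneg_right h5 hSdnn
    linarith

end BanditLB
end

section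
/- Let K ≥ 2, T ≥ max(32K, 601), and α ∈ [ max(2c₁·log T, 8K)/T , 1/4 ], where c₁ = (4/9)²·(3√5 + 1)². Then for any randomised K-armed bandit strategy over T rounds, sup over loss sequences ℓ_{1:T} ∈ V_{α,T} of E[R_T(ℓ_{1:T})] ≥ √(α·T·K)/25, where the expectation is taken with respect to the internal randomisation of the strategy. -/
open MeasureTheory ProbabilityTheory Real
open scoped ENNReal NNReal Classical

namespace BanditLB

variable {K : ℕ} {Ω : Type*} [MeasurableSpace Ω]

/-- The quadratic variation `Q_T = ∑_{t<T} ‖ℓ_t − μ_T‖²` of the loss sequence `ℓ`. -/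
noncomputable def quadVar (K T : ℕ) (ℓ : ℕ → Fin K → ℝ) : ℝ :=
  ∑ t ∈ Finset.range T, ∑ i : Fin K,
    (ℓ t i - (1 / (T : ℝ)) * ∑ s ∈ Finset.range T, ℓ s i) ^ 2

section AuxDev
open Finset
set_option linter.unusedSectionVars false
section Generic
variable {ι : Type*} [Fintype ι] [DecidableEq ι]

/-- Product weight of a configuration. -/
def Wt (w : ι → Bool → ℝ) (b : ι → Bool) : ℝ := ∏ p, w p (b p)

lemma Wt_nonneg {w : ι → Bool → ℝ} (hw : ∀ p bit, 0 ≤ w p bit) (b : ι → Bool) :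
    0 ≤ Wt w b := prod_nonneg fun p _ => hw p (b p)

lemma sum_Wt {w : ι → Bool → ℝ} (hw : ∀ p, w p false + w p true = 1) :
    ∑ b : ι → Bool, Wt w b = 1 := by
  classical
  have h := Finset.prod_univ_sum (fun _ : ι => (univ : Finset Bool)) (fun p bit => w p bit)
  have h2 : ∀ p : ι, ∑ bit ∈ (univ : Finset Bool), w p bit = 1 := by
    intro p; rw [Fintype.sum_bool]; rw [← hw p]; ring
  rw [Fintype.piFinset_univ] at h
  have h3 : ∏ p : ι, (1:ℝ) = ∑ b : ι → Bool, Wt w b := by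
    simp only [Wt]; rw [← h]; exact Finset.prod_congr rfl fun p _ => (h2 p).symm
  simpa using h3.symm

lemma Wt_split (w : ι → Bool → ℝ) (κ : ι) (b : ι → Bool) :
    Wt w b = w κ (b κ) * ∏ p ∈ univ.erase κ, w p (b p) :=
  (Finset.mul_prod_erase univ _ (mem_univ κ)).symm

lemma erase_prod_update (w : ι → Bool → ℝ) (κ : ι) (b : ι → Bool) (bit : Bool) :
    ∏ p ∈ univ.erase κ, w p (Function.update b κ bit p) = ∏ p ∈ univ.erase κ, w p (b p) :=
  Finset.prod_congr rfl fun p hp => by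
    rw [Function.update_of_ne (Finset.ne_of_mem_erase hp)]

/-- The sum over an event invariant under coordinate `κ`, of weight times an invariant
function, only depends on the weight family through the total mass at `κ`. -/
lemma comp_core (w w' : ι → Bool → ℝ) (κ : ι)
    (hoff : ∀ p, p ≠ κ → w p = w' p)
    (hsum : w κ false + w κ true = w' κ false + w' κ true)
    (E : (ι → Bool) → Prop) [DecidablePred E]
    (G : (ι → Bool) → ℝ)
    (hE : ∀ b bit, E (Function.update b κ bit) ↔ E b)
    (hG : ∀ b, E b → ∀ bit, G (Function.update b κ bit) = G b) :
    ∑ b ∈ univ.filter E, Wt w b * G b = ∑ b ∈ univ.filter E, Wt w' b * G b := by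
  classical
  have key : ∀ v : ι → Bool → ℝ,
      ∑ b ∈ univ.filter E, Wt v b * G b
        = ∑ b ∈ (univ.filter E).filter (fun b => b κ = false),
            (v κ false + v κ true) * ((∏ p ∈ univ.erase κ, v p (b p)) * G b) := by
    intro v
    rw [← Finset.sum_filter_add_sum_filter_not (univ.filter E) (fun b => b κ = false)]
    have h2 : ∑ b ∈ (univ.filter E).filter (fun b => ¬ b κ = false), Wt v b * G b
        = ∑ b ∈ (univ.filter E).filter (fun b => b κ = false),
            v κ true * ((∏ p ∈ univ.erase κ, v p (b p)) * G b) := by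
      apply Finset.sum_nbij' (fun b => Function.update b κ false)
        (fun b => Function.update b κ true)
      · intro b hb
        simp only [mem_filter, mem_univ, true_and] at hb ⊢
        exact ⟨(hE b false).mpr hb.1, Function.update_self κ false b⟩
      · intro b hb
        simp only [mem_filter, mem_univ, true_and] at hb ⊢
        refine ⟨(hE b true).mpr hb.1, ?_⟩
        simp [Function.update_self]
      · intro b hb
        simp only [mem_filter, mem_univ, true_and] at hb
        have : b κ = true := by
          cases h : b κ
          · exact absurd h hb.2
          · rfl
        rw [Function.update_idem]
        rw [← this]; exact Function.update_eq_self κ b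
      · intro b hb
        simp only [mem_filter, mem_univ, true_and] at hb
        rw [Function.update_idem, ← hb.2]; exact Function.update_eq_self κ b
      · intro b hb
        simp only [mem_filter, mem_univ, true_and] at hb
        have hbt : b κ = true := by
          cases h : b κ
          · exact absurd h hb.2
          · rfl
        rw [Wt_split v κ, hbt, erase_prod_update, hG b hb.1 false, mul_assoc]
    rw [h2]
    have h1 : ∑ b ∈ (univ.filter E).filter (fun b => b κ = false), Wt v b * G b
        = ∑ b ∈ (univ.filter E).filter (fun b => b κ = false),
            v κ false * ((∏ p ∈ univ.erase κ, v p (b p)) * G b) := by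
      apply Finset.sum_congr rfl
      intro b hb
      simp only [mem_filter, mem_univ, true_and] at hb
      rw [Wt_split v κ, hb.2, mul_assoc]
    rw [h1, ← Finset.sum_add_distrib]
    apply Finset.sum_congr rfl
    intro b _; ring
  rw [key w, key w']
  apply Finset.sum_congr rfl
  intro b _
  rw [hsum]
  congr 1
  congr 1
  exact Finset.prod_congr rfl fun p hp => by rw [hoff p (Finset.ne_of_mem_erase hp)]

lemma Wt_mul_u (w : ι → Bool → ℝ) (κ : ι) (u : Bool → ℝ) (b : ι → Bool) :
    Wt (fun p => if p = κ then fun bit => w κ bit * u bit else w p) b = Wt w b * u (b κ) := by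
  have h : (∏ p ∈ univ.erase κ, (if p = κ then fun bit => w κ bit * u bit else w p) (b p))
      = ∏ p ∈ univ.erase κ, w p (b p) :=
    Finset.prod_congr rfl fun p hp => by rw [if_neg (Finset.ne_of_mem_erase hp)]
  rw [Wt_split _ κ, Wt_split w κ, h, if_pos rfl]
  ring

/-- Integrating out coordinate `κ` against an invariant event and invariant function. -/
theorem Dlem (w : ι → Bool → ℝ) (hw : ∀ p, w p false + w p true = 1) (κ : ι)
    (E : (ι → Bool) → Prop) [DecidablePred E]
    (hE : ∀ b bit, E (Function.update b κ bit) ↔ E b)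
    (G : (ι → Bool) → ℝ)
    (hG : ∀ b, E b → ∀ bit, G (Function.update b κ bit) = G b)
    (u : Bool → ℝ) :
    ∑ b ∈ univ.filter E, Wt w b * u (b κ) * G b
      = (w κ false * u false + w κ true * u true) * ∑ b ∈ univ.filter E, Wt w b * G b := by
  classical
  set m : ℝ := w κ false * u false + w κ true * u true with hm
  have h1 : ∑ b ∈ univ.filter E, Wt w b * u (b κ) * G b
      = ∑ b ∈ univ.filter E,
          Wt (fun p => if p = κ then fun bit => w κ bit * u bit else w p) b * G b :=
    Finset.sum_congr rfl fun b _ => by rw [Wt_mul_u]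
  have h2 : ∑ b ∈ univ.filter E,
        Wt (fun p => if p = κ then fun bit => w κ bit * u bit else w p) b * G b
      = ∑ b ∈ univ.filter E,
          Wt (fun p => if p = κ then fun bit => w κ bit * m else w p) b * G b := by
    apply comp_core _ _ κ (fun p hp => by simp [if_neg hp]) ?_ E G hE hG
    simp only [if_pos rfl, if_true]
    linear_combination (-(w κ false * u false + w κ true * u true)) * (hw κ)
  have h3 : ∑ b ∈ univ.filter E,
        Wt (fun p => if p = κ then fun bit => w κ bit * m else w p) b * G b
      = m * ∑ b ∈ univ.filter E, Wt w b * G b := by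
    rw [Finset.mul_sum]
    apply Finset.sum_congr rfl
    intro b _
    rw [Wt_mul_u w κ (fun _ => m) b]
    ring
  rw [h1, h2, h3]

end Generic

section Env
variable {K : ℕ} {Ω : Type*} [MeasurableSpace Ω]

/-- The two-valued loss sequence determined by a bit table. -/
def lossOf (T : ℕ) (a : ℝ) (b : Fin T × Fin K → Bool) : ℕ → Fin K → ℝ := fun t i =>
  if h : t < T then (if b (⟨t, h⟩, i) then a else 0) else 0

/-- Action of the strategy at round `t` on the loss sequence of the table `b`. -/
def acts (T : ℕ) (a : ℝ) (S : Strategy K Ω) (ω : Ω) (b : Fin T × Fin K → Bool) (t : ℕ) :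
    Fin K := S.act (lossOf T a b) t ω

lemma acts_eq_of_agree (T : ℕ) (a : ℝ) (S : Strategy K Ω) (ω : Ω)
    (b b' : Fin T × Fin K → Bool) :
    ∀ t : ℕ, (∀ p : Fin T × Fin K, (p.1 : ℕ) < t → b p = b' p) →
      acts T a S ω b t = acts T a S ω b' t := by
  intro t
  induction t using Nat.strong_induction_on with
  | _ t IH =>
    intro hag
    apply S.adapted
    intro s hs
    have hact := IH s hs (fun p hp => hag p (lt_trans hp hs))
    refine ⟨hact, ?_⟩
    show lossOf T a b s _ = lossOf T a b' s _
    unfold lossOf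
    by_cases h : s < T
    · simp only [dif_pos h]
      rw [hag (⟨s, h⟩, _) (by simpa using hs)]
    · simp [dif_neg h]

lemma acts_update_ge (T : ℕ) (a : ℝ) (S : Strategy K Ω) (ω : Ω)
    (b : Fin T × Fin K → Bool) (κ : Fin T × Fin K) (bit : Bool) (t : ℕ)
    (ht : t ≤ (κ.1 : ℕ)) :
    acts T a S ω (Function.update b κ bit) t = acts T a S ω b t := by
  apply acts_eq_of_agree
  intro p hp
  apply Function.update_of_ne
  intro hpκ
  rw [hpκ] at hp
  omega

lemma acts_update_unobs (T : ℕ) (a : ℝ) (S : Strategy K Ω) (ω : Ω)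
    (b : Fin T × Fin K → Bool) (κ : Fin T × Fin K)
    (hne : acts T a S ω b (κ.1 : ℕ) ≠ κ.2) (bit : Bool) :
    ∀ s, acts T a S ω (Function.update b κ bit) s = acts T a S ω b s := by
  intro s
  induction s using Nat.strong_induction_on with
  | _ s IH =>
    apply S.adapted
    intro u hu
    refine ⟨IH u hu, ?_⟩
    show lossOf T a (Function.update b κ bit) u (acts T a S ω (Function.update b κ bit) u)
      = lossOf T a b u (acts T a S ω (Function.update b κ bit) u)
    rw [IH u hu]
    unfold lossOf
    by_cases h : u < T
    · simp only [dif_pos h]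
      have hne2 : ((⟨u, h⟩, acts T a S ω b u) : Fin T × Fin K) ≠ κ := by
        intro hcon
        rw [← hcon] at hne
        simp at hne
      rw [Function.update_of_ne hne2]
    · rw [dif_neg h, dif_neg h]

/-- Baseline product weights: every coordinate is a fair coin. -/
noncomputable def w0 (T K : ℕ) : Fin T × Fin K → Bool → ℝ := fun _ _ => 1/2

/-- Environment-`j` weights: arm `j` is biased towards low loss. -/
noncomputable def wj (T : ℕ) {K : ℕ} (c : ℝ) (j : Fin K) : Fin T × Fin K → Bool → ℝ :=
  fun p bit => if p.2 = j then (if bit then (1 - c)/2 else (1 + c)/2) else 1/2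

/-- Single-coordinate likelihood ratio. -/
noncomputable def rr (c : ℝ) : Bool → ℝ := fun bit => if bit then 1 - c else 1 + c

lemma hw0sum (T K : ℕ) : ∀ p : Fin T × Fin K, w0 T K p false + w0 T K p true = 1 := by
  intro p; norm_num [w0]

lemma hwjsum (T : ℕ) {K : ℕ} (c : ℝ) (j : Fin K) :
    ∀ p : Fin T × Fin K, wj T c j p false + wj T c j p true = 1 := by
  intro p; by_cases h : p.2 = j <;> simp [wj, h] <;> ring

lemma w0_nonneg (T K : ℕ) : ∀ (p : Fin T × Fin K) bit, 0 ≤ w0 T K p bit := by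
  intro p bit; norm_num [w0]

lemma wj_nonneg (T : ℕ) {K : ℕ} {c : ℝ} (hc : c ≤ 1) (hc' : -1 ≤ c) (j : Fin K) :
    ∀ (p : Fin T × Fin K) bit, 0 ≤ wj T c j p bit := by
  intro p bit
  by_cases h : p.2 = j
  · cases bit <;> simp [wj, h] <;> linarith
  · simp only [wj, if_neg h]; norm_num

/-- Partial likelihood-ratio product: observed factors always, unobserved ones only
from time `n` onwards. -/
noncomputable def Lfun (T : ℕ) {K : ℕ} (a c : ℝ) (S : Strategy K Ω) (ω : Ω) (j : Fin K) (n : ℕ)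
    (b : Fin T × Fin K → Bool) : ℝ :=
  ∏ t : Fin T, (if acts T a S ω b (t : ℕ) = j ∨ n ≤ (t : ℕ) then rr c (b (t, j)) else 1)

lemma Lfun_zero (T : ℕ) (a c : ℝ) (S : Strategy K Ω) (ω : Ω) (j : Fin K)
    (b : Fin T × Fin K → Bool) :
    Lfun T a c S ω j 0 b = ∏ t : Fin T, rr c (b (t, j)) := by
  apply Finset.prod_congr rfl
  intro t _
  rw [if_pos (Or.inr (Nat.zero_le _))]

lemma wj_eq (T : ℕ) (a c : ℝ) (S : Strategy K Ω) (ω : Ω) (j : Fin K)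
    (b : Fin T × Fin K → Bool) :
    Wt (wj T c j) b = Wt (w0 T K) b * Lfun T a c S ω j 0 b := by
  rw [Lfun_zero]
  unfold Wt
  rw [Fintype.prod_prod_type, Fintype.prod_prod_type
    (f := fun p : Fin T × Fin K => w0 T K p (b p))]
  have hsplit : ∀ t : Fin T, (∏ i, wj T c j (t, i) (b (t, i)))
      = (∏ i, w0 T K (t, i) (b (t, i))) * rr c (b (t, j)) := by
    intro t
    rw [← Finset.mul_prod_erase univ (fun i => wj T c j (t, i) (b (t, i))) (mem_univ j),
        ← Finset.mul_prod_erase univ (fun i => w0 T K (t, i) (b (t, i))) (mem_univ j)]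
    have he : ∏ i ∈ univ.erase j, wj T c j (t, i) (b (t, i))
        = ∏ i ∈ univ.erase j, w0 T K (t, i) (b (t, i)) := by
      apply Finset.prod_congr rfl
      intro i hi
      simp [wj, w0, Finset.ne_of_mem_erase hi]
    rw [he]
    cases hb : b (t, j) <;> simp [wj, w0, rr] <;> ring
  calc ∏ t : Fin T, ∏ i, wj T c j (t, i) (b (t, i))
      = ∏ t : Fin T, ((∏ i, w0 T K (t, i) (b (t, i))) * rr c (b (t, j))) :=
        Finset.prod_congr rfl fun t _ => hsplit t
    _ = (∏ t : Fin T, ∏ i, w0 T K (t, i) (b (t, i))) * ∏ t : Fin T, rr c (b (t, j)) := by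
        rw [Finset.prod_mul_distrib]

/-- The peeling identity: unobserved likelihood-ratio factors integrate out. -/
lemma peel (T : ℕ) (a c : ℝ) (S : Strategy K Ω) (ω : Ω) (j : Fin K)
    (f : (Fin T × Fin K → Bool) → ℝ)
    (hf : ∀ b b', (∀ t : ℕ, acts T a S ω b t = acts T a S ω b' t) → f b = f b') :
    ∀ n : ℕ,
      ∑ b : Fin T × Fin K → Bool, Wt (w0 T K) b * (f b * Lfun T a c S ω j n b)
        = ∑ b : Fin T × Fin K → Bool, Wt (w0 T K) b * (f b * Lfun T a c S ω j 0 b) := by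
  intro n
  induction n with
  | zero => rfl
  | succ n IH =>
    rw [← IH]; clear IH
    by_cases hnT : n < T
    · -- split the sum according to whether round n plays arm j
      set κ : Fin T × Fin K := (⟨n, hnT⟩, j) with hκ
      have hEinv : ∀ (b : Fin T × Fin K → Bool) bit,
          (¬ acts T a S ω (Function.update b κ bit) n = j) ↔ ¬ acts T a S ω b n = j := by
        intro b bit
        rw [acts_update_ge T a S ω b κ bit n (by simp [hκ])]
      have key : ∀ m : ℕ, ∑ b ∈ univ.filter (fun b => ¬ acts T a S ω b n = j),
            Wt (w0 T K) b * (f b * Lfun T a c S ω j m b)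
          = ∑ b : Fin T × Fin K → Bool,
              Wt (w0 T K) b * (f b * Lfun T a c S ω j m b)
            - ∑ b ∈ univ.filter (fun b => acts T a S ω b n = j),
              Wt (w0 T K) b * (f b * Lfun T a c S ω j m b) := by
        intro m
        rw [eq_sub_iff_add_eq, add_comm,
          Finset.sum_filter_add_sum_filter_not univ (fun b => acts T a S ω b n = j)]
      -- On the event {acts = j}, the two L-functions agree.
      have hEeq : ∀ b : Fin T × Fin K → Bool, acts T a S ω b n = j →
          Lfun T a c S ω j (n+1) b = Lfun T a c S ω j n b := by
        intro b hb
        apply Finset.prod_congr rfl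
        intro t _
        by_cases ht : (t : ℕ) = n
        · have h1 : acts T a S ω b (t : ℕ) = j := by rw [ht]; exact hb
          rw [if_pos (Or.inl h1), if_pos (Or.inl h1)]
        · simp only [show ((n+1 : ℕ) ≤ (t:ℕ)) ↔ (n ≤ (t:ℕ)) from by omega]
      -- Off the event, L_n = rr * L_{n+1} and the κ coordinate integrates out.
      have hfact : ∀ b : Fin T × Fin K → Bool, ¬ acts T a S ω b n = j →
          Lfun T a c S ω j n b = rr c (b κ) * Lfun T a c S ω j (n+1) b := by
        intro b hb
        unfold Lfun
        rw [← Finset.mul_prod_erase univ _ (mem_univ (⟨n, hnT⟩ : Fin T)),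
            ← Finset.mul_prod_erase univ _ (mem_univ (⟨n, hnT⟩ : Fin T)), ← mul_assoc]
        congr 1
        · have hc1 : acts T a S ω b ((⟨n, hnT⟩ : Fin T) : ℕ) = j ∨ n ≤ ((⟨n, hnT⟩ : Fin T):ℕ) :=
            Or.inr (by simp)
          have hc2 : ¬ (acts T a S ω b ((⟨n, hnT⟩ : Fin T) : ℕ) = j
              ∨ n + 1 ≤ ((⟨n, hnT⟩ : Fin T):ℕ)) := by
            simp only [Fin.val_mk]
            push_neg
            exact ⟨hb, by omega⟩
          rw [if_pos hc1, if_neg hc2, mul_one]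
        · apply Finset.prod_congr rfl
          intro t ht
          have htn : (t : ℕ) ≠ n := by
            intro hcon
            exact (Finset.ne_of_mem_erase ht) (Fin.ext hcon)
          simp only [show (n ≤ (t:ℕ)) ↔ ((n+1:ℕ) ≤ (t:ℕ)) from by omega]
      -- invariance of f and L_{n+1} under flipping the unobserved coordinate κ
      have hG : ∀ b : Fin T × Fin K → Bool, (¬ acts T a S ω b n = j) → ∀ bit : Bool,
          f (Function.update b κ bit) * Lfun T a c S ω j (n+1) (Function.update b κ bit)
            = f b * Lfun T a c S ω j (n+1) b := by
        intro b hb bit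
        have hall := acts_update_unobs T a S ω b κ (by simpa using hb) bit
        rw [hf _ _ hall]
        congr 1
        apply Finset.prod_congr rfl
        intro t _
        rw [hall (t : ℕ)]
        by_cases htn : t = (⟨n, hnT⟩ : Fin T)
        · have hcond : ¬ (acts T a S ω b (t:ℕ) = j ∨ n + 1 ≤ (t:ℕ)) := by
            subst htn
            push_neg
            exact ⟨by simpa using hb, by simp⟩
          rw [if_neg hcond, if_neg hcond]
        · have hne' : ((t, j) : Fin T × Fin K) ≠ κ := by
            rw [hκ]
            intro hcon
            exact htn (congrArg Prod.fst hcon)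
          rw [Function.update_of_ne hne']
      have hD := Dlem (w0 T K) (hw0sum T K) κ (fun b => ¬ acts T a S ω b n = j) hEinv
        (fun b => f b * Lfun T a c S ω j (n+1) b) hG (rr c)
      have hone : w0 T K κ false * rr c false + w0 T K κ true * rr c true = 1 := by
        norm_num [w0, rr]
        ring
      rw [hone, one_mul] at hD
      have hneg : ∑ b ∈ univ.filter (fun b => ¬ acts T a S ω b n = j),
            Wt (w0 T K) b * (f b * Lfun T a c S ω j (n+1) b)
          = ∑ b ∈ univ.filter (fun b => ¬ acts T a S ω b n = j),
            Wt (w0 T K) b * (f b * Lfun T a c S ω j n b) := by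
        rw [← hD]
        apply Finset.sum_congr rfl
        intro b hb
        simp only [Finset.mem_filter] at hb
        rw [hfact b hb.2]
        ring
      have hpos : ∑ b ∈ univ.filter (fun b => acts T a S ω b n = j),
            Wt (w0 T K) b * (f b * Lfun T a c S ω j (n+1) b)
          = ∑ b ∈ univ.filter (fun b => acts T a S ω b n = j),
            Wt (w0 T K) b * (f b * Lfun T a c S ω j n b) := by
        apply Finset.sum_congr rfl
        intro b hb
        simp only [Finset.mem_filter] at hb
        rw [hEeq b hb.2]
      rw [← Finset.sum_filter_add_sum_filter_not univ (fun b => acts T a S ω b n = j)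
          (fun b => Wt (w0 T K) b * (f b * Lfun T a c S ω j (n+1) b)),
        ← Finset.sum_filter_add_sum_filter_not univ (fun b => acts T a S ω b n = j)
          (fun b => Wt (w0 T K) b * (f b * Lfun T a c S ω j n b)),
        hpos, hneg]
    · -- n ≥ T : the two products are equal term by term
      apply Finset.sum_congr rfl
      intro b _
      congr 1
      congr 1
      apply Finset.prod_congr rfl
      intro t _
      have h1 : ¬ n ≤ (t : ℕ) := by have := t.2; omega
      have h2 : ¬ n + 1 ≤ (t : ℕ) := by have := t.2; omega
      simp only [show ((n+1 : ℕ) ≤ (t:ℕ)) ↔ (n ≤ (t:ℕ)) from by omega]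

/-- Real-valued number of plays of arm `j` among the first `T` rounds. -/
noncomputable def Nr (T : ℕ) (a : ℝ) (S : Strategy K Ω) (ω : Ω) (j : Fin K)
    (b : Fin T × Fin K → Bool) : ℝ :=
  ∑ t : Fin T, if acts T a S ω b (t : ℕ) = j then (1:ℝ) else 0

lemma Nr_nonneg (T : ℕ) (a : ℝ) (S : Strategy K Ω) (ω : Ω) (j : Fin K) (b) :
    0 ≤ Nr T a S ω j b :=
  Finset.sum_nonneg fun t _ => by split <;> norm_num

lemma Nr_le (T : ℕ) (a : ℝ) (S : Strategy K Ω) (ω : Ω) (j : Fin K) (b) :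
    Nr T a S ω j b ≤ T := by
  have : Nr T a S ω j b ≤ ∑ _t : Fin T, (1:ℝ) :=
    Finset.sum_le_sum fun t _ => by split <;> norm_num
  simpa using this

lemma Nr_act_inv (T : ℕ) (a : ℝ) (S : Strategy K Ω) (ω : Ω) (j : Fin K) (b b')
    (h : ∀ t : ℕ, acts T a S ω b t = acts T a S ω b' t) :
    Nr T a S ω j b = Nr T a S ω j b' :=
  Finset.sum_congr rfl fun t _ => by rw [h (t : ℕ)]

lemma sum_Nr (T : ℕ) (a : ℝ) (S : Strategy K Ω) (ω : Ω) (b) :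
    ∑ j : Fin K, Nr T a S ω j b = T := by
  unfold Nr
  rw [Finset.sum_comm]
  have : ∀ t : Fin T, (∑ j : Fin K, if acts T a S ω b (t:ℕ) = j then (1:ℝ) else 0) = 1 := by
    intro t
    rw [Finset.sum_ite_eq univ (acts T a S ω b (t:ℕ)) (fun _ => (1:ℝ))]
    simp
  rw [Finset.sum_congr rfl fun t _ => this t]
  simp

/-- Expected number of plays as a sum of per-round probabilities. -/
lemma exp_Nr (T : ℕ) (a : ℝ) (S : Strategy K Ω) (ω : Ω) (j : Fin K)
    (w : Fin T × Fin K → Bool → ℝ) :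
    ∑ b : Fin T × Fin K → Bool, Wt w b * Nr T a S ω j b
      = ∑ t : Fin T, ∑ b ∈ univ.filter (fun b => acts T a S ω b (t:ℕ) = j), Wt w b := by
  unfold Nr
  have h1 : ∀ b : Fin T × Fin K → Bool, Wt w b * (∑ t : Fin T,
      if acts T a S ω b (t:ℕ) = j then (1:ℝ) else 0)
      = ∑ t : Fin T, (if acts T a S ω b (t:ℕ) = j then Wt w b else 0) := by
    intro b
    rw [Finset.mul_sum]
    exact Finset.sum_congr rfl fun t _ => by rw [mul_ite, mul_one, mul_zero]
  rw [Finset.sum_congr rfl fun b _ => h1 b, Finset.sum_comm]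
  exact Finset.sum_congr rfl fun t _ => (Finset.sum_filter _ _).symm

/-- Change of measure from environment `j` to the baseline. -/
lemma exp_wj (T : ℕ) (a c : ℝ) (S : Strategy K Ω) (ω : Ω) (j : Fin K)
    (f : (Fin T × Fin K → Bool) → ℝ)
    (hf : ∀ b b', (∀ t : ℕ, acts T a S ω b t = acts T a S ω b' t) → f b = f b') :
    ∑ b : Fin T × Fin K → Bool, Wt (wj T c j) b * f b
      = ∑ b : Fin T × Fin K → Bool, Wt (w0 T K) b * (f b * Lfun T a c S ω j T b) := by
  have h1 : ∑ b : Fin T × Fin K → Bool, Wt (wj T c j) b * f b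
      = ∑ b : Fin T × Fin K → Bool, Wt (w0 T K) b * (f b * Lfun T a c S ω j 0 b) :=
    Finset.sum_congr rfl fun b _ => by rw [wj_eq T a c S ω j b]; ring
  rw [h1, ← peel T a c S ω j f hf T]

lemma exp_L_one (T : ℕ) (a c : ℝ) (S : Strategy K Ω) (ω : Ω) (j : Fin K) :
    ∑ b : Fin T × Fin K → Bool, Wt (w0 T K) b * Lfun T a c S ω j T b = 1 := by
  have h := exp_wj T a c S ω j (fun _ => 1) (fun _ _ _ => rfl)
  simp only [one_mul, mul_one] at h
  rw [← h, sum_Wt (hwjsum T c j)]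

/-- Conditional expectation of a one-coordinate function given the round-`t` action. -/
lemma exp_obs (T : ℕ) (a : ℝ) (S : Strategy K Ω) (ω : Ω)
    (w : Fin T × Fin K → Bool → ℝ) (hw : ∀ p, w p false + w p true = 1)
    (t : Fin T) (i i' : Fin K) (u : Bool → ℝ) :
    ∑ b ∈ univ.filter (fun b => acts T a S ω b (t:ℕ) = i), Wt w b * u (b (t, i'))
      = (w (t,i') false * u false + w (t,i') true * u true)
        * ∑ b ∈ univ.filter (fun b => acts T a S ω b (t:ℕ) = i), Wt w b := by
  have hE : ∀ (b : Fin T × Fin K → Bool) (bit : Bool),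
      (acts T a S ω (Function.update b (t,i') bit) (t:ℕ) = i) ↔ acts T a S ω b (t:ℕ) = i := by
    intro b bit
    rw [acts_update_ge T a S ω b (t,i') bit (t:ℕ) (le_refl _)]
  have h := Dlem w hw (t,i') (fun b => acts T a S ω b (t:ℕ) = i) hE
    (fun _ => 1) (fun _ _ _ => rfl) u
  simpa using h

/-- Finite Jensen inequality for `exp`. -/
lemma jensen_exp {ι : Type*} [Fintype ι] (w g : ι → ℝ) (hw0 : ∀ b, 0 ≤ w b)
    (hw1 : ∑ b, w b = 1) :
    Real.exp (∑ b, w b * g b) ≤ ∑ b, w b * Real.exp (g b) := by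
  have h := convexOn_exp.map_sum_le (t := univ) (w := w) (p := g)
    (fun i _ => hw0 i) hw1 (fun i _ => Set.mem_univ _)
  simpa [smul_eq_mul] using h


lemma L_pos (T : ℕ) (a c : ℝ) (S : Strategy K Ω) (ω : Ω) (j : Fin K) (n : ℕ)
    (hc1 : c < 1) (hc2 : -1 < c) (b : Fin T × Fin K → Bool) :
    0 < Lfun T a c S ω j n b := by
  apply Finset.prod_pos
  intro t _
  split
  · cases h : b (t, j) <;> simp [rr] <;> linarith
  · norm_num

lemma log_L (T : ℕ) (a c : ℝ) (S : Strategy K Ω) (ω : Ω) (j : Fin K)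
    (hc1 : c < 1) (hc2 : -1 < c) (b : Fin T × Fin K → Bool) :
    Real.log (Lfun T a c S ω j T b)
      = ∑ t : Fin T, if acts T a S ω b (t:ℕ) = j then Real.log (rr c (b (t, j))) else 0 := by
  have hL : Lfun T a c S ω j T b
      = ∏ t : Fin T, (if acts T a S ω b (t:ℕ) = j then rr c (b (t, j)) else 1) := by
    apply Finset.prod_congr rfl
    intro t _
    have : ¬ (T ≤ (t:ℕ)) := Nat.not_le.mpr t.2
    simp [this]
  rw [hL, Real.log_prod]
  · apply Finset.sum_congr rfl
    intro t _
    split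
    · rfl
    · exact Real.log_one
  · intro t _
    split
    · cases h : b (t, j) <;> simp [rr] <;> intro hcon <;> linarith
    · norm_num

lemma E0_logL (T : ℕ) (a c : ℝ) (S : Strategy K Ω) (ω : Ω) (j : Fin K)
    (hc1 : c < 1) (hc2 : -1 < c) :
    ∑ b : Fin T × Fin K → Bool, Wt (w0 T K) b * Real.log (Lfun T a c S ω j T b)
      = ((1/2) * Real.log (1+c) + (1/2) * Real.log (1-c))
        * ∑ b : Fin T × Fin K → Bool, Wt (w0 T K) b * Nr T a S ω j b := by
  have h1 : ∀ b : Fin T × Fin K → Bool,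
      Wt (w0 T K) b * Real.log (Lfun T a c S ω j T b)
        = ∑ t : Fin T, (if acts T a S ω b (t:ℕ) = j
            then Wt (w0 T K) b * Real.log (rr c (b (t, j))) else 0) := by
    intro b
    rw [log_L T a c S ω j hc1 hc2 b, Finset.mul_sum]
    exact Finset.sum_congr rfl fun t _ => by rw [mul_ite, mul_zero]
  rw [Finset.sum_congr rfl fun b _ => h1 b, Finset.sum_comm, exp_Nr, Finset.mul_sum]
  apply Finset.sum_congr rfl
  intro t _
  rw [← Finset.sum_filter (fun b => acts T a S ω b (t:ℕ) = j)
      (fun b => Wt (w0 T K) b * Real.log (rr c (b (t, j))))]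
  rw [exp_obs T a S ω (w0 T K) (hw0sum T K) t j j (fun bit => Real.log (rr c bit))]
  have : w0 T K (t,j) false * Real.log (rr c false) + w0 T K (t,j) true * Real.log (rr c true)
      = 1 / 2 * Real.log (1 + c) + 1 / 2 * Real.log (1 - c) := by
    simp [w0, rr]
  rw [this]

set_option maxHeartbeats 1000000 in
/-- The information inequality: the expected number of plays of arm `j` under
environment `j` exceeds the baseline one by at most `T·√(kl·E₀Nⱼ)`. -/
lemma Ej_Nr_le (T : ℕ) (a c : ℝ) (S : Strategy K Ω) (ω : Ω) (j : Fin K)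
    (hc0 : 0 ≤ c) (hc1 : c < 1) :
    ∑ b : Fin T × Fin K → Bool, Wt (wj T c j) b * Nr T a S ω j b
      ≤ (∑ b : Fin T × Fin K → Bool, Wt (w0 T K) b * Nr T a S ω j b)
        + T * Real.sqrt ((-((1/2) * Real.log (1+c) + (1/2) * Real.log (1-c)))
            * ∑ b : Fin T × Fin K → Bool, Wt (w0 T K) b * Nr T a S ω j b) := by
  have hc2 : (-1:ℝ) < c := by linarith
  set X := Fin T × Fin K → Bool
  set L : X → ℝ := Lfun T a c S ω j T with hLdef
  set N : X → ℝ := Nr T a S ω j with hNdef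
  set W : X → ℝ := Wt (w0 T K) with hWdef
  set mlog : ℝ := (1/2) * Real.log (1+c) + (1/2) * Real.log (1-c) with hmlog
  set N0 : ℝ := ∑ b : X, W b * N b with hN0
  have hW0nn : ∀ b : X, 0 ≤ W b := Wt_nonneg (w0_nonneg T K)
  have hW0sum : ∑ b : X, W b = 1 := sum_Wt (hw0sum T K)
  have hLpos : ∀ b : X, 0 < L b := L_pos T a c S ω j T hc1 hc2
  have hE1 : ∑ b : X, W b * L b = 1 := exp_L_one T a c S ω j
  have hEN : ∑ b : X, Wt (wj T c j) b * N b = ∑ b : X, W b * (N b * L b) :=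
    exp_wj T a c S ω j N (Nr_act_inv T a S ω j)
  set A : ℝ := ∑ b : X, W b * Real.sqrt (L b) with hA
  have hsq : ∀ b : X, Real.sqrt (L b) ^ 2 = L b := fun b => Real.sq_sqrt (hLpos b).le
  -- second moments of √L ± 1
  have h2m : ∑ b : X, W b * (Real.sqrt (L b) - 1)^2 = 2 - 2*A := by
    have hpt : ∀ b : X, W b * (Real.sqrt (L b) - 1)^2
        = W b * L b - 2*(W b * Real.sqrt (L b)) + W b := by
      intro b
      linear_combination W b * hsq b
    rw [Finset.sum_congr rfl fun b _ => hpt b, Finset.sum_add_distrib,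
      Finset.sum_sub_distrib, hE1, hW0sum, ← Finset.mul_sum, ← hA]
    ring
  have h2p : ∑ b : X, W b * (Real.sqrt (L b) + 1)^2 = 2 + 2*A := by
    have hpt : ∀ b : X, W b * (Real.sqrt (L b) + 1)^2
        = W b * L b + 2*(W b * Real.sqrt (L b)) + W b := by
      intro b
      linear_combination W b * hsq b
    rw [Finset.sum_congr rfl fun b _ => hpt b, Finset.sum_add_distrib,
      Finset.sum_add_distrib, hE1, hW0sum, ← Finset.mul_sum, ← hA]
    ring
  have h2mnn : 0 ≤ 2 - 2*A := by
    rw [← h2m]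
    exact Finset.sum_nonneg fun b _ => mul_nonneg (hW0nn b) (sq_nonneg _)
  -- Cauchy–Schwarz: E|L − 1| ≤ 2√(1−A²)
  have hCS : ∑ b : X, W b * |L b - 1| ≤ 2 * Real.sqrt (1 - A^2) := by
    have hptw : ∀ b : X, W b * |L b - 1|
        = (Real.sqrt (W b) * |Real.sqrt (L b) - 1|) * (Real.sqrt (W b) * (Real.sqrt (L b) + 1)) := by
      intro b
      have hfac : L b - 1 = (Real.sqrt (L b) - 1) * (Real.sqrt (L b) + 1) := by
        linear_combination -hsq b
      have habs : |L b - 1| = |Real.sqrt (L b) - 1| * (Real.sqrt (L b) + 1) := by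
        rw [hfac, abs_mul, abs_of_nonneg (by positivity : (0:ℝ) ≤ Real.sqrt (L b) + 1)]
      rw [habs]
      have hWms : Real.sqrt (W b) * Real.sqrt (W b) = W b := Real.mul_self_sqrt (hW0nn b)
      linear_combination (-(|Real.sqrt (L b) - 1| * (Real.sqrt (L b) + 1))) * hWms
    rw [Finset.sum_congr rfl fun b _ => hptw b]
    calc ∑ b : X, (Real.sqrt (W b) * |Real.sqrt (L b) - 1|)
            * (Real.sqrt (W b) * (Real.sqrt (L b) + 1))
        ≤ Real.sqrt (∑ b : X, (Real.sqrt (W b) * |Real.sqrt (L b) - 1|)^2)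
          * Real.sqrt (∑ b : X, (Real.sqrt (W b) * (Real.sqrt (L b) + 1))^2) :=
          Real.sum_mul_le_sqrt_mul_sqrt _ _ _
      _ = Real.sqrt (2 - 2*A) * Real.sqrt (2 + 2*A) := by
          congr 1
          · congr 1
            rw [← h2m]
            apply Finset.sum_congr rfl
            intro b _
            rw [mul_pow, sq_abs, Real.sq_sqrt (hW0nn b)]
          · congr 1
            rw [← h2p]
            apply Finset.sum_congr rfl
            intro b _
            rw [mul_pow, Real.sq_sqrt (hW0nn b)]
      _ = 2 * Real.sqrt (1 - A^2) := by
          rw [← Real.sqrt_mul h2mnn]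
          rw [show (2 - 2*A) * (2 + 2*A) = 2^2 * (1 - A^2) by ring]
          rw [Real.sqrt_mul (by positivity : (0:ℝ) ≤ 2^2)]
          rw [Real.sqrt_sq (by norm_num : (0:ℝ) ≤ 2)]
  -- Jensen: A ≥ exp(mlog·N0 / 2)
  have hjen : Real.exp ((mlog * N0) / 2) ≤ A := by
    have hsqrt_eq : ∀ b : X, Real.sqrt (L b) = Real.exp (Real.log (L b) / 2) := by
      intro b
      rw [Real.sqrt_eq_rpow, Real.rpow_def_of_pos (hLpos b)]
      congr 1
      ring
    have hg := jensen_exp W (fun b => Real.log (L b) / 2) hW0nn hW0sum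
    have hsum : ∑ b : X, W b * (Real.log (L b) / 2) = (mlog * N0) / 2 := by
      rw [show (mlog * N0) / 2 = (∑ b : X, W b * Real.log (L b)) / 2 by
        rw [E0_logL T a c S ω j hc1 hc2]]
      rw [Finset.sum_div]
      exact Finset.sum_congr rfl fun b _ => by ring
    rw [hsum] at hg
    calc Real.exp ((mlog * N0)/2) ≤ ∑ b : X, W b * Real.exp (Real.log (L b) / 2) := hg
      _ = A := Finset.sum_congr rfl fun b _ => by rw [← hsqrt_eq b]
  -- 1 − A² ≤ −mlog · N0
  have hAexp : Real.exp ((mlog * N0)/2) ^ 2 = Real.exp (mlog * N0) := by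
    rw [sq, ← Real.exp_add]
    congr 1
    ring
  have hA2 : Real.exp (mlog * N0) ≤ A^2 := by
    rw [← hAexp]
    apply pow_le_pow_left₀ (Real.exp_pos _).le hjen
  have h1A : 1 - A^2 ≤ (-mlog) * N0 := by
    have := Real.add_one_le_exp (mlog * N0)
    nlinarith
  -- change of measure with the positive-part trick
  have hdiff : (∑ b : X, Wt (wj T c j) b * N b) - N0 = ∑ b : X, W b * ((L b - 1) * N b) := by
    rw [hEN, hN0, ← Finset.sum_sub_distrib]
    exact Finset.sum_congr rfl fun b _ => by ring
  have hEml : ∑ b : X, W b * (L b - 1) = 0 := by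
    rw [show (0:ℝ) = (∑ b : X, W b * L b) - ∑ b : X, W b by rw [hE1, hW0sum]; ring,
      ← Finset.sum_sub_distrib]
    exact Finset.sum_congr rfl fun b _ => by ring
  have hpt2 : ∑ b : X, W b * ((L b - 1) * N b) ≤ ∑ b : X, W b * ((T:ℝ) * max (L b - 1) 0) := by
    apply Finset.sum_le_sum
    intro b _
    apply mul_le_mul_of_nonneg_left _ (hW0nn b)
    rcases le_total (L b) 1 with h | h
    · have h1 : (L b - 1) * N b ≤ 0 :=
        mul_nonpos_iff.mpr (Or.inr ⟨by linarith, Nr_nonneg T a S ω j b⟩)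
      have h2 : (0:ℝ) ≤ (T:ℝ) * max (L b - 1) 0 :=
        mul_nonneg (Nat.cast_nonneg T) (le_max_right _ _)
      linarith
    · rw [max_eq_left (by linarith : (0:ℝ) ≤ L b - 1)]
      calc (L b - 1) * N b ≤ (L b - 1) * T :=
            mul_le_mul_of_nonneg_left (Nr_le T a S ω j b) (by linarith)
        _ = (T:ℝ) * (L b - 1) := by ring
  have hmax : ∑ b : X, W b * ((T:ℝ) * max (L b - 1) 0)
      = (T:ℝ) * ((∑ b : X, W b * |L b - 1|) / 2) := by
    have hptm : ∀ b : X, W b * ((T:ℝ) * max (L b - 1) 0)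
        = (T:ℝ) * ((W b * (L b - 1) + W b * |L b - 1|) / 2) := by
      intro b
      have : max (L b - 1) 0 = ((L b - 1) + |L b - 1|) / 2 := by
        rcases le_total 0 (L b - 1) with h | h
        · rw [max_eq_left h, abs_of_nonneg h]; ring
        · rw [max_eq_right h, abs_of_nonpos h]; ring
      rw [this]
      ring
    rw [Finset.sum_congr rfl fun b _ => hptm b, ← Finset.mul_sum]
    congr 1
    have h' : ∑ b : X, (W b * (L b - 1) + W b * |L b - 1|) / 2
        = (∑ b : X, (W b * (L b - 1) + W b * |L b - 1|)) / 2 := (Finset.sum_div _ _ _).symm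
    rw [h', Finset.sum_add_distrib, hEml, zero_add]
  have hfin : ∑ b : X, Wt (wj T c j) b * N b ≤ N0 + (T:ℝ) * Real.sqrt (1 - A^2) := by
    have h3 : (∑ b : X, Wt (wj T c j) b * N b) - N0
        ≤ (T:ℝ) * ((2 * Real.sqrt (1-A^2))/2) := by
      rw [hdiff]
      calc ∑ b : X, W b * ((L b - 1) * N b)
          ≤ ∑ b : X, W b * ((T:ℝ) * max (L b - 1) 0) := hpt2
        _ = (T:ℝ) * ((∑ b : X, W b * |L b - 1|) / 2) := hmax
        _ ≤ (T:ℝ) * ((2 * Real.sqrt (1-A^2))/2) := by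
            apply mul_le_mul_of_nonneg_left _ (Nat.cast_nonneg T)
            linarith [hCS]
    have heq : (T:ℝ) * ((2 * Real.sqrt (1-A^2))/2) = (T:ℝ) * Real.sqrt (1-A^2) := by ring
    linarith [h3]
  calc ∑ b : X, Wt (wj T c j) b * N b ≤ N0 + (T:ℝ) * Real.sqrt (1 - A^2) := hfin
    _ ≤ N0 + (T:ℝ) * Real.sqrt ((-mlog) * N0) :=
        add_le_add_right (mul_le_mul_of_nonneg_left (Real.sqrt_le_sqrt h1A)
          (Nat.cast_nonneg T)) N0


lemma lossOf_fin (T : ℕ) (a : ℝ) (b : Fin T × Fin K → Bool) (t : Fin T) (i : Fin K) :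
    lossOf T a b (t:ℕ) i = (if b (t, i) then a else 0) := by
  unfold lossOf
  rw [dif_pos t.2]

set_option maxHeartbeats 1000000 in
/-- Regret lower bound in environment `j` in terms of the number of plays of arm `j`. -/
lemma Ej_regret_ge (T : ℕ) (a c : ℝ) (S : Strategy K Ω) (ω : Ω) (j : Fin K)
    (ha : 0 ≤ a) (hc1 : c < 1) (hc0 : 0 ≤ c) :
    (a*c/2) * ((T:ℝ) - ∑ b : Fin T × Fin K → Bool, Wt (wj T c j) b * Nr T a S ω j b)
      ≤ ∑ b : Fin T × Fin K → Bool, Wt (wj T c j) b * regret S T (lossOf T a b) ω := by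
  have hc2 : (-1:ℝ) < c := by linarith
  have hWjnn : ∀ b : Fin T × Fin K → Bool, 0 ≤ Wt (wj T c j) b :=
    Wt_nonneg (wj_nonneg T hc1.le hc2.le j)
  set vv : Bool → ℝ := fun bit => if bit then a else 0 with hvv
  -- pointwise regret lower bound
  have hreg : ∀ b : Fin T × Fin K → Bool,
      ∑ t : Fin T, (lossOf T a b (t:ℕ) (acts T a S ω b (t:ℕ)) - lossOf T a b (t:ℕ) j)
        ≤ regret S T (lossOf T a b) ω := by
    intro b
    unfold regret
    have hinf : (⨅ i : Fin K, ∑ t ∈ Finset.range T, lossOf T a b t i)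
        ≤ ∑ t ∈ Finset.range T, lossOf T a b t j := ciInf_le (Finite.bddBelow_range _) j
    have h1 : ∑ t : Fin T, (lossOf T a b (t:ℕ) (acts T a S ω b (t:ℕ)) - lossOf T a b (t:ℕ) j)
        = (∑ t ∈ Finset.range T, lossOf T a b t (S.act (lossOf T a b) t ω))
          - ∑ t ∈ Finset.range T, lossOf T a b t j := by
      rw [Finset.sum_sub_distrib,
        Fin.sum_univ_eq_sum_range (fun t => lossOf T a b t (acts T a S ω b t)) T,
        Fin.sum_univ_eq_sum_range (fun t => lossOf T a b t j) T]
      rfl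
    rw [h1]
    linarith
  -- expectation of the per-round difference
  have hmain : ∑ b : Fin T × Fin K → Bool, Wt (wj T c j) b *
        (∑ t : Fin T, (lossOf T a b (t:ℕ) (acts T a S ω b (t:ℕ)) - lossOf T a b (t:ℕ) j))
      = (a*c/2) * ((T:ℝ) - ∑ b : Fin T × Fin K → Bool, Wt (wj T c j) b * Nr T a S ω j b) := by
    have hswap : ∑ b : Fin T × Fin K → Bool, Wt (wj T c j) b *
          (∑ t : Fin T, (lossOf T a b (t:ℕ) (acts T a S ω b (t:ℕ)) - lossOf T a b (t:ℕ) j))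
        = ∑ t : Fin T, ∑ b : Fin T × Fin K → Bool, Wt (wj T c j) b *
            (lossOf T a b (t:ℕ) (acts T a S ω b (t:ℕ)) - lossOf T a b (t:ℕ) j) := by
      rw [Finset.sum_congr rfl fun b _ => Finset.mul_sum _ _ _]
      exact Finset.sum_comm
    rw [hswap]
    have hper : ∀ t : Fin T, ∑ b : Fin T × Fin K → Bool, Wt (wj T c j) b *
          (lossOf T a b (t:ℕ) (acts T a S ω b (t:ℕ)) - lossOf T a b (t:ℕ) j)
        = (a*c/2) * (1 - ∑ b ∈ univ.filter (fun b => acts T a S ω b (t:ℕ) = j),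
            Wt (wj T c j) b) := by
      intro t
      -- expand the difference as a sum of indicators over the chosen arm
      have hexpand : ∀ b : Fin T × Fin K → Bool,
          Wt (wj T c j) b * (lossOf T a b (t:ℕ) (acts T a S ω b (t:ℕ)) - lossOf T a b (t:ℕ) j)
            = ∑ i : Fin K, (if acts T a S ω b (t:ℕ) = i
                then Wt (wj T c j) b * (vv (b (t, i)) - vv (b (t, j))) else 0) := by
        intro b
        rw [Finset.sum_ite_eq univ (acts T a S ω b (t:ℕ))
          (fun i => Wt (wj T c j) b * (vv (b (t, i)) - vv (b (t, j))))]
        rw [if_pos (mem_univ _), lossOf_fin, lossOf_fin]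
      rw [Finset.sum_congr rfl fun b _ => hexpand b, Finset.sum_comm]
      have hterm : ∀ i : Fin K, ∑ b : Fin T × Fin K → Bool,
            (if acts T a S ω b (t:ℕ) = i
              then Wt (wj T c j) b * (vv (b (t, i)) - vv (b (t, j))) else 0)
          = (if i = j then 0 else a*c/2) *
              ∑ b ∈ univ.filter (fun b => acts T a S ω b (t:ℕ) = i), Wt (wj T c j) b := by
        intro i
        rw [← Finset.sum_filter (fun b => acts T a S ω b (t:ℕ) = i)
            (fun b => Wt (wj T c j) b * (vv (b (t, i)) - vv (b (t, j))))]
        have hsub : ∑ b ∈ univ.filter (fun b => acts T a S ω b (t:ℕ) = i),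
              Wt (wj T c j) b * (vv (b (t, i)) - vv (b (t, j)))
            = (∑ b ∈ univ.filter (fun b => acts T a S ω b (t:ℕ) = i),
                Wt (wj T c j) b * vv (b (t, i)))
              - ∑ b ∈ univ.filter (fun b => acts T a S ω b (t:ℕ) = i),
                Wt (wj T c j) b * vv (b (t, j)) := by
          rw [← Finset.sum_sub_distrib]
          exact Finset.sum_congr rfl fun b _ => by ring
        rw [hsub,
          exp_obs T a S ω (wj T c j) (hwjsum T c j) t i i vv,
          exp_obs T a S ω (wj T c j) (hwjsum T c j) t i j vv]
        have hmj : wj T c j (t, j) false * vv false + wj T c j (t, j) true * vv true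
            = (1-c)/2 * a := by simp [wj, vv]
        have hmi : wj T c j (t, i) false * vv false + wj T c j (t, i) true * vv true
            = (if i = j then (1-c)/2 * a else a/2) := by
          by_cases hij : i = j
          · simp [wj, vv, hij]
          · simp [wj, vv, hij]; ring
        rw [hmj, hmi]
        by_cases hij : i = j
        · rw [if_pos hij, if_pos hij, hij]
          ring
        · rw [if_neg hij, if_neg hij]
          ring
      rw [Finset.sum_congr rfl fun i _ => hterm i]
      -- total probability over arms is one
      have hPsum : ∑ i : Fin K, ∑ b ∈ univ.filter (fun b => acts T a S ω b (t:ℕ) = i),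
            Wt (wj T c j) b = 1 := by
        have h1 : ∀ i : Fin K, ∑ b ∈ univ.filter (fun b => acts T a S ω b (t:ℕ) = i),
              Wt (wj T c j) b
            = ∑ b : Fin T × Fin K → Bool,
                (if acts T a S ω b (t:ℕ) = i then Wt (wj T c j) b else 0) :=
          fun i => Finset.sum_filter _ _
        rw [Finset.sum_congr rfl fun i _ => h1 i, Finset.sum_comm]
        have h2 : ∀ b : Fin T × Fin K → Bool,
            (∑ i : Fin K, if acts T a S ω b (t:ℕ) = i then Wt (wj T c j) b else 0)
              = Wt (wj T c j) b := by
          intro b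
          rw [Finset.sum_ite_eq univ (acts T a S ω b (t:ℕ)) (fun _ => Wt (wj T c j) b)]
          exact if_pos (mem_univ _)
        rw [Finset.sum_congr rfl fun b _ => h2 b, sum_Wt (hwjsum T c j)]
      -- separate the `i = j` term
      calc ∑ i : Fin K, (if i = j then 0 else a*c/2) *
              ∑ b ∈ univ.filter (fun b => acts T a S ω b (t:ℕ) = i), Wt (wj T c j) b
          = ∑ i : Fin K, ((a*c/2) *
              (∑ b ∈ univ.filter (fun b => acts T a S ω b (t:ℕ) = i), Wt (wj T c j) b)
            - (if i = j then (a*c/2) *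
                ∑ b ∈ univ.filter (fun b => acts T a S ω b (t:ℕ) = i), Wt (wj T c j) b
               else 0)) := by
            apply Finset.sum_congr rfl
            intro i _
            by_cases hij : i = j
            · rw [if_pos hij, if_pos hij]; ring
            · rw [if_neg hij, if_neg hij]; ring
        _ = (a*c/2) * (1 - ∑ b ∈ univ.filter (fun b => acts T a S ω b (t:ℕ) = j),
              Wt (wj T c j) b) := by
            rw [Finset.sum_sub_distrib, ← Finset.mul_sum, hPsum,
              Finset.sum_ite_eq' univ j (fun i => (a*c/2) *
                ∑ b ∈ univ.filter (fun b => acts T a S ω b (t:ℕ) = i), Wt (wj T c j) b)]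
            rw [if_pos (mem_univ _)]
            ring
    rw [Finset.sum_congr rfl fun t _ => hper t, ← Finset.mul_sum]
    congr 1
    rw [Finset.sum_sub_distrib, ← exp_Nr T a S ω j (wj T c j)]
    simp
  calc (a*c/2) * ((T:ℝ) - ∑ b : Fin T × Fin K → Bool, Wt (wj T c j) b * Nr T a S ω j b)
      = ∑ b : Fin T × Fin K → Bool, Wt (wj T c j) b *
          (∑ t : Fin T, (lossOf T a b (t:ℕ) (acts T a S ω b (t:ℕ)) - lossOf T a b (t:ℕ) j)) :=
        hmain.symm
    _ ≤ ∑ b : Fin T × Fin K → Bool, Wt (wj T c j) b * regret S T (lossOf T a b) ω :=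
        Finset.sum_le_sum fun b _ => mul_le_mul_of_nonneg_left (hreg b) (hWjnn b)


set_option maxHeartbeats 1000000 in
/-- Averaged over the `K` environments, the expected regret is at least `(ac/2)·TK/5`. -/
lemma core_bound (T : ℕ) (a c : ℝ) (S : Strategy K Ω) (ω : Ω)
    (hK2 : 2 ≤ K) (hT0 : 0 < T)
    (ha : 0 ≤ a) (hc0 : 0 ≤ c) (hc1 : c < 1)
    (hkl : -((1/2) * Real.log (1+c) + (1/2) * Real.log (1-c)) ≤ (9/100) * ((K:ℝ)/T)) :
    (a*c/2) * ((1/5) * (T:ℝ) * K)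
      ≤ ∑ j : Fin K, ∑ b : Fin T × Fin K → Bool,
          Wt (wj T c j) b * regret S T (lossOf T a b) ω := by
  have hc2 : (-1:ℝ) < c := by linarith
  set kl : ℝ := -((1/2) * Real.log (1+c) + (1/2) * Real.log (1-c)) with hkldef
  set N0 : Fin K → ℝ := fun j => ∑ b : Fin T × Fin K → Bool, Wt (w0 T K) b * Nr T a S ω j b
    with hN0def
  have hW0nn : ∀ b : Fin T × Fin K → Bool, 0 ≤ Wt (w0 T K) b := Wt_nonneg (w0_nonneg T K)
  have hN0nn : ∀ j, 0 ≤ N0 j :=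
    fun j => Finset.sum_nonneg fun b _ => mul_nonneg (hW0nn b) (Nr_nonneg T a S ω j b)
  have hsumN0 : ∑ j : Fin K, N0 j = T := by
    rw [hN0def, Finset.sum_comm]
    have h1 : ∀ b : Fin T × Fin K → Bool,
        (∑ j : Fin K, Wt (w0 T K) b * Nr T a S ω j b) = Wt (w0 T K) b * T := by
      intro b
      rw [← Finset.mul_sum, sum_Nr T a S ω b]
    rw [Finset.sum_congr rfl fun b _ => h1 b, ← Finset.sum_mul, sum_Wt (hw0sum T K), one_mul]
  have hklnn : 0 ≤ kl := by
    have h1 : Real.log (1+c) ≤ c := by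
      have := Real.log_le_sub_one_of_pos (by linarith : (0:ℝ) < 1 + c)
      linarith
    have h2 : Real.log (1-c) ≤ -c := by
      have := Real.log_le_sub_one_of_pos (by linarith : (0:ℝ) < 1 - c)
      linarith
    rw [hkldef]
    linarith
  have hsqN0 : ∀ j, Real.sqrt (N0 j) ^ 2 = N0 j := fun j => Real.sq_sqrt (hN0nn j)
  have hCSj : ∑ j : Fin K, Real.sqrt (N0 j) ≤ Real.sqrt K * Real.sqrt T := by
    have h := Real.sum_mul_le_sqrt_mul_sqrt univ (fun j : Fin K => Real.sqrt (N0 j))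
      (fun _ => (1:ℝ))
    simp only [mul_one, one_pow] at h
    calc ∑ j : Fin K, Real.sqrt (N0 j)
        ≤ Real.sqrt (∑ j : Fin K, Real.sqrt (N0 j) ^ 2) * Real.sqrt (∑ _j : Fin K, (1:ℝ)) := h
      _ = Real.sqrt K * Real.sqrt T := by
          rw [Finset.sum_congr rfl fun j _ => hsqN0 j, hsumN0]
          rw [Finset.sum_const, Finset.card_univ, Fintype.card_fin]
          rw [nsmul_eq_mul, mul_one, mul_comm]
  have hsqkl : Real.sqrt kl ≤ (3/10) * Real.sqrt ((K:ℝ)/T) := by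
    calc Real.sqrt kl ≤ Real.sqrt ((9/100) * ((K:ℝ)/T)) := Real.sqrt_le_sqrt hkl
      _ = (3/10) * Real.sqrt ((K:ℝ)/T) := by
          rw [show (9/100:ℝ) = (3/10)^2 by norm_num,
            Real.sqrt_mul (sq_nonneg _), Real.sqrt_sq (by norm_num : (0:ℝ) ≤ 3/10)]
  have hKTval : Real.sqrt ((K:ℝ)/T) * (Real.sqrt K * Real.sqrt T) = K := by
    have hT0' : (0:ℝ) < T := by exact_mod_cast hT0
    have hKnn : (0:ℝ) ≤ K := Nat.cast_nonneg K
    have hsT : Real.sqrt T ≠ 0 := ne_of_gt (Real.sqrt_pos.mpr hT0')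
    rw [Real.sqrt_div hKnn]
    have h2 : Real.sqrt (K:ℝ) * Real.sqrt (K:ℝ) = K := Real.mul_self_sqrt hKnn
    field_simp
    linear_combination h2
  -- total plays of the good arms across environments
  have hEjN : ∀ j : Fin K, ∑ b : Fin T × Fin K → Bool, Wt (wj T c j) b * Nr T a S ω j b
      ≤ N0 j + (T:ℝ) * Real.sqrt (kl * N0 j) :=
    fun j => Ej_Nr_le T a c S ω j hc0 hc1
  have hsumEj : ∑ j : Fin K, (∑ b : Fin T × Fin K → Bool, Wt (wj T c j) b * Nr T a S ω j b)
      ≤ (T:ℝ) + (3/10) * T * K := by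
    calc ∑ j : Fin K, (∑ b : Fin T × Fin K → Bool, Wt (wj T c j) b * Nr T a S ω j b)
        ≤ ∑ j : Fin K, (N0 j + (T:ℝ) * Real.sqrt (kl * N0 j)) :=
          Finset.sum_le_sum fun j _ => hEjN j
      _ = ∑ j : Fin K, (N0 j + (T:ℝ) * (Real.sqrt kl * Real.sqrt (N0 j))) :=
          Finset.sum_congr rfl fun j _ => by rw [Real.sqrt_mul hklnn]
      _ = (T:ℝ) + (T:ℝ) * (Real.sqrt kl * ∑ j : Fin K, Real.sqrt (N0 j)) := by
          rw [Finset.sum_add_distrib, hsumN0, ← Finset.mul_sum, ← Finset.mul_sum]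
      _ ≤ (T:ℝ) + (T:ℝ) * (((3/10) * Real.sqrt ((K:ℝ)/T)) * (Real.sqrt K * Real.sqrt T)) := by
          have h1 : Real.sqrt kl * ∑ j : Fin K, Real.sqrt (N0 j)
              ≤ ((3/10) * Real.sqrt ((K:ℝ)/T)) * (Real.sqrt K * Real.sqrt T) := by
            apply mul_le_mul hsqkl hCSj
              (Finset.sum_nonneg fun j _ => Real.sqrt_nonneg _)
              (by positivity)
          have hTnn : (0:ℝ) ≤ T := Nat.cast_nonneg T
          nlinarith [h1]
      _ = (T:ℝ) + (3/10) * T * K := by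
          rw [mul_assoc (3/10 : ℝ), hKTval]
          ring
  -- combine with the per-environment regret bounds
  have hreg : ∑ j : Fin K, (a*c/2) *
        ((T:ℝ) - ∑ b : Fin T × Fin K → Bool, Wt (wj T c j) b * Nr T a S ω j b)
      ≤ ∑ j : Fin K, ∑ b : Fin T × Fin K → Bool,
          Wt (wj T c j) b * regret S T (lossOf T a b) ω :=
    Finset.sum_le_sum fun j _ => Ej_regret_ge T a c S ω j ha hc1 hc0
  have hsum2 : ∑ j : Fin K, (a*c/2) *
        ((T:ℝ) - ∑ b : Fin T × Fin K → Bool, Wt (wj T c j) b * Nr T a S ω j b)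
      = (a*c/2) * ((T:ℝ)*K - ∑ j : Fin K,
          ∑ b : Fin T × Fin K → Bool, Wt (wj T c j) b * Nr T a S ω j b) := by
    rw [← Finset.mul_sum, Finset.sum_sub_distrib, Finset.sum_const, Finset.card_univ,
      Fintype.card_fin, nsmul_eq_mul, mul_comm ((K:ℕ):ℝ) ((T:ℝ))]
  have hfinal : (a*c/2) * ((1/5) * (T:ℝ) * K) ≤ (a*c/2) * ((T:ℝ)*K - ∑ j : Fin K,
      ∑ b : Fin T × Fin K → Bool, Wt (wj T c j) b * Nr T a S ω j b) := by
    apply mul_le_mul_of_nonneg_left _ (by positivity)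
    have hT1 : (1:ℝ) ≤ T := by exact_mod_cast hT0
    have hK2' : (2:ℝ) ≤ K := by exact_mod_cast hK2
    nlinarith [hsumEj]
  calc (a*c/2) * ((1/5) * (T:ℝ) * K)
      ≤ (a*c/2) * ((T:ℝ)*K - ∑ j : Fin K,
          ∑ b : Fin T × Fin K → Bool, Wt (wj T c j) b * Nr T a S ω j b) := hfinal
    _ = ∑ j : Fin K, (a*c/2) *
          ((T:ℝ) - ∑ b : Fin T × Fin K → Bool, Wt (wj T c j) b * Nr T a S ω j b) := hsum2.symm
    _ ≤ _ := hreg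


lemma lossOf_mem (T : ℕ) {a : ℝ} (ha : 0 ≤ a) (b : Fin T × Fin K → Bool) (t : ℕ) (i : Fin K) :
    0 ≤ lossOf T a b t i ∧ lossOf T a b t i ≤ a := by
  unfold lossOf
  split
  · split
    · exact ⟨ha, le_refl a⟩
    · exact ⟨le_refl 0, ha⟩
  · exact ⟨le_refl 0, ha⟩

set_option maxHeartbeats 1000000 in
lemma quadVar_lossOf (T : ℕ) {a : ℝ} (ha : 0 ≤ a) (hT : 0 < T) (b : Fin T × Fin K → Bool) :
    quadVar K T (lossOf T a b) ≤ (a^2/4) * T * K := by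
  unfold quadVar
  rw [Finset.sum_comm]
  have hTpos : (0:ℝ) < T := by exact_mod_cast hT
  have hcol : ∀ i : Fin K, ∑ t ∈ Finset.range T,
      (lossOf T a b t i - (1/(T:ℝ)) * ∑ s ∈ Finset.range T, lossOf T a b s i)^2
      ≤ a^2/4 * T := by
    intro i
    set Ssum : ℝ := ∑ s ∈ Finset.range T, lossOf T a b s i with hSdef
    set μ : ℝ := (1/(T:ℝ)) * Ssum with hμdef
    have hTμ : (T:ℝ) * μ = Ssum := by
      rw [hμdef]
      field_simp
    have hx : ∀ t ∈ Finset.range T,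
        lossOf T a b t i * lossOf T a b t i = a * lossOf T a b t i := by
      intro t ht
      unfold lossOf
      rw [dif_pos (Finset.mem_range.mp ht)]
      split <;> ring
    have h1 : ∀ t ∈ Finset.range T, (lossOf T a b t i - μ)^2
        = a^2/4 + ((a/2 - μ) * (2 * lossOf T a b t i) + (a/2 - μ) * (-μ - a/2)) := by
      intro t ht
      have hxt := hx t ht
      nlinarith [hx t ht]
    rw [Finset.sum_congr rfl h1, Finset.sum_add_distrib, Finset.sum_add_distrib,
      Finset.sum_const, Finset.card_range, ← Finset.mul_sum, ← Finset.mul_sum,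
      nsmul_eq_mul, Finset.sum_const, Finset.card_range, nsmul_eq_mul]
    rw [← hSdef, ← hTμ]
    nlinarith [sq_nonneg (μ - a/2), hTpos]
  calc ∑ i : Fin K, ∑ t ∈ Finset.range T,
        (lossOf T a b t i - (1/(T:ℝ)) * ∑ s ∈ Finset.range T, lossOf T a b s i)^2
      ≤ ∑ _i : Fin K, a^2/4 * (T:ℝ) := Finset.sum_le_sum fun i _ => hcol i
    _ = (a^2/4) * T * K := by
        rw [Finset.sum_const, Finset.card_univ, Fintype.card_fin, nsmul_eq_mul]
        ring

lemma c_lt_one {x : ℝ} (hx0 : 0 ≤ x) (hx1 : x ≤ 1/32) :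
    (2/5) * Real.sqrt x < 1 ∧ 0 ≤ (2/5) * Real.sqrt x := by
  constructor
  · have h1 : Real.sqrt x ≤ 1 := Real.sqrt_le_one.mpr (by linarith)
    nlinarith [Real.sqrt_nonneg x]
  · positivity

lemma kl_arith {x : ℝ} (hx0 : 0 ≤ x) (hx1 : x ≤ 1/32) :
    -((1/2) * Real.log (1 + (2/5) * Real.sqrt x)
      + (1/2) * Real.log (1 - (2/5) * Real.sqrt x)) ≤ (9/100) * x := by
  set c : ℝ := (2/5) * Real.sqrt x with hcdef
  have hc0 : 0 ≤ c := by positivity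
  have hcsq : c^2 = (4/25) * x := by
    rw [hcdef, mul_pow, Real.sq_sqrt hx0]
    ring
  have hcsq' : c^2 ≤ 1/200 := by rw [hcsq]; linarith
  have hc1 : c < 1 := by nlinarith
  have hlog : Real.log (1+c) + Real.log (1-c) = Real.log (1 - c^2) := by
    rw [← Real.log_mul (by linarith) (by linarith)]
    ring_nf
  have hpos : (0:ℝ) < 1 - c^2 := by nlinarith
  have hlb : -Real.log (1 - c^2) ≤ c^2 / (1 - c^2) := by
    have h := Real.log_le_sub_one_of_pos (inv_pos.mpr hpos)
    rw [Real.log_inv] at h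
    have : (1 - c^2)⁻¹ - 1 = c^2 / (1 - c^2) := by field_simp; ring
    linarith
  have hdb : c^2 / (1 - c^2) ≤ (200/199) * c^2 := by
    rw [div_le_iff₀ hpos]
    nlinarith [sq_nonneg c]
  calc -((1/2) * Real.log (1+c) + (1/2) * Real.log (1-c))
      = (1/2) * (-Real.log (1 - c^2)) := by rw [← hlog]; ring
    _ ≤ (1/2) * ((200/199) * c^2) := by
        have := hlb.trans hdb
        linarith
    _ ≤ (9/100) * x := by rw [hcsq]; linarith


lemma regret_integrable {K : ℕ} {Ω : Type*} [MeasurableSpace Ω] (S : Strategy K Ω)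
    (T : ℕ) {a : ℝ} (ha : 0 ≤ a) (hK : 0 < K) (b : Fin T × Fin K → Bool) :
    MeasureTheory.Integrable (fun ω => regret S T (lossOf T a b) ω) S.μ := by
  haveI := S.prob
  have hmeas : Measurable (fun ω => regret S T (lossOf T a b) ω) := by
    unfold regret
    apply Measurable.sub
    · apply Finset.measurable_sum
      intro t _
      have h1 : Measurable (fun ω => S.act (lossOf T a b) t ω) :=
        (S.meas_act t).comp (measurable_const.prodMk measurable_id)
      have h2 : Measurable (lossOf T a b t) := measurable_from_top
      exact h2.comp h1
    · exact measurable_const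
  apply (MeasureTheory.integrable_const ((T:ℝ) * a)).mono' hmeas.aestronglyMeasurable
  apply Filter.Eventually.of_forall
  intro ω
  rw [Real.norm_eq_abs]
  have hbnd : ∀ i : Fin K, 0 ≤ (∑ t ∈ Finset.range T, lossOf T a b t i)
      ∧ (∑ t ∈ Finset.range T, lossOf T a b t i) ≤ (T:ℝ) * a := by
    intro i
    constructor
    · exact Finset.sum_nonneg fun t _ => (lossOf_mem T ha b t i).1
    · calc ∑ t ∈ Finset.range T, lossOf T a b t i ≤ ∑ _t ∈ Finset.range T, a :=
            Finset.sum_le_sum fun t _ => (lossOf_mem T ha b t i).2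
        _ = (T:ℝ) * a := by rw [Finset.sum_const, Finset.card_range, nsmul_eq_mul]
  have hch0 : 0 ≤ ∑ t ∈ Finset.range T, lossOf T a b t (S.act (lossOf T a b) t ω) :=
    Finset.sum_nonneg fun t _ => (lossOf_mem T ha b t _).1
  have hchT : (∑ t ∈ Finset.range T, lossOf T a b t (S.act (lossOf T a b) t ω)) ≤ (T:ℝ) * a := by
    calc ∑ t ∈ Finset.range T, lossOf T a b t (S.act (lossOf T a b) t ω)
        ≤ ∑ _t ∈ Finset.range T, a := Finset.sum_le_sum fun t _ => (lossOf_mem T ha b t _).2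
      _ = (T:ℝ) * a := by rw [Finset.sum_const, Finset.card_range, nsmul_eq_mul]
  haveI : Nonempty (Fin K) := ⟨⟨0, hK⟩⟩
  have hI0 : 0 ≤ ⨅ i : Fin K, ∑ t ∈ Finset.range T, lossOf T a b t i :=
    le_ciInf fun i => (hbnd i).1
  have hIT : (⨅ i : Fin K, ∑ t ∈ Finset.range T, lossOf T a b t i) ≤ (T:ℝ) * a :=
    le_trans (ciInf_le (Finite.bddBelow_range _) (⟨0, hK⟩ : Fin K)) (hbnd ⟨0, hK⟩).2
  unfold regret
  rw [abs_le]
  constructor <;> linarith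

set_option maxHeartbeats 1000000 in
theorem second_order_lower_bound_aux
    {K T : ℕ} (hK : 2 ≤ K) (hT : T ≥ max (32 * K) 601) {α : ℝ}
    (hα : α ∈ Set.Icc
      (max (2 * ((4/9)^2 * (3 * Real.sqrt 5 + 1)^2) * Real.log T) (8 * (K : ℝ)) / T)
      (1/4))
    {Ω : Type*} [MeasurableSpace Ω] (S : Strategy K Ω) :
    ∃ ℓ : ℕ → Fin K → ℝ,
      (∀ t < T, ∀ i, ℓ t i ∈ Set.Icc (0:ℝ) 1) ∧
      quadVar K T ℓ / ((T : ℝ) * K) ≤ α ∧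
      ∫ ω, regret S T ℓ ω ∂S.μ ≥ Real.sqrt (α * T * K) / 25 := by
  classical
  haveI := S.prob
  obtain ⟨hαl, hα4⟩ := hα
  have h32K : 32 * K ≤ T := le_trans (le_max_left _ _) hT
  have hT0 : 0 < T := by
    have := le_trans (le_max_right (32*K) 601) hT
    omega
  have hK0 : 0 < K := by omega
  have hTR : (0:ℝ) < T := by exact_mod_cast hT0
  have hKR : (0:ℝ) < K := by exact_mod_cast hK0
  have hα0 : 0 ≤ α := by
    have h8 : (0:ℝ) ≤ 8 * K := by positivity
    have h9 : (0:ℝ) ≤ max (2 * ((4/9)^2 * (3 * Real.sqrt 5 + 1)^2) * Real.log T)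
        (8*(K:ℝ)) / T := div_nonneg (le_trans h8 (le_max_right _ _)) hTR.le
    linarith
  set x : ℝ := (K:ℝ)/T with hxdef
  have hx0 : 0 ≤ x := by positivity
  have hx1 : x ≤ 1/32 := by
    rw [hxdef, div_le_iff₀ hTR]
    have h' : ((32*K:ℕ):ℝ) ≤ (T:ℝ) := by exact_mod_cast h32K
    push_cast at h'
    linarith
  set a : ℝ := 2 * Real.sqrt α with hadef
  set c : ℝ := (2/5) * Real.sqrt x with hcdef
  have ha0 : 0 ≤ a := by positivity
  obtain ⟨hc1, hc0⟩ := c_lt_one hx0 hx1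
  have hkl := kl_arith hx0 hx1
  have ha1 : a ≤ 1 := by
    have h1 : Real.sqrt α ≤ Real.sqrt (1/4) := Real.sqrt_le_sqrt hα4
    have h2 : Real.sqrt (1/4 : ℝ) = 1/2 := by
      rw [show (1/4:ℝ) = (1/2)^2 by norm_num, Real.sqrt_sq (by norm_num : (0:ℝ) ≤ 1/2)]
    rw [hadef]
    linarith
  have hasq : a^2 = 4*α := by
    rw [hadef, mul_pow, Real.sq_sqrt hα0]
    ring
  have hcore : ∀ ω, (a*c/2) * ((1/5) * (T:ℝ) * K)
      ≤ ∑ j : Fin K, ∑ b : Fin T × Fin K → Bool,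
          Wt (wj T c j) b * regret S T (lossOf T a b) ω :=
    fun ω => core_bound T a c S ω hK hT0 ha0 hc0 hc1 hkl
  set I : (Fin T × Fin K → Bool) → ℝ := fun b => ∫ ω, regret S T (lossOf T a b) ω ∂S.μ
    with hIdef
  have hint_b : ∀ b, MeasureTheory.Integrable
      (fun ω => regret S T (lossOf T a b) ω) S.μ :=
    fun b => regret_integrable S T ha0 hK0 b
  have hintsum : MeasureTheory.Integrable (fun ω => ∑ j : Fin K,
      ∑ b : Fin T × Fin K → Bool, Wt (wj T c j) b * regret S T (lossOf T a b) ω) S.μ := by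
    apply MeasureTheory.integrable_finset_sum
    intro j _
    apply MeasureTheory.integrable_finset_sum
    intro b _
    exact (hint_b b).const_mul _
  have heval : ∫ ω, (∑ j : Fin K, ∑ b : Fin T × Fin K → Bool,
      Wt (wj T c j) b * regret S T (lossOf T a b) ω) ∂S.μ
      = ∑ j : Fin K, ∑ b : Fin T × Fin K → Bool, Wt (wj T c j) b * I b := by
    rw [MeasureTheory.integral_finset_sum _ (fun j _ =>
      MeasureTheory.integrable_finset_sum _ (fun b _ => (hint_b b).const_mul _))]
    apply Finset.sum_congr rfl
    intro j _
    rw [MeasureTheory.integral_finset_sum _ (fun b _ => (hint_b b).const_mul _)]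
    exact Finset.sum_congr rfl fun b _ => MeasureTheory.integral_const_mul _ _
  have hC : (a*c/2) * ((1/5) * (T:ℝ) * K)
      ≤ ∑ j : Fin K, ∑ b : Fin T × Fin K → Bool, Wt (wj T c j) b * I b := by
    rw [← heval]
    have h := MeasureTheory.integral_mono
      (MeasureTheory.integrable_const ((a*c/2) * ((1/5) * (T:ℝ) * K)))
      hintsum (fun ω => hcore ω)
    rw [MeasureTheory.integral_const] at h
    simpa [measure_univ] using h
  obtain ⟨bstar, _, hbstar⟩ := Finset.exists_max_image
    (univ : Finset (Fin T × Fin K → Bool)) I ⟨fun _ => false, mem_univ _⟩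
  have hub : ∑ j : Fin K, ∑ b : Fin T × Fin K → Bool, Wt (wj T c j) b * I b
      ≤ (K:ℝ) * I bstar := by
    have hc2 : (-1:ℝ) < c := by linarith
    calc ∑ j : Fin K, ∑ b : Fin T × Fin K → Bool, Wt (wj T c j) b * I b
        ≤ ∑ j : Fin K, ∑ b : Fin T × Fin K → Bool, Wt (wj T c j) b * I bstar :=
          Finset.sum_le_sum fun j _ => Finset.sum_le_sum fun b _ =>
            mul_le_mul_of_nonneg_left (hbstar b (mem_univ _))
              (Wt_nonneg (wj_nonneg T hc1.le hc2.le j) b)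
      _ = ∑ _j : Fin K, I bstar := by
          apply Finset.sum_congr rfl
          intro j _
          rw [← Finset.sum_mul, sum_Wt (hwjsum T c j), one_mul]
      _ = (K:ℝ) * I bstar := by
          rw [Finset.sum_const, Finset.card_univ, Fintype.card_fin, nsmul_eq_mul]
  have hIb : (a*c/10) * T ≤ I bstar := by
    have h1 : ((a*c/10) * T) * K ≤ (I bstar) * K := by
      have h2 : (a*c/2) * ((1/5) * (T:ℝ) * K) = ((a*c/10)*T)*K := by ring
      rw [← h2]
      calc (a*c/2) * ((1/5) * (T:ℝ) * K) ≤ (K:ℝ) * I bstar := le_trans hC hub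
        _ = I bstar * K := by ring
    exact le_of_mul_le_mul_right h1 hKR
  have hval : (a*c/10) * T = (2/25) * Real.sqrt (α * T * K) := by
    have hsdiv : Real.sqrt x = Real.sqrt (K:ℝ) / Real.sqrt (T:ℝ) := by
      rw [hxdef, Real.sqrt_div (Nat.cast_nonneg K)]
    have hTT : Real.sqrt (T:ℝ) * Real.sqrt (T:ℝ) = (T:ℝ) := Real.mul_self_sqrt hTR.le
    have hsT : Real.sqrt (T:ℝ) ≠ 0 := ne_of_gt (Real.sqrt_pos.mpr hTR)
    have h1 : Real.sqrt (α * T * K) = Real.sqrt α * (Real.sqrt (T:ℝ) * Real.sqrt (K:ℝ)) := by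
      rw [Real.sqrt_mul (mul_nonneg hα0 hTR.le), Real.sqrt_mul hα0]
      ring
    rw [hadef, hcdef, hsdiv, h1]
    field_simp
    linear_combination (-50 * Real.sqrt α) * hTT
  refine ⟨lossOf T a bstar, ?_, ?_, ?_⟩
  · intro t _ i
    exact ⟨(lossOf_mem T ha0 bstar t i).1, le_trans (lossOf_mem T ha0 bstar t i).2 ha1⟩
  · rw [div_le_iff₀ (by positivity : (0:ℝ) < (T:ℝ)*K)]
    calc quadVar K T (lossOf T a bstar) ≤ (a^2/4)*T*K := quadVar_lossOf T ha0 hT0 bstar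
      _ = α * ((T:ℝ)*K) := by rw [hasq]; ring
  · show ∫ ω, regret S T (lossOf T a bstar) ω ∂S.μ ≥ Real.sqrt (α*T*K)/25
    have hs : 0 ≤ Real.sqrt (α*(T:ℝ)*K) := Real.sqrt_nonneg _
    calc Real.sqrt (α*T*K)/25 ≤ (2/25)*Real.sqrt (α*T*K) := by linarith
      _ = (a*c/10)*T := hval.symm
      _ ≤ I bstar := hIb

end Env

end AuxDev

/-- Theorem 5 of the paper: second-order lower bound.  For
`α ∈ [max(2c₁·log T, 8K)/T, 1/4]` with `c₁ = (4/9)²(3√5+1)²`, every strategy has a loss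
sequence in the small-variation ball `V_{α,T}` (i.e. `Q_T/(TK) ≤ α`) with expected regret
at least `√(αTK)/25`. -/
theorem second_order_lower_bound
    {K T : ℕ} (hK : 2 ≤ K) (hT : T ≥ max (32 * K) 601) {α : ℝ}
    (hα : α ∈ Set.Icc
      (max (2 * ((4/9)^2 * (3 * Real.sqrt 5 + 1)^2) * Real.log T) (8 * (K : ℝ)) / T)
      (1/4))
    {Ω : Type*} [MeasurableSpace Ω] (S : Strategy K Ω) :
    ∃ ℓ : ℕ → Fin K → ℝ,
      (∀ t < T, ∀ i, ℓ t i ∈ Set.Icc (0:ℝ) 1) ∧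
      quadVar K T ℓ / ((T : ℝ) * K) ≤ α ∧
      ∫ ω, regret S T ℓ ω ∂S.μ ≥ Real.sqrt (α * T * K) / 25 :=
  second_order_lower_bound_aux hK hT hα S

end BanditLB
end
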